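/- arXiv:2103.04497 — 5 statements merged into one kernel-verified Lean document; each statement's English description precedes it below -/
import Mathlib

section
/- Let (X,d) be a compact metric space and T: X → X a homeomorphism. Let ε, δ > 0 and set a = sup_{x ∈ X} S(B_δ(x, d_ℤ), ε/4), where S(K, ε') = limsup_{N→∞} (1/N) log #(K, d_N, ε'). Then for every β > 0 there exists a constant C = C(ε, δ, β) > 0 such that for all natural numbers n, sup_{x ∈ X} #(B_δ(x, d_n), d_n, ε) ≤ C · e^{(a+β)n}. -/
open Filter Set MeasureTheory

/-- Minimal cardinality of an `ε`-spanning set of `K` w.r.t. the (pseudo)metric `ρ`. -/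
noncomputable def spanNum {X : Type*} (ρ : X → X → ℝ) (K : Set X) (ε : ℝ) : ℕ :=
  sInf {n : ℕ | ∃ S : Finset X, S.card = n ∧ ∀ x ∈ K, ∃ y ∈ S, ρ x y ≤ ε}

/-- `d_Ω(x,y) = sup_{n ∈ Ω} d(Tⁿx, Tⁿy)` for a homeomorphism `T` and `Ω ⊆ ℤ`. -/
noncomputable def dOmZ {X : Type*} [MetricSpace X] (T : X ≃ₜ X) (Ω : Set ℤ) (x y : X) : ℝ :=
  ⨆ n : Ω, dist ((T.toEquiv ^ (n : ℤ)) x) ((T.toEquiv ^ (n : ℤ)) y)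

/-- `d_N(x,y) = max_{0 ≤ n < N} d(Tⁿx, Tⁿy)`. -/
noncomputable def dN {X : Type*} [MetricSpace X] (T : X ≃ₜ X) (N : ℕ) : X → X → ℝ :=
  dOmZ T {n : ℤ | 0 ≤ n ∧ n < (N : ℤ)}

/-- Entropy of `K` at scale `ε`: `limsup_{N→∞} (1/N) log #(K, d_N, ε)`. -/
noncomputable def entS {X : Type*} [MetricSpace X] (T : X ≃ₜ X) (K : Set X) (ε : ℝ) : ℝ :=
  limsup (fun N : ℕ => Real.log (spanNum (dN T N) K ε) / N) atTop

/-- The Bowen ball `B_δ(x, d_ℤ)`. -/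
def bowenBallZ {X : Type*} [MetricSpace X] (T : X ≃ₜ X) (δ : ℝ) (x : X) : Set X :=
  {y | dOmZ T univ x y ≤ δ}

/-- Upper metric mean dimension. -/
noncomputable def mdimMUpper {X : Type*} [MetricSpace X] (T : X ≃ₜ X) : ℝ :=
  limsup (fun ε : ℝ => entS T univ ε / Real.log (1 / ε)) (nhdsWithin 0 (Set.Ioi 0))

/-- Lower metric mean dimension. -/
noncomputable def mdimMLower {X : Type*} [MetricSpace X] (T : X ≃ₜ X) : ℝ :=
  liminf (fun ε : ℝ => entS T univ ε / Real.log (1 / ε)) (nhdsWithin 0 (Set.Ioi 0))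

namespace BowenAux

variable {X : Type*} [MetricSpace X]

noncomputable def ph (T : X ≃ₜ X) (k : ℤ) (x : X) : X := (T.toEquiv ^ k) x

lemma ph_add (T : X ≃ₜ X) (a b : ℤ) (x : X) : ph T (a + b) x = ph T a (ph T b x) := by
  simp [ph, zpow_add, Equiv.Perm.mul_apply]

lemma ph_cont (T : X ≃ₜ X) (k : ℤ) : Continuous (ph T k) := by
  induction k using Int.induction_on with
  | zero => rw [show ph T 0 = id from funext fun x => by simp [ph]]; exact continuous_id
  | succ n ih =>
      have h : ph T ((n : ℤ) + 1) = fun x => ph T n (T x) := by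
        funext x
        rw [ph_add]
        simp [ph]
      rw [h]; exact ih.comp T.continuous
  | pred n ih =>
      have h : ph T (-(n : ℤ) - 1) = fun x => ph T (-(n:ℤ)) (T.symm x) := by
        funext x
        rw [sub_eq_add_neg, ph_add]
        simp only [ph, zpow_neg_one]
        rfl
      rw [h]; exact ih.comp T.symm.continuous

lemma exists_bound (X : Type*) [MetricSpace X] [CompactSpace X] :
    ∃ D : ℝ, 0 ≤ D ∧ ∀ a b : X, dist a b ≤ D := by
  obtain ⟨C, hC⟩ := Metric.isBounded_iff.mp
    (IsCompact.isBounded (isCompact_univ : IsCompact (univ : Set X)))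
  exact ⟨max C 0, le_max_right _ _,
    fun a b => le_trans (hC (mem_univ a) (mem_univ b)) (le_max_left _ _)⟩

lemma exists_net (X : Type*) [MetricSpace X] [CompactSpace X] {r : ℝ} (hr : 0 < r) :
    ∃ G : Finset X, ∀ w : X, ∃ g ∈ G, dist w g ≤ r := by
  obtain ⟨t, htf, htc⟩ := (Metric.totallyBounded_iff).mp
    (IsCompact.totallyBounded (isCompact_univ : IsCompact (univ : Set X))) r hr
  refine ⟨htf.toFinset, fun w => ?_⟩
  obtain ⟨g, hg, hdist⟩ := Set.mem_iUnion₂.mp (htc (mem_univ w))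
  exact ⟨g, htf.mem_toFinset.mpr hg, (Metric.mem_ball.mp hdist).le⟩


lemma dOmZ_eq (T : X ≃ₜ X) (Ω : Set ℤ) (x y : X) :
    dOmZ T Ω x y = ⨆ n : Ω, dist (ph T n x) (ph T n y) := rfl

lemma dOmZ_le (T : X ≃ₜ X) {Ω : Set ℤ} {x y : X} {c : ℝ} (hc : 0 ≤ c)
    (h : ∀ k ∈ Ω, dist (ph T k x) (ph T k y) ≤ c) : dOmZ T Ω x y ≤ c :=
  Real.iSup_le (fun k => h k k.2) hc

lemma coord_le_dOmZ (T : X ≃ₜ X) {Ω : Set ℤ} {x y : X} {k : ℤ} (hk : k ∈ Ω)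
    {D : ℝ} (hD : ∀ a b : X, dist a b ≤ D) :
    dist (ph T k x) (ph T k y) ≤ dOmZ T Ω x y :=
  le_ciSup (f := fun n : Ω => dist (ph T n x) (ph T n y))
    ⟨D, by rintro r ⟨n, rfl⟩; exact hD _ _⟩ ⟨k, hk⟩

lemma dN_le (T : X ≃ₜ X) {N : ℕ} {x y : X} {c : ℝ} (hc : 0 ≤ c)
    (h : ∀ u : ℕ, u < N → dist (ph T u x) (ph T u y) ≤ c) : dN T N x y ≤ c := by
  refine dOmZ_le T hc (fun k hk => ?_)
  obtain ⟨hk0, hkN⟩ := hk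
  have h1 : ((k.toNat : ℤ)) = k := Int.toNat_of_nonneg hk0
  have h2 : k.toNat < N := by omega
  simpa [h1] using h k.toNat h2

lemma coord_le_dN (T : X ≃ₜ X) {N : ℕ} {x y : X} {u : ℕ} (hu : u < N)
    {D : ℝ} (hD : ∀ a b : X, dist a b ≤ D) :
    dist (ph T u x) (ph T u y) ≤ dN T N x y :=
  coord_le_dOmZ T (by exact ⟨Int.ofNat_nonneg u, by exact_mod_cast hu⟩) hD

lemma coord_le_dN_int (T : X ≃ₜ X) {N : ℕ} {x y : X} {s : ℤ} (h0 : 0 ≤ s)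
    (h1 : s < (N : ℤ)) {D : ℝ} (hD : ∀ a b : X, dist a b ≤ D) :
    dist (ph T s x) (ph T s y) ≤ dN T N x y :=
  coord_le_dOmZ T (Ω := {n : ℤ | 0 ≤ n ∧ n < (N : ℤ)}) (by exact ⟨h0, h1⟩) hD

lemma spanNum_le_card {X : Type*} {ρ : X → X → ℝ} {K : Set X} {ε : ℝ} {S : Finset X}
    (h : ∀ x ∈ K, ∃ y ∈ S, ρ x y ≤ ε) : spanNum ρ K ε ≤ S.card :=
  Nat.sInf_le ⟨S, rfl, h⟩

lemma spanNum_spec {X : Type*} {ρ : X → X → ℝ} {K : Set X} {ε : ℝ}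
    (h : ∃ S : Finset X, ∀ x ∈ K, ∃ y ∈ S, ρ x y ≤ ε) :
    ∃ S : Finset X, S.card = spanNum ρ K ε ∧ ∀ x ∈ K, ∃ y ∈ S, ρ x y ≤ ε := by
  obtain ⟨S, hS⟩ := h
  have hmem : spanNum ρ K ε ∈
      {n : ℕ | ∃ S : Finset X, S.card = n ∧ ∀ x ∈ K, ∃ y ∈ S, ρ x y ≤ ε} :=
    Nat.sInf_mem ⟨S.card, S, rfl, hS⟩
  obtain ⟨S', hS'c, hS's⟩ := hmem
  exact ⟨S', hS'c, hS's⟩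

/-- Fiber-counting: a "word map" with the property that points with the same word
are `ε`-close yields a spanning set of size at most the number of words. -/
lemma exists_spanning_of_word {X : Type*} (ρ : X → X → ℝ) (K : Set X) (ε : ℝ)
    (A : Type*) [Fintype A] (w : X → A)
    (h : ∀ y ∈ K, ∀ y' ∈ K, w y = w y' → ρ y y' ≤ ε) :
    ∃ S : Finset X, S.card ≤ Fintype.card A ∧ ∀ y ∈ K, ∃ e ∈ S, ρ y e ≤ ε := by
  classical
  rcases K.eq_empty_or_nonempty with hK | ⟨y₀, hy₀⟩
  · exact ⟨∅, by simp, by simp [hK]⟩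
  · set rep : A → X := fun a => if h' : ∃ y, y ∈ K ∧ w y = a then h'.choose else y₀ with hrep
    refine ⟨Finset.univ.image rep, le_trans Finset.card_image_le (by simp), ?_⟩
    intro y hy
    have h' : ∃ y', y' ∈ K ∧ w y' = w y := ⟨y, hy, rfl⟩
    refine ⟨rep (w y), Finset.mem_image.2 ⟨w y, Finset.mem_univ _, rfl⟩, ?_⟩
    have hre : rep (w y) = h'.choose := dif_pos h'
    rw [hre]
    exact h y hy _ h'.choose_spec.1 h'.choose_spec.2.symm

lemma spanNum_le_of_word {X : Type*} (ρ : X → X → ℝ) (K : Set X) (ε : ℝ)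
    (A : Type*) [Fintype A] (w : X → A)
    (h : ∀ y ∈ K, ∀ y' ∈ K, w y = w y' → ρ y y' ≤ ε) :
    spanNum ρ K ε ≤ Fintype.card A := by
  obtain ⟨S, hc, hs⟩ := exists_spanning_of_word ρ K ε A w h
  exact le_trans (spanNum_le_card hs) hc


/-- word trick: spanning numbers for `dN` are at most `|G|^N` for a plain `r/2`-net `G`. -/
lemma spanNum_dN_le_pow (T : X ≃ₜ X) (K : Set X) {r : ℝ} (hr : 0 ≤ r)
    (G : Finset X) (hG : ∀ w : X, ∃ g ∈ G, dist w g ≤ r / 2) (N : ℕ) :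
    spanNum (dN T N) K r ≤ G.card ^ N := by
  classical
  choose g hgmem hgd using hG
  have := spanNum_le_of_word (dN T N) K r (Fin N → {a // a ∈ G})
    (fun y => fun u => ⟨g (ph T u y), hgmem _⟩) ?_
  · simpa [Fintype.card_fun, Fintype.card_coe] using this
  · intro y _ y' _ hw
    refine dN_le T hr (fun u hu => ?_)
    have h1 : g (ph T u y) = g (ph T u y') := by
      have := congrFun hw (⟨u, hu⟩ : Fin N)
      exact Subtype.ext_iff.mp this
    calc dist (ph T u y) (ph T u y')
        ≤ dist (ph T u y) (g (ph T u y)) + dist (g (ph T u y)) (ph T u y') := dist_triangle _ _ _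
      _ ≤ r / 2 + r / 2 := by
          refine add_le_add (hgd _) ?_
          rw [h1, dist_comm]; exact hgd _
      _ = r := by ring

lemma log_spanNum_nonneg {X : Type*} (ρ : X → X → ℝ) (K : Set X) (ε : ℝ) (N : ℕ) :
    0 ≤ Real.log (spanNum ρ K ε) / N := by
  apply div_nonneg _ (Nat.cast_nonneg N)
  rcases Nat.eq_zero_or_pos (spanNum ρ K ε) with h | h
  · simp [h]
  · exact Real.log_nonneg (by exact_mod_cast h)

/-- uniform upper bound for entropy of any subset. -/
lemma entS_le_log (T : X ≃ₜ X) (K : Set X) {r : ℝ} (hr : 0 ≤ r)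
    (G : Finset X) (hG : ∀ w : X, ∃ g ∈ G, dist w g ≤ r / 2) (hG1 : 1 ≤ G.card) :
    entS T K r ≤ Real.log G.card := by
  have hcob : IsCoboundedUnder (· ≤ ·) atTop
      (fun N : ℕ => Real.log (spanNum (dN T N) K r) / N) :=
    IsBoundedUnder.isCoboundedUnder_le
      (isBoundedUnder_of ⟨0, fun N => log_spanNum_nonneg _ _ _ _⟩)
  refine limsup_le_of_le hcob ?_
  refine eventually_atTop.mpr ⟨1, fun N hN => ?_⟩
  have hsp := spanNum_dN_le_pow T K hr G hG N
  have hlog : Real.log (spanNum (dN T N) K r) ≤ N * Real.log G.card := by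
    rcases Nat.eq_zero_or_pos (spanNum (dN T N) K r) with h | h
    · simp only [h, Nat.cast_zero, Real.log_zero]
      exact mul_nonneg (Nat.cast_nonneg N) (Real.log_nonneg (by exact_mod_cast hG1))
    · calc Real.log (spanNum (dN T N) K r) ≤ Real.log ((G.card : ℝ) ^ N) := by
            apply Real.log_le_log (by exact_mod_cast h) (by exact_mod_cast hsp)
        _ = N * Real.log G.card := by rw [Real.log_pow]
  rw [div_le_iff₀ (by positivity)]
  calc Real.log (spanNum (dN T N) K r) ≤ N * Real.log G.card := hlog
    _ = Real.log G.card * N := mul_comm _ _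

lemma entS_nonneg_of_bdd (T : X ≃ₜ X) (K : Set X) (ε : ℝ) {c : ℝ}
    (hb : ∀ N : ℕ, Real.log (spanNum (dN T N) K ε) / N ≤ c) :
    0 ≤ entS T K ε := by
  refine le_limsup_of_frequently_le ?_ (isBoundedUnder_of ⟨c, hb⟩)
  exact Frequently.of_forall (fun N => log_spanNum_nonneg _ _ _ _)


lemma f_le_log {X : Type*} [MetricSpace X] (T : X ≃ₜ X) (K : Set X) {r : ℝ} (hr : 0 ≤ r)
    (G' : Finset X) (hG' : ∀ w : X, ∃ g ∈ G', dist w g ≤ r / 2) (hG'1 : 1 ≤ G'.card) (N : ℕ) :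
    Real.log (spanNum (dN T N) K r) / N ≤ Real.log G'.card := by
  rcases Nat.eq_zero_or_pos N with h | h
  · simp only [h, Nat.cast_zero, div_zero]
    exact Real.log_nonneg (by exact_mod_cast hG'1)
  · have hsp := spanNum_dN_le_pow T K hr G' hG' N
    have hlog : Real.log (spanNum (dN T N) K r) ≤ N * Real.log G'.card := by
      rcases Nat.eq_zero_or_pos (spanNum (dN T N) K r) with h0 | h0
      · simp only [h0, Nat.cast_zero, Real.log_zero]
        exact mul_nonneg (Nat.cast_nonneg N) (Real.log_nonneg (by exact_mod_cast hG'1))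
      · calc Real.log (spanNum (dN T N) K r) ≤ Real.log ((G'.card : ℝ) ^ N) := by
              apply Real.log_le_log (by exact_mod_cast h0) (by exact_mod_cast hsp)
          _ = N * Real.log G'.card := by rw [Real.log_pow]
    rw [div_le_iff₀ (by exact_mod_cast h)]
    calc Real.log (spanNum (dN T N) K r) ≤ N * Real.log G'.card := hlog
      _ = Real.log G'.card * N := mul_comm _ _


lemma exists_spanning_dN (T : X ≃ₜ X) [CompactSpace X] (K : Set X) {r : ℝ} (hr : 0 < r)
    (N : ℕ) : ∃ S : Finset X, ∀ y ∈ K, ∃ e ∈ S, dN T N y e ≤ r := by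
  classical
  obtain ⟨G, hG⟩ := exists_net X (half_pos hr)
  choose g hgmem hgd using hG
  have hword : ∀ y ∈ K, ∀ y' ∈ K,
      (fun y => fun u : Fin N => (⟨g (ph T u y), hgmem _⟩ : {a // a ∈ G})) y =
      (fun y => fun u : Fin N => (⟨g (ph T u y), hgmem _⟩ : {a // a ∈ G})) y' →
      dN T N y y' ≤ r := by
    intro y _ y' _ hw
    refine dN_le T hr.le (fun u hu => ?_)
    have h1 : g (ph T u y) = g (ph T u y') := Subtype.ext_iff.mp (congrFun hw (⟨u, hu⟩ : Fin N))
    calc dist (ph T u y) (ph T u y')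
        ≤ dist (ph T u y) (g (ph T u y)) + dist (g (ph T u y)) (ph T u y') := dist_triangle _ _ _
      _ ≤ r / 2 + r / 2 := add_le_add (hgd _) (by rw [h1, dist_comm]; exact hgd _)
      _ = r := by ring
  obtain ⟨S, -, hS⟩ := exists_spanning_of_word (dN T N) K r (Fin N → {a // a ∈ G}) _ hword
  exact ⟨S, hS⟩

lemma mem_bowenBallZ_self (T : X ≃ₜ X) {δ : ℝ} (hδ : 0 < δ) (z : X) :
    z ∈ bowenBallZ T δ z := by
  have h0 : dOmZ T univ z z ≤ 0 := Real.iSup_le (fun _ => by simp) le_rfl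
  exact le_trans h0 hδ.le

/-- The key data at each point `z`: a time `m`, a radius index `k`, and a finite set `E` of
cardinality at most `exp (c*m)` such that any point whose `[-k,k]`-orbit stays
`(δ + 1/(k+1))`-close to that of `z` is `ε/2`-shadowed on `[0,m)` by an element of `E`. -/
lemma key_data (T : X ≃ₜ X) [CompactSpace X] {ε δ c : ℝ} (hε : 0 < ε) (hδ : 0 < δ)
    (z : X) (hent : entS T (bowenBallZ T δ z) (ε / 4) < c)
    (hbdd : IsBoundedUnder (· ≤ ·) atTop
      (fun N : ℕ => Real.log (spanNum (dN T N) (bowenBallZ T δ z) (ε / 4)) / N)) :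
    ∃ (m k : ℕ) (E : Finset X), 1 ≤ m ∧ E.Nonempty ∧ ((E.card : ℝ) ≤ Real.exp (c * m)) ∧
      ∀ w : X, (∀ s : ℤ, |s| ≤ (k : ℤ) → dist (ph T s w) (ph T s z) ≤ δ + ((k : ℝ) + 1)⁻¹) →
        ∃ e ∈ E, ∀ u : ℕ, u < m → dist (ph T u w) (ph T u e) < ε / 2 := by
  classical
  obtain ⟨D, hD0, hD⟩ := exists_bound X
  set B := bowenBallZ T δ z with hB
  -- choose m
  have hev : ∀ᶠ N : ℕ in atTop,
      Real.log (spanNum (dN T N) B (ε / 4)) / N < c :=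
    eventually_lt_of_limsup_lt hent hbdd
  obtain ⟨N₀, hN₀⟩ := eventually_atTop.mp hev
  set m := max N₀ 1 with hmdef
  have hm1 : 1 ≤ m := le_max_right _ _
  have hfm : Real.log (spanNum (dN T m) B (ε / 4)) / m < c := hN₀ m (le_max_left _ _)
  -- the spanning set E
  obtain ⟨E, hEcard, hEspan⟩ := spanNum_spec (exists_spanning_dN T B (r := ε / 4) (by linarith) m)
  have hcardR : (E.card : ℝ) ≤ Real.exp (c * m) := by
    rw [hEcard]
    rcases Nat.eq_zero_or_pos (spanNum (dN T m) B (ε / 4)) with h | h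
    · rw [h]; simpa using (Real.exp_pos (c * m)).le
    · have hmpos : (0 : ℝ) < m := by exact_mod_cast hm1
      have hlog : Real.log (spanNum (dN T m) B (ε / 4)) < c * m := by
        rw [div_lt_iff₀ hmpos] at hfm; exact hfm
      have : (spanNum (dN T m) B (ε / 4) : ℝ) =
          Real.exp (Real.log (spanNum (dN T m) B (ε / 4))) :=
        (Real.exp_log (by exact_mod_cast h)).symm
      rw [this]
      exact (Real.exp_le_exp.mpr hlog.le)
  have hEne : E.Nonempty := by
    obtain ⟨e, he, -⟩ := hEspan z (mem_bowenBallZ_self T hδ z)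
    exact ⟨e, he⟩
  -- the open set U
  set U : Set X := {w | ∃ e ∈ E, ∀ u : ℕ, u < m → dist (ph T u w) (ph T u e) < ε / 2}
    with hUdef
  have hUo : IsOpen U := by
    have hrw : U = ⋃ e ∈ E, ⋂ u : Fin m, {w | dist (ph T (u : ℕ) w) (ph T (u : ℕ) e) < ε / 2} := by
      ext w
      simp only [hUdef, mem_setOf_eq, mem_iUnion, mem_iInter]
      constructor
      · rintro ⟨e, he, h⟩; exact ⟨e, he, fun u => h u u.2⟩
      · rintro ⟨e, he, h⟩; exact ⟨e, he, fun u hu => h ⟨u, hu⟩⟩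
    rw [hrw]
    exact isOpen_biUnion fun e _ => isOpen_iInter_of_finite fun u =>
      isOpen_lt ((ph_cont T _).dist continuous_const) continuous_const
  have hBU : B ⊆ U := by
    intro y hy
    obtain ⟨e, he, hde⟩ := hEspan y hy
    refine ⟨e, he, fun u hu => lt_of_le_of_lt (le_trans (coord_le_dN T hu hD) hde) ?_⟩
    linarith
  -- the closed decreasing family
  set Ck : ℕ → Set X := fun k =>
    {w | ∀ s : ℤ, |s| ≤ (k : ℤ) → dist (ph T s w) (ph T s z) ≤ δ + ((k : ℝ) + 1)⁻¹} with hCkdef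
  have hCc : ∀ k, IsClosed (Ck k) := by
    intro k
    have hrw : Ck k = ⋂ s : ℤ,
        {w | |s| ≤ (k : ℤ) → dist (ph T s w) (ph T s z) ≤ δ + ((k : ℝ) + 1)⁻¹} := by
      ext w; simp only [hCkdef, mem_setOf_eq, mem_iInter]
    rw [hrw]
    refine isClosed_iInter fun s => ?_
    by_cases hs : |s| ≤ (k : ℤ)
    · have : {w : X | |s| ≤ (k : ℤ) → dist (ph T s w) (ph T s z) ≤ δ + ((k : ℝ) + 1)⁻¹}
          = {w : X | dist (ph T s w) (ph T s z) ≤ δ + ((k : ℝ) + 1)⁻¹} := by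
        ext w; simp [hs]
      rw [this]
      exact isClosed_le ((ph_cont T _).dist continuous_const) continuous_const
    · have : {w : X | |s| ≤ (k : ℤ) → dist (ph T s w) (ph T s z) ≤ δ + ((k : ℝ) + 1)⁻¹}
          = univ := by ext w; simp [hs]
      rw [this]; exact isClosed_univ
  have hInt : (⋂ k : ℕ, Ck k) ⊆ U := by
    intro w hw
    simp only [mem_iInter] at hw
    apply hBU
    show dOmZ T univ z w ≤ δ
    refine Real.iSup_le (fun s => ?_) hδ.le
    rw [dist_comm]
    show dist (ph T (s : ℤ) w) (ph T (s : ℤ) z) ≤ δ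
    refine le_of_forall_pos_le_add (fun η hη => ?_)
    set k := max (s : ℤ).natAbs ⌈η⁻¹⌉₊ with hk
    have h1 : |(s : ℤ)| ≤ (k : ℤ) := by
      rw [Int.abs_eq_natAbs]
      exact_mod_cast le_max_left _ _
    have h2 : ((k : ℝ) + 1)⁻¹ ≤ η := by
      have hk1 : η⁻¹ ≤ (k : ℝ) + 1 := by
        refine le_trans (Nat.le_ceil η⁻¹) ?_
        have : (⌈η⁻¹⌉₊ : ℝ) ≤ (k : ℝ) := by exact_mod_cast le_max_right _ _
        linarith
      calc ((k : ℝ) + 1)⁻¹ ≤ (η⁻¹)⁻¹ := by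
            apply inv_anti₀ (inv_pos.mpr hη) hk1
        _ = η := inv_inv η
    exact le_trans (hw k _ h1) (by linarith)
  -- compactness
  have hdisj : Uᶜ ∩ ⋂ k : ℕ, Ck k = ∅ := by
    rw [Set.eq_empty_iff_forall_notMem]
    rintro w ⟨hwc, hwi⟩
    exact hwc (hInt hwi)
  obtain ⟨u, hu⟩ := ((hUo.isClosed_compl).isCompact).elim_finite_subfamily_closed Ck hCc hdisj
  set K := u.sup id with hKdef
  have hsub : Ck K ⊆ U := by
    intro w hw
    by_contra hwU
    have hwmem : w ∈ Uᶜ ∩ ⋂ k ∈ u, Ck k := by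
      refine ⟨hwU, ?_⟩
      simp only [mem_iInter]
      intro k hk
      intro s hs
      have hkK : (k : ℤ) ≤ (K : ℤ) := by exact_mod_cast Finset.le_sup (f := id) hk
      have h1 : dist (ph T s w) (ph T s z) ≤ δ + ((K : ℝ) + 1)⁻¹ := hw s (le_trans hs hkK)
      have h2 : ((K : ℝ) + 1)⁻¹ ≤ ((k : ℝ) + 1)⁻¹ := by
        apply inv_anti₀ (by positivity)
        have : (k : ℝ) ≤ (K : ℝ) := by exact_mod_cast Finset.le_sup (f := id) hk
        linarith
      linarith
    rw [hu] at hwmem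
    exact hwmem
  exact ⟨m, K, E, hm1, hEne, hcardR, fun w hw => hsub hw⟩

/-- crossing lemma: locating `s` in the block decomposition. -/
lemma crossing {t : ℕ → ℕ} : ∀ {p s : ℕ}, t 0 ≤ s → s < t p → ∃ j, j < p ∧ t j ≤ s ∧ s < t (j + 1) := by
  intro p
  induction p with
  | zero => intro s h0 hp; omega
  | succ p ih =>
      intro s h0 hp
      by_cases h : t p ≤ s
      · exact ⟨p, Nat.lt_succ_self p, h, hp⟩
      · obtain ⟨j, hj, hj2⟩ := ih h0 (by omega)
        exact ⟨j, by omega, hj2⟩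

end BowenAux

open BowenAux in
/-- Bowen-type estimate on spanning numbers of Bowen balls. -/
theorem stmt1 {X : Type*} [MetricSpace X] [CompactSpace X] (T : X ≃ₜ X)
    (ε δ : ℝ) (hε : 0 < ε) (hδ : 0 < δ) (β : ℝ) (hβ : 0 < β) :
    ∃ C : ℝ, 0 < C ∧ ∀ n : ℕ, ∀ x : X,
      (spanNum (dN T n) {y | dN T n x y ≤ δ} ε : ℝ) ≤
        C * Real.exp (((⨆ z : X, entS T (bowenBallZ T δ z) (ε / 4)) + β) * n) := by
  classical
  set a := ⨆ z : X, entS T (bowenBallZ T δ z) (ε / 4) with ha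
  rcases isEmpty_or_nonempty X with hXe | hXne
  · exact ⟨1, one_pos, fun n x => (hXe.false x).elim⟩
  obtain ⟨x₀⟩ := hXne
  obtain ⟨D, hD0, hD⟩ := exists_bound X
  obtain ⟨G, hG⟩ := exists_net X (show (0:ℝ) < ε / 8 by linarith)
  have hG1 : 1 ≤ G.card := by
    obtain ⟨g, hg, -⟩ := hG x₀
    exact Finset.card_pos.mpr ⟨g, hg⟩
  have hG4 : ∀ w : X, ∃ g ∈ G, dist w g ≤ ε / 4 := by
    intro w; obtain ⟨g, hg, hd⟩ := hG w; exact ⟨g, hg, by linarith⟩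
  have hGhalf : ∀ w : X, ∃ g ∈ G, dist w g ≤ (ε / 4) / 2 := by
    intro w; obtain ⟨g, hg, hd⟩ := hG w; exact ⟨g, hg, by linarith⟩
  -- entropy bounds
  have hfle : ∀ (z : X) (N : ℕ),
      Real.log (spanNum (dN T N) (bowenBallZ T δ z) (ε / 4)) / N ≤ Real.log G.card :=
    fun z N => f_le_log T _ (by linarith) G hGhalf hG1 N
  have hbddf : ∀ z : X, IsBoundedUnder (· ≤ ·) atTop
      (fun N : ℕ => Real.log (spanNum (dN T N) (bowenBallZ T δ z) (ε / 4)) / N) :=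
    fun z => isBoundedUnder_of ⟨Real.log G.card, hfle z⟩
  have hentle : ∀ z : X, entS T (bowenBallZ T δ z) (ε / 4) ≤ Real.log G.card := by
    intro z
    have hcob : IsCoboundedUnder (· ≤ ·) atTop
        (fun N : ℕ => Real.log (spanNum (dN T N) (bowenBallZ T δ z) (ε / 4)) / N) :=
      IsBoundedUnder.isCoboundedUnder_le
        (isBoundedUnder_of ⟨0, fun N => log_spanNum_nonneg _ _ _ _⟩)
    exact limsup_le_of_le hcob (Eventually.of_forall (hfle z))
  have hAle : ∀ z : X, entS T (bowenBallZ T δ z) (ε / 4) ≤ a :=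
    fun z => le_ciSup ⟨Real.log G.card, by rintro r ⟨z', rfl⟩; exact hentle z'⟩ z
  have hA0 : 0 ≤ a :=
    le_trans (entS_nonneg_of_bdd T _ _ (hfle x₀)) (hAle x₀)
  set c := a + β / 2 with hc
  have hc0 : 0 ≤ c := by simp only [hc]; linarith
  -- key data at each point
  have hkey : ∀ z : X, ∃ (m k : ℕ) (E : Finset X), 1 ≤ m ∧ E.Nonempty ∧
      ((E.card : ℝ) ≤ Real.exp (c * m)) ∧
      ∀ w : X, (∀ s : ℤ, |s| ≤ (k : ℤ) → dist (ph T s w) (ph T s z) ≤ δ + ((k : ℝ) + 1)⁻¹) →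
        ∃ e ∈ E, ∀ u : ℕ, u < m → dist (ph T u w) (ph T u e) < ε / 2 :=
    fun z => key_data T hε hδ z (lt_of_le_of_lt (hAle z) (by simp only [hc]; linarith)) (hbddf z)
  choose m k E hm1 hEne hEcard hshadow using hkey
  -- the open cover
  set V : X → Set X := fun z => ⋂ s ∈ Finset.Icc (-(k z : ℤ)) (k z : ℤ),
    {w | dist (ph T s w) (ph T s z) < ((k z : ℝ) + 1)⁻¹} with hV
  have hVo : ∀ z, IsOpen (V z) := fun z => isOpen_biInter_finset fun s _ =>
    isOpen_lt ((ph_cont T s).dist continuous_const) continuous_const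
  have hVmem : ∀ z, z ∈ V z := by
    intro z
    simp only [hV, mem_iInter, mem_setOf_eq]
    intro s _
    rw [dist_self]
    positivity
  obtain ⟨tc, htc⟩ := isCompact_univ.elim_finite_subcover V hVo
    (fun w _ => mem_iUnion.mpr ⟨w, hVmem w⟩)
  have hcov : ∀ w : X, ∃ z ∈ tc, w ∈ V z := fun w => by
    simpa using mem_iUnion₂.mp (htc (mem_univ w))
  choose zc hzct hzcV using hcov
  set kstar := tc.sup k with hkstar
  set mstar := tc.sup m with hmstar
  choose gc hgcmem hgcd using hG4
  set C := Real.exp (c * mstar) * (G.card : ℝ) ^ (2 * kstar) with hC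
  have hGR : (1:ℝ) ≤ (G.card : ℝ) := by exact_mod_cast hG1
  have hCpos : 0 < C := by
    have h1 : (0:ℝ) < (G.card : ℝ) := by linarith
    positivity
  refine ⟨C, hCpos, fun n x => ?_⟩
  set Y := {y | dN T n x y ≤ δ} with hY
  -- the block sequence
  set ζ : ℕ → X := fun τ => zc (ph T τ x) with hζ
  set tt : ℕ → ℕ := fun j => Nat.rec kstar (fun _ prev => prev + m (ζ prev)) j with htt
  have htt0 : tt 0 = kstar := rfl
  have htts : ∀ j, tt (j + 1) = tt j + m (ζ (tt j)) := fun j => rfl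
  have httlb : ∀ j, kstar + j ≤ tt j := by
    intro j
    induction j with
    | zero => omega
    | succ j ih => have := hm1 (ζ (tt j)); rw [htts]; omega
  have hex : ∃ j, ¬ (tt j + kstar + 1 ≤ n) := ⟨n, by have := httlb n; omega⟩
  set p := Nat.find hex with hp
  have hpn : ¬ (tt p + kstar + 1 ≤ n) := Nat.find_spec hex
  have hact : ∀ j, j < p → tt j + kstar + 1 ≤ n := fun j hj => of_not_not (Nat.find_min hex hj)
  have hsum : ∀ q, tt q = kstar + ∑ j ∈ Finset.range q, m (ζ (tt j)) := by
    intro q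
    induction q with
    | zero => simp [htt0]
    | succ q ih => rw [htts, Finset.sum_range_succ]; omega
  have hsumle : (∑ j ∈ Finset.range p, m (ζ (tt j))) ≤ n + mstar := by
    rcases Nat.eq_zero_or_pos p with h0 | h0
    · simp [h0]
    · have hp1 : p - 1 < p := by omega
      have h1 := hact (p - 1) hp1
      have h2 : tt p = tt (p - 1) + m (ζ (tt (p - 1))) := by
        have h2' := htts (p - 1)
        have hpp : p - 1 + 1 = p := by omega
        rwa [hpp] at h2'
      have h3 : m (ζ (tt (p - 1))) ≤ mstar := by
        have h := Finset.le_sup (f := m) (hzct (ph T (tt (p - 1)) x))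
        simpa only [hζ] using h
      have h4 := hsum p
      omega
  -- boundary coordinates
  set Bd : Finset ℕ := (Finset.range n).filter
    (fun s => ¬ ∃ j, j < p ∧ tt j ≤ s ∧ s < tt (j + 1)) with hBd
  have hBdcard : Bd.card ≤ 2 * kstar := by
    have hsubs : Bd ⊆ Finset.range kstar ∪ Finset.Ico (tt p) n := by
      intro s hs
      simp only [hBd, Finset.mem_filter, Finset.mem_range] at hs
      obtain ⟨hsn, hno⟩ := hs
      by_cases h1 : s < kstar
      · exact Finset.mem_union_left _ (Finset.mem_range.mpr h1)
      · refine Finset.mem_union_right _ (Finset.mem_Ico.mpr ⟨?_, hsn⟩)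
        by_contra h2
        push_neg at h2
        obtain ⟨j, hj, hj2⟩ := crossing (t := tt) (by rw [htt0]; omega) h2
        exact hno ⟨j, hj, hj2⟩
    calc Bd.card ≤ (Finset.range kstar ∪ Finset.Ico (tt p) n).card := Finset.card_le_card hsubs
      _ ≤ (Finset.range kstar).card + (Finset.Ico (tt p) n).card := Finset.card_union_le _ _
      _ ≤ kstar + kstar := by
          have : (Finset.Ico (tt p) n).card = n - tt p := Nat.card_Ico _ _
          simp only [Finset.card_range, this]
          omega
      _ = 2 * kstar := by ring
  -- block property for points of Y
  have hblock : ∀ y ∈ Y, ∀ j, j < p → ∃ e, e ∈ E (ζ (tt j)) ∧ ∀ u : ℕ, u < m (ζ (tt j)) →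
      dist (ph T ((u : ℤ) + (tt j : ℤ)) y) (ph T u e) < ε / 2 := by
    intro y hy j hj
    have hyp : ∀ s : ℤ, |s| ≤ (k (ζ (tt j)) : ℤ) →
        dist (ph T s (ph T (tt j) y)) (ph T s (ζ (tt j))) ≤ δ + ((k (ζ (tt j)) : ℝ) + 1)⁻¹ := by
      intro s hs
      have hk1 : (k (ζ (tt j)) : ℤ) ≤ (kstar : ℤ) := by
        have h := Finset.le_sup (f := k) (hzct (ph T (tt j) x))
        simp only [hζ]
        exact_mod_cast h
      have habs := abs_le.mp hs
      have h0n : 0 ≤ s + (tt j : ℤ) ∧ s + (tt j : ℤ) < (n : ℤ) := by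
        have h1 := httlb j
        have h2 := hact j hj
        omega
      rw [← ph_add]
      calc dist (ph T (s + (tt j : ℤ)) y) (ph T s (ζ (tt j)))
          ≤ dist (ph T (s + (tt j : ℤ)) y) (ph T (s + (tt j : ℤ)) x) +
            dist (ph T (s + (tt j : ℤ)) x) (ph T s (ζ (tt j))) := dist_triangle _ _ _
        _ ≤ δ + ((k (ζ (tt j)) : ℝ) + 1)⁻¹ := by
            refine add_le_add ?_ ?_
            · rw [dist_comm]
              exact le_trans (coord_le_dN_int T h0n.1 h0n.2 hD) hy
            · have hmem := hzcV (ph T (tt j) x)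
              have hζeq : ζ (tt j) = zc (ph T (tt j) x) := by simp only [hζ]
              rw [← hζeq] at hmem
              simp only [hV, mem_iInter, mem_setOf_eq] at hmem
              have := hmem s (Finset.mem_Icc.mpr ⟨by omega, by omega⟩)
              rw [← ph_add] at this
              exact this.le
    obtain ⟨e, he, hsh⟩ := hshadow (ζ (tt j)) (ph T (tt j) y) hyp
    refine ⟨e, he, fun u hu => ?_⟩
    have := hsh u hu
    rwa [← ph_add] at this
  -- word letters on blocks
  set ew : ℕ → X → X := fun j y =>
    if h : ∃ e, e ∈ E (ζ (tt j)) ∧ ∀ u : ℕ, u < m (ζ (tt j)) →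
        dist (ph T ((u : ℤ) + (tt j : ℤ)) y) (ph T u e) < ε / 2
    then h.choose else (hEne (ζ (tt j))).choose with hew
  have hewmem : ∀ j y, ew j y ∈ E (ζ (tt j)) := by
    intro j y
    simp only [hew]
    split_ifs with h
    · exact h.choose_spec.1
    · exact (hEne (ζ (tt j))).choose_spec
  have hewspec : ∀ j, ∀ y ∈ Y, j < p → ∀ u : ℕ, u < m (ζ (tt j)) →
      dist (ph T ((u : ℤ) + (tt j : ℤ)) y) (ph T u (ew j y)) < ε / 2 := by
    intro j y hy hj u hu
    have h := hblock y hy j hj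
    simp only [hew, dif_pos h]
    exact h.choose_spec.2 u hu
  -- the word map
  set W : X → ((j : Fin p) → {e // e ∈ E (ζ (tt j))}) × ({s // s ∈ Bd} → {g // g ∈ G}) :=
    fun y => (fun j => ⟨ew j y, hewmem j y⟩, fun s => ⟨gc (ph T (s : ℕ) y), hgcmem _⟩) with hW
  have hWword : ∀ y ∈ Y, ∀ y' ∈ Y, W y = W y' → dN T n y y' ≤ ε := by
    intro y hy y' hy' hww
    refine dN_le T hε.le (fun s hsn => ?_)
    by_cases hsb : ∃ j, j < p ∧ tt j ≤ s ∧ s < tt (j + 1)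
    · obtain ⟨j, hjp, hjs1, hjs2⟩ := hsb
      have heq : ew j y = ew j y' := by
        have h1 := congrFun (congrArg Prod.fst hww) ⟨j, hjp⟩
        exact Subtype.ext_iff.mp h1
      have hu : s - tt j < m (ζ (tt j)) := by rw [htts] at hjs2; omega
      have hcast : (((s - tt j : ℕ) : ℤ) + (tt j : ℤ)) = (s : ℤ) := by omega
      have h1 := hewspec j y hy hjp (s - tt j) hu
      have h2 := hewspec j y' hy' hjp (s - tt j) hu
      rw [hcast] at h1 h2
      rw [← heq] at h2
      calc dist (ph T s y) (ph T s y')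
          ≤ dist (ph T s y) (ph T ((s - tt j : ℕ)) (ew j y)) +
            dist (ph T ((s - tt j : ℕ)) (ew j y)) (ph T s y') := dist_triangle _ _ _
        _ ≤ ε / 2 + ε / 2 := add_le_add h1.le (by rw [dist_comm]; exact h2.le)
        _ = ε := by ring
    · have hsBd : s ∈ Bd := Finset.mem_filter.mpr ⟨Finset.mem_range.mpr hsn, hsb⟩
      have heq : gc (ph T s y) = gc (ph T s y') := by
        have h1 := congrFun (congrArg Prod.snd hww) ⟨s, hsBd⟩
        exact Subtype.ext_iff.mp h1
      calc dist (ph T s y) (ph T s y')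
          ≤ dist (ph T s y) (gc (ph T s y)) + dist (gc (ph T s y)) (ph T s y') :=
            dist_triangle _ _ _
        _ ≤ ε / 4 + ε / 4 := by
            refine add_le_add (hgcd _) ?_
            rw [heq, dist_comm]
            exact hgcd _
        _ ≤ ε := by linarith
  have hcount := spanNum_le_of_word (dN T n) Y ε _ W hWword
  -- cardinality computation
  have hcardeq : (Fintype.card (((j : Fin p) → {e // e ∈ E (ζ (tt j))}) ×
      ({s // s ∈ Bd} → {g // g ∈ G})) : ℝ) =
      (∏ j : Fin p, ((E (ζ (tt j))).card : ℝ)) * (G.card : ℝ) ^ Bd.card := by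
    rw [Fintype.card_prod, Fintype.card_pi, Fintype.card_fun]
    push_cast
    simp only [Fintype.card_coe]
  have hprodle : (∏ j : Fin p, ((E (ζ (tt j))).card : ℝ)) ≤
      Real.exp (c * (n + mstar)) := by
    calc (∏ j : Fin p, ((E (ζ (tt j))).card : ℝ))
        ≤ ∏ j : Fin p, Real.exp (c * m (ζ (tt j))) :=
          Finset.prod_le_prod (fun j _ => Nat.cast_nonneg _) (fun j _ => hEcard _)
      _ = Real.exp (∑ j : Fin p, c * m (ζ (tt j))) := (Real.exp_sum _ _).symm
      _ = Real.exp (c * ∑ j ∈ Finset.range p, (m (ζ (tt j)) : ℝ)) := by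
          rw [Fin.sum_univ_eq_sum_range (fun j => c * (m (ζ (tt j)) : ℝ)), ← Finset.mul_sum]
      _ ≤ Real.exp (c * (n + mstar)) := by
          apply Real.exp_le_exp.mpr
          apply mul_le_mul_of_nonneg_left _ hc0
          have : ((∑ j ∈ Finset.range p, m (ζ (tt j)) : ℕ) : ℝ) ≤ ((n + mstar : ℕ) : ℝ) := by
            exact_mod_cast hsumle
          push_cast at this ⊢
          linarith
  have hpowle : (G.card : ℝ) ^ Bd.card ≤ (G.card : ℝ) ^ (2 * kstar) :=
    pow_le_pow_right₀ hGR hBdcard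
  calc (spanNum (dN T n) Y ε : ℝ)
      ≤ (Fintype.card (((j : Fin p) → {e // e ∈ E (ζ (tt j))}) ×
          ({s // s ∈ Bd} → {g // g ∈ G})) : ℝ) := by exact_mod_cast hcount
    _ = (∏ j : Fin p, ((E (ζ (tt j))).card : ℝ)) * (G.card : ℝ) ^ Bd.card := hcardeq
    _ ≤ Real.exp (c * (n + mstar)) * (G.card : ℝ) ^ (2 * kstar) := by
        refine mul_le_mul hprodle hpowle (pow_nonneg (Nat.cast_nonneg _) _) (Real.exp_pos _).le
    _ = C * Real.exp (c * n) := by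
        have hxy : Real.exp (c * ((n : ℝ) + (mstar : ℝ))) =
            Real.exp (c * mstar) * Real.exp (c * n) := by
          rw [← Real.exp_add]; ring_nf
        rw [hC, hxy]; ring
    _ ≤ C * Real.exp ((a + β) * n) := by
        refine mul_le_mul_of_nonneg_left (Real.exp_le_exp.mpr ?_) hCpos.le
        have hn0 : (0:ℝ) ≤ (n:ℝ) := Nat.cast_nonneg n
        simp only [hc]
        nlinarith
end

section
/- Let (X,d) be a compact metric space and T: X → X a homeomorphism. Then for every ε, δ > 0, the entropy at scale ε satisfies S(X, ε) ≤ S(X, δ) + sup_{x ∈ X} S(B_δ(x, d_ℤ), ε/4). -/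
open Filter Set MeasureTheory

namespace StmtAux
variable {X : Type*} [MetricSpace X] (T : X ≃ₜ X)

lemma contZpow (n : ℤ) : Continuous ⇑(T.toEquiv ^ n) := by
  induction n using Int.induction_on with
  | zero => simpa using continuous_id
  | succ k ih =>
      have h : (T.toEquiv ^ ((k : ℤ) + 1)) = (T.toEquiv ^ (k : ℤ)) * T.toEquiv := by
        rw [zpow_add_one]
      rw [h]
      simpa [Equiv.Perm.coe_mul] using ih.comp T.continuous
  | pred k ih =>
      have h : (T.toEquiv ^ (-(k : ℤ) - 1)) = (T.toEquiv ^ (-(k : ℤ))) * T.toEquiv⁻¹ := by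
        rw [zpow_sub_one]
      rw [h]
      have hc : Continuous ⇑(T.toEquiv⁻¹) := T.symm.continuous
      simpa [Equiv.Perm.coe_mul] using ih.comp hc

lemma zpowAdd (m n : ℤ) (x : X) :
    (T.toEquiv ^ (m + n)) x = (T.toEquiv ^ m) ((T.toEquiv ^ n) x) := by
  rw [zpow_add]; rfl

lemma dN_bdd (N : ℕ) (x y : X) :
    BddAbove (range fun n : {n : ℤ | 0 ≤ n ∧ n < (N : ℤ)} =>
      dist ((T.toEquiv ^ (n : ℤ)) x) ((T.toEquiv ^ (n : ℤ)) y)) := by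
  have hfin : ({n : ℤ | 0 ≤ n ∧ n < (N : ℤ)}).Finite := by
    have : {n : ℤ | 0 ≤ n ∧ n < (N : ℤ)} = Set.Ico (0 : ℤ) (N : ℤ) := rfl
    rw [this]; exact Set.finite_Ico _ _
  haveI := hfin.to_subtype
  exact Set.Finite.bddAbove (Set.finite_range _)

lemma dN_nonneg (N : ℕ) (x y : X) : 0 ≤ dN T N x y :=
  Real.iSup_nonneg fun _ => dist_nonneg

lemma dN_le_iff {N : ℕ} {x y : X} {r : ℝ} (hr : 0 ≤ r) :
    dN T N x y ≤ r ↔ ∀ n : ℤ, 0 ≤ n → n < (N : ℤ) →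
      dist ((T.toEquiv ^ n) x) ((T.toEquiv ^ n) y) ≤ r := by
  constructor
  · intro h n hn hn'
    exact le_trans (le_ciSup (dN_bdd T N x y) ⟨n, hn, hn'⟩) h
  · intro h
    exact Real.iSup_le (fun n => h n n.2.1 n.2.2) hr

lemma dOmZ_univ_bdd [CompactSpace X] (x y : X) :
    BddAbove (range fun n : (univ : Set ℤ) =>
      dist ((T.toEquiv ^ (n : ℤ)) x) ((T.toEquiv ^ (n : ℤ)) y)) := by
  refine ⟨Metric.diam (univ : Set X), ?_⟩
  rintro r ⟨n, rfl⟩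
  exact Metric.dist_le_diam_of_mem isCompact_univ.isBounded trivial trivial

lemma mem_bowenBallZ_iff [CompactSpace X] {δ : ℝ} (hδ : 0 ≤ δ) {x y : X} :
    y ∈ bowenBallZ T δ x ↔ ∀ n : ℤ, dist ((T.toEquiv ^ n) x) ((T.toEquiv ^ n) y) ≤ δ := by
  constructor
  · intro h n
    exact le_trans (le_ciSup (dOmZ_univ_bdd T x y) ⟨n, trivial⟩) h
  · intro h
    exact Real.iSup_le (fun n => h n) hδ

lemma self_mem_bowenBallZ {δ : ℝ} (hδ : 0 ≤ δ) (x : X) : x ∈ bowenBallZ T δ x :=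
  Real.iSup_le (fun n => by simpa using hδ) hδ

lemma spanNum_le_card' {ρ : X → X → ℝ} {K : Set X} {ε : ℝ} (S : Finset X)
    (h : ∀ x ∈ K, ∃ y ∈ S, ρ x y ≤ ε) : spanNum ρ K ε ≤ S.card :=
  Nat.sInf_le ⟨S, rfl, h⟩

lemma spanNum_spec {ρ : X → X → ℝ} {K : Set X} {ε : ℝ}
    (h : ∃ S : Finset X, ∀ x ∈ K, ∃ y ∈ S, ρ x y ≤ ε) :
    ∃ S : Finset X, S.card = spanNum ρ K ε ∧ ∀ x ∈ K, ∃ y ∈ S, ρ x y ≤ ε := by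
  obtain ⟨S, hS⟩ := h
  have hne : ({n : ℕ | ∃ S : Finset X, S.card = n ∧ ∀ x ∈ K, ∃ y ∈ S, ρ x y ≤ ε}).Nonempty :=
    ⟨S.card, S, rfl, hS⟩
  exact Nat.sInf_mem hne

lemma one_le_spanNum {ρ : X → X → ℝ} {K : Set X} {ε : ℝ} (hK : K.Nonempty)
    (h : ∃ S : Finset X, ∀ x ∈ K, ∃ y ∈ S, ρ x y ≤ ε) : 1 ≤ spanNum ρ K ε := by
  by_contra hc
  push_neg at hc
  interval_cases h' : spanNum ρ K ε
  obtain ⟨S, hcard, hspan⟩ := spanNum_spec h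
  rw [h'] at hcard
  obtain ⟨x, hx⟩ := hK
  obtain ⟨y, hy, -⟩ := hspan x hx
  rw [Finset.card_eq_zero.mp hcard] at hy
  exact absurd hy (Finset.notMem_empty _)

lemma exists_spanning_finset [CompactSpace X] (N : ℕ) (r : ℝ) (hr : 0 < r) :
    ∃ S : Finset X, ∀ x : X, ∃ y ∈ S, dN T N x y ≤ r := by
  classical
  set U : X → Set X := fun z =>
    ⋂ n ∈ Finset.Ico (0 : ℤ) (N : ℤ),
      {y | dist ((T.toEquiv ^ n) z) ((T.toEquiv ^ n) y) < r} with hU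
  have hUopen : ∀ z, IsOpen (U z) := by
    intro z
    refine isOpen_biInter_finset fun n _ => ?_
    exact isOpen_lt (continuous_const.dist (contZpow T n)) continuous_const
  have hmem : ∀ z, z ∈ U z := by
    intro z
    simp only [hU, Set.mem_iInter, Set.mem_setOf_eq]
    intro n _
    simpa using hr
  obtain ⟨t, ht⟩ := isCompact_univ.elim_finite_subcover U hUopen
    (fun x _ => Set.mem_iUnion.mpr ⟨x, hmem x⟩)
  refine ⟨t, fun x => ?_⟩
  obtain ⟨z, hz, hxz⟩ := Set.mem_iUnion₂.mp (ht (Set.mem_univ x))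
  refine ⟨z, hz, (dN_le_iff T hr.le).mpr fun n hn hn' => ?_⟩
  have := Set.mem_iInter₂.mp hxz n (Finset.mem_Ico.mpr ⟨hn, hn'⟩)
  rw [dist_comm]
  exact le_of_lt this

lemma spanNum_le_fintype_card [Nonempty X] {ρ : X → X → ℝ} {K : Set X} {ε : ℝ}
    {I : Type*} [Fintype I] (c : X → I)
    (h : ∀ y ∈ K, ∀ y' ∈ K, c y = c y' → ρ y y' ≤ ε) :
    spanNum ρ K ε ≤ Fintype.card I := by
  classical
  have rep : ∀ i : I, ∃ z : X, (∃ y ∈ K, c y = i) → (z ∈ K ∧ c z = i) := by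
    intro i
    by_cases hi : ∃ y ∈ K, c y = i
    · obtain ⟨y, hy, hcy⟩ := hi
      exact ⟨y, fun _ => ⟨hy, hcy⟩⟩
    · exact ⟨Classical.arbitrary X, fun hh => absurd hh hi⟩
  choose f hf using rep
  refine le_trans (spanNum_le_card' (Finset.univ.image f) fun x hx => ?_) ?_
  · obtain ⟨hz, hcz⟩ := hf (c x) ⟨x, hx, rfl⟩
    exact ⟨f (c x), Finset.mem_image_of_mem _ (Finset.mem_univ _),
      h x hx _ hz hcz.symm⟩
  · exact Finset.card_image_le.trans_eq Finset.card_univ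

lemma spanNum_exp_bound [CompactSpace X] [Nonempty X] (r : ℝ) (hr : 0 < r) :
    ∃ c : ℝ, 0 ≤ c ∧ ∀ (N : ℕ) (K : Set X),
      (spanNum (dN T N) K r : ℝ) ≤ Real.exp (N * c) := by
  classical
  obtain ⟨G, hG⟩ := exists_spanning_finset T 1 (r / 2) (half_pos hr)
  have hGne : G.Nonempty := by
    obtain ⟨y, hy, -⟩ := hG (Classical.arbitrary X)
    exact ⟨y, hy⟩
  have hG1 : 1 ≤ (G.card : ℝ) := by exact_mod_cast Finset.card_pos.mpr hGne
  refine ⟨Real.log G.card, Real.log_nonneg hG1, fun N K => ?_⟩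
  -- choice of nearest point in G w.r.t. plain distance
  have hnear : ∀ x : X, ∃ g, g ∈ G ∧ dist x g ≤ r / 2 := by
    intro x
    obtain ⟨g, hg, hd⟩ := hG x
    refine ⟨g, hg, ?_⟩
    have := (dN_le_iff T (half_pos hr).le (N := 1)).mp hd 0 le_rfl (by norm_num)
    simpa using this
  choose g hgG hgd using hnear
  set cfun : X → (Fin N → {a // a ∈ G}) := fun y n =>
    ⟨g ((T.toEquiv ^ (n : ℤ)) y), hgG _⟩ with hcfun
  have hfib : ∀ y ∈ K, ∀ y' ∈ K, cfun y = cfun y' → dN T N y y' ≤ r := by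
    intro y _ y' _ hyy'
    refine (dN_le_iff T hr.le).mpr fun n hn hn' => ?_
    have hnN : n.toNat < N := by omega
    have hval : g ((T.toEquiv ^ n) y) = g ((T.toEquiv ^ n) y') := by
      have := congrFun hyy' ⟨n.toNat, hnN⟩
      have h2 := congrArg Subtype.val this
      rw [← Int.toNat_of_nonneg hn]
      simp only [hcfun] at h2
      exact h2
    calc dist ((T.toEquiv ^ n) y) ((T.toEquiv ^ n) y')
        ≤ dist ((T.toEquiv ^ n) y) (g ((T.toEquiv ^ n) y))
          + dist (g ((T.toEquiv ^ n) y')) ((T.toEquiv ^ n) y') := by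
          rw [hval]
          exact dist_triangle _ ((g ((T.toEquiv ^ n) y'))) _
      _ ≤ r / 2 + r / 2 := add_le_add (hgd _) (by rw [dist_comm]; exact hgd _)
      _ = r := by ring
  calc (spanNum (dN T N) K r : ℝ)
      ≤ (Fintype.card (Fin N → {a // a ∈ G}) : ℝ) := by
        exact_mod_cast spanNum_le_fintype_card cfun hfib
    _ = (G.card : ℝ) ^ N := by
        simp [Fintype.card_fun]
    _ = Real.exp (N * Real.log G.card) := by
        rw [Real.exp_nat_mul, Real.exp_log (by linarith)]

lemma uFun_nonneg {K : Set X} {r : ℝ} (N : ℕ) :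
    0 ≤ Real.log (spanNum (dN T N) K r) / N := by
  apply div_nonneg _ (Nat.cast_nonneg N)
  exact Real.log_natCast_nonneg _

lemma uFun_le {K : Set X} {r c : ℝ} (hc : 0 ≤ c) (N : ℕ)
    (hb : (spanNum (dN T N) K r : ℝ) ≤ Real.exp (N * c)) :
    Real.log (spanNum (dN T N) K r) / N ≤ c := by
  rcases Nat.eq_zero_or_pos N with hN | hN
  · simp [hN, hc]
  have hlog : Real.log (spanNum (dN T N) K r) ≤ N * c := by
    rcases Nat.eq_zero_or_pos (spanNum (dN T N) K r) with h0 | h0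
    · simp [h0]
      positivity
    · rw [Real.log_le_iff_le_exp (by exact_mod_cast h0)]
      exact hb
  rw [div_le_iff₀ (by exact_mod_cast hN)]
  linarith [hlog]

lemma entS_le_const [CompactSpace X] [Nonempty X] {K : Set X} {r c : ℝ} (hc : 0 ≤ c)
    (hb : ∀ N : ℕ, (spanNum (dN T N) K r : ℝ) ≤ Real.exp (N * c)) :
    entS T K r ≤ c := by
  unfold entS
  apply limsup_le_of_le
  · exact isCoboundedUnder_le_of_le atTop fun N : ℕ => uFun_nonneg T N
  · exact Eventually.of_forall fun N : ℕ => uFun_le T hc N (hb N)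

lemma entS_nonneg [CompactSpace X] [Nonempty X] {K : Set X} {r c : ℝ}
    (hb : ∀ N : ℕ, (spanNum (dN T N) K r : ℝ) ≤ Real.exp (N * c)) (hc : 0 ≤ c) :
    0 ≤ entS T K r := by
  unfold entS
  apply le_limsup_of_frequently_le
  · exact Frequently.of_forall fun N : ℕ => uFun_nonneg T N
  · exact isBoundedUnder_of ⟨c, fun N : ℕ => uFun_le T hc N (hb N)⟩

set_option maxHeartbeats 2000000 in
lemma key_count [CompactSpace X] [Nonempty X] {ε δ aγ : ℝ} (hε : 0 < ε) (hδ : 0 < δ)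
    (haγ : 0 ≤ aγ)
    (hloc : ∀ x : X, ∃ (M : ℕ) (E : Finset X), 1 ≤ M ∧ ((E.card : ℝ) ≤ Real.exp (M * aγ)) ∧
      ∀ y ∈ bowenBallZ T δ x, ∃ z ∈ E, dN T M y z ≤ ε / 4) :
    ∃ C : ℝ, 1 ≤ C ∧ ∀ N : ℕ, (spanNum (dN T N) univ ε : ℝ) ≤
      C * (spanNum (dN T N) univ δ : ℝ) * Real.exp (N * aγ) := by
  classical
  choose M E hM hEcard hEspan using hloc
  -- the open enlargement of the spanning data
  set V : X → Set X := fun x => ⋃ z ∈ E x, ⋂ m ∈ Finset.range (M x),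
      {y | dist ((T.toEquiv ^ (m : ℤ)) y) ((T.toEquiv ^ (m : ℤ)) z) < ε / 2} with hV
  have hVopen : ∀ x, IsOpen (V x) := by
    intro x
    refine isOpen_biUnion fun z _ => isOpen_biInter_finset fun m _ => ?_
    exact isOpen_lt ((contZpow T m).dist continuous_const) continuous_const
  have hBV : ∀ x, bowenBallZ T δ x ⊆ V x := by
    intro x y hy
    obtain ⟨z, hz, hd⟩ := hEspan x y hy
    refine Set.mem_biUnion hz ?_
    refine Set.mem_iInter₂.mpr fun m hm => ?_
    have hm' : (m : ℤ) < (M x : ℤ) := by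
      exact_mod_cast Finset.mem_range.mp hm
    have := (dN_le_iff T (by linarith)).mp hd (m : ℤ) (Int.ofNat_nonneg m) hm'
    simp only [Set.mem_setOf_eq]
    linarith
  -- the nested compact approximations of the Bowen ball
  set D : X → ℕ → Set X := fun x k => ⋂ n ∈ Finset.Icc (-(k : ℤ)) (k : ℤ),
      {y | dist ((T.toEquiv ^ n) x) ((T.toEquiv ^ n) y) ≤ δ + 1 / (k + 1)} with hD
  have hDclosed : ∀ x k, IsClosed (D x k) := by
    intro x k
    refine isClosed_biInter fun n _ => ?_
    exact isClosed_le (continuous_const.dist (contZpow T n)) continuous_const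
  have hDanti : ∀ x, Antitone (D x) := by
    intro x k k' hkk'
    intro y hy
    refine Set.mem_iInter₂.mpr fun n hn => ?_
    rw [Finset.mem_Icc] at hn
    have hn' : n ∈ Finset.Icc (-(k' : ℤ)) (k' : ℤ) := by
      rw [Finset.mem_Icc]
      constructor <;> [linarith [hn.1, (by exact_mod_cast hkk' : (k:ℤ) ≤ k')];
        linarith [hn.2, (by exact_mod_cast hkk' : (k:ℤ) ≤ k')]]
    have := Set.mem_iInter₂.mp hy n hn'
    simp only [Set.mem_setOf_eq] at this ⊢
    have hfrac : 1 / ((k' : ℝ) + 1) ≤ 1 / ((k : ℝ) + 1) := by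
      apply one_div_le_one_div_of_le (by positivity)
      have : (k : ℝ) ≤ k' := by exact_mod_cast hkk'
      linarith
    linarith
  have hDinter : ∀ x, (⋂ k, D x k) ⊆ bowenBallZ T δ x := by
    intro x y hy
    refine Real.iSup_le (fun n => ?_) hδ.le
    have key : ∀ η : ℝ, 0 < η →
        dist ((T.toEquiv ^ (n:ℤ)) x) ((T.toEquiv ^ (n:ℤ)) y) ≤ δ + η := by
      intro η hη
      set k : ℕ := (n : ℤ).natAbs + ⌈η⁻¹⌉₊ with hk
      have h1 : (n : ℤ) ∈ Finset.Icc (-(k : ℤ)) (k : ℤ) := by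
        rw [Finset.mem_Icc]
        have hk' : ((n : ℤ)).natAbs ≤ k := by omega
        omega
      have h2 := Set.mem_iInter₂.mp (Set.mem_iInter.mp hy k) (n : ℤ) h1
      simp only [Set.mem_setOf_eq] at h2
      have h3 : 1 / ((k : ℝ) + 1) ≤ η := by
        have h4 : η⁻¹ ≤ (⌈η⁻¹⌉₊ : ℝ) := Nat.le_ceil _
        have h5 : (⌈η⁻¹⌉₊ : ℝ) ≤ (k : ℝ) := by
          have : ⌈η⁻¹⌉₊ ≤ k := by omega
          exact_mod_cast this
        rw [div_le_iff₀ (by positivity : (0:ℝ) < (k : ℝ) + 1)]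
        have h6 := mul_le_mul_of_nonneg_left
          (show η⁻¹ ≤ (k : ℝ) + 1 by linarith) hη.le
        rw [mul_inv_cancel₀ hη.ne'] at h6
        linarith
      linarith
    by_contra hcon
    push_neg at hcon
    have := key ((dist ((T.toEquiv ^ (n:ℤ)) x) ((T.toEquiv ^ (n:ℤ)) y) - δ) / 2) (by linarith)
    linarith
  have hDV : ∀ x, ∃ k, D x k ⊆ V x := by
    intro x
    have := isCompact_univ (X := X)
    obtain ⟨k, hk⟩ := IsCompact.elim_directed_family_closed this
      (fun k => D x k ∩ (V x)ᶜ)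
      (fun k => (hDclosed x k).inter (hVopen x).isClosed_compl)
      (by
        rw [Set.univ_inter]
        rw [← Set.iInter_inter]
        apply Set.eq_empty_of_forall_notMem
        intro y hy
        rw [Set.mem_inter_iff] at hy
        exact hy.2 (hBV x (hDinter x hy.1)))
      (by
        intro i j
        refine ⟨max i j, ?_, ?_⟩
        · exact Set.inter_subset_inter (hDanti x (le_max_left i j)) subset_rfl
        · exact Set.inter_subset_inter (hDanti x (le_max_right i j)) subset_rfl)
    refine ⟨k, fun y hy => ?_⟩
    by_contra hyv
    have : y ∈ (univ : Set X) ∩ (D x k ∩ (V x)ᶜ) := ⟨trivial, hy, hyv⟩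
    rw [hk] at this
    exact this
  choose kk hkk using hDV
  -- the open cover
  set U : X → Set X := fun x => ⋂ n ∈ Finset.Icc (-(kk x : ℤ)) (kk x : ℤ),
      {x' | dist ((T.toEquiv ^ n) x) ((T.toEquiv ^ n) x') < 1 / (kk x + 1)} with hUdef
  have hUopen : ∀ x, IsOpen (U x) := by
    intro x
    refine isOpen_biInter_finset fun n _ => ?_
    exact isOpen_lt (continuous_const.dist (contZpow T n)) continuous_const
  have hUself : ∀ x, x ∈ U x := by
    intro x
    refine Set.mem_iInter₂.mpr fun n _ => ?_
    simp only [Set.mem_setOf_eq, dist_self]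
    positivity
  obtain ⟨tt, htt⟩ := isCompact_univ.elim_finite_subcover U hUopen
    (fun x _ => Set.mem_iUnion.mpr ⟨x, hUself x⟩)
  have hsel : ∀ p : X, ∃ x, x ∈ tt ∧ p ∈ U x := by
    intro p
    obtain ⟨x, hx, hpx⟩ := Set.mem_iUnion₂.mp (htt (Set.mem_univ p))
    exact ⟨x, hx, hpx⟩
  choose sel hselt hselU using hsel
  set Kmax : ℕ := tt.sup kk with hKmax
  set Mmax : ℕ := tt.sup M with hMmax
  have hkK : ∀ p, kk (sel p) ≤ Kmax := fun p => Finset.le_sup (hselt p)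
  have hMM : ∀ p, M (sel p) ≤ Mmax := fun p => Finset.le_sup (hselt p)
  -- boundary spanning sets
  obtain ⟨G, hG⟩ := exists_spanning_finset T Kmax (ε / 2) (by linarith)
  obtain ⟨G', hG'⟩ := exists_spanning_finset T (Kmax + Mmax) (ε / 2) (by linarith)
  have hGcard : 1 ≤ (G.card : ℝ) := by
    obtain ⟨g, hg, -⟩ := hG (Classical.arbitrary X)
    exact_mod_cast Finset.card_pos.mpr ⟨g, hg⟩
  have hG'card : 1 ≤ (G'.card : ℝ) := by
    obtain ⟨g, hg, -⟩ := hG' (Classical.arbitrary X)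
    exact_mod_cast Finset.card_pos.mpr ⟨g, hg⟩
  choose gfr hgfrG hgfrd using hG
  choose gbk hgbkG hgbkd using hG'
  refine ⟨G.card * G'.card, by nlinarith, fun N => ?_⟩
  -- a minimal spanning set for `δ` at time `N`
  obtain ⟨S0, hS0⟩ := exists_spanning_finset T N δ hδ
  obtain ⟨F, hFcard, hFspan⟩ := spanNum_spec (ρ := dN T N) (K := (univ : Set X)) (ε := δ)
    ⟨S0, fun x _ => hS0 x⟩
  have hFspan' : ∀ y : X, ∃ p ∈ F, dN T N y p ≤ δ := fun y => hFspan y (Set.mem_univ y)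
  choose fw hfwF hfwd using hFspan'
  -- iteration times
  set tms : X → ℕ → ℕ := fun w => fun j => Nat.rec Kmax
    (fun _ prev => prev + M (sel ((T.toEquiv ^ (prev : ℤ)) w))) j with htms
  have htms0 : ∀ w, tms w 0 = Kmax := fun w => rfl
  have htmsS : ∀ w j, tms w (j + 1) = tms w j + M (sel ((T.toEquiv ^ (tms w j : ℤ)) w)) :=
    fun w j => rfl
  set idx : X → ℕ → X := fun w j => sel ((T.toEquiv ^ (tms w j : ℤ)) w) with hidx
  have htms_ge : ∀ w j, Kmax + j ≤ tms w j := by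
    intro w j
    induction j with
    | zero => rw [htms0]; omega
    | succ j ih =>
        have h1 := hM (sel ((T.toEquiv ^ (tms w j : ℤ)) w))
        rw [htmsS]
        omega
  have hexJ : ∀ w : X, ∃ j, N ≤ tms w j + Kmax + Mmax :=
    fun w => ⟨N, by have := htms_ge w N; omega⟩
  set J : X → ℕ := fun w => Nat.find (hexJ w) with hJ
  have hJspec : ∀ w, N ≤ tms w (J w) + Kmax + Mmax := fun w => Nat.find_spec (hexJ w)
  have hJmin : ∀ w j, j < J w → tms w j + Kmax + Mmax < N := by
    intro w j hj
    have := Nat.find_min (hexJ w) hj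
    omega
  -- nonemptiness of the local spanning sets
  have hEne : ∀ x : X, ∃ z, z ∈ E x := by
    intro x
    obtain ⟨z, hz, -⟩ := hEspan x x (self_mem_bowenBallZ T hδ.le x)
    exact ⟨z, hz⟩
  -- the block property
  have hblock : ∀ w y : X, dN T N y w ≤ δ → ∀ j, tms w j + Kmax + Mmax < N →
      ∃ z ∈ E (idx w j), ∀ m : ℕ, m < M (idx w j) →
        dist ((T.toEquiv ^ ((tms w j + m : ℕ) : ℤ)) y) ((T.toEquiv ^ (m : ℤ)) z) < ε / 2 := by
    intro w y hyw j hj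
    set t0 : ℕ := tms w j with ht0
    set x' : X := (T.toEquiv ^ (t0 : ℤ)) w with hx'
    set y' : X := (T.toEquiv ^ (t0 : ℤ)) y with hy'
    have hidxj : idx w j = sel x' := rfl
    have ht0K : Kmax ≤ t0 := by have := htms_ge w j; omega
    have hkc : kk (sel x') ≤ Kmax := hkK x'
    have hyD : y' ∈ D (sel x') (kk (sel x')) := by
      refine Set.mem_iInter₂.mpr fun n hn => ?_
      rw [Finset.mem_Icc] at hn
      have hkcz : (kk (sel x') : ℤ) ≤ (Kmax : ℤ) := by exact_mod_cast hkc
      have ht0z : (Kmax : ℤ) ≤ (t0 : ℤ) := by exact_mod_cast ht0K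
      have hNz : (t0 : ℤ) + (Kmax : ℤ) + (Mmax : ℤ) < (N : ℤ) := by exact_mod_cast hj
      have h0 : 0 ≤ n + (t0 : ℤ) := by omega
      have h1 : n + (t0 : ℤ) < (N : ℤ) := by omega
      have hU1 := Set.mem_iInter₂.mp (hselU x') n (Finset.mem_Icc.mpr hn)
      simp only [Set.mem_setOf_eq] at hU1
      have hd2 : dist ((T.toEquiv ^ n) x') ((T.toEquiv ^ n) y') ≤ δ := by
        rw [hx', hy', ← zpowAdd T n (t0 : ℤ) w, ← zpowAdd T n (t0 : ℤ) y]
        have := (dN_le_iff T hδ.le).mp hyw (n + (t0 : ℤ)) h0 h1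
        rw [dist_comm]
        exact this
      simp only [Set.mem_setOf_eq]
      calc dist ((T.toEquiv ^ n) (sel x')) ((T.toEquiv ^ n) y')
          ≤ dist ((T.toEquiv ^ n) (sel x')) ((T.toEquiv ^ n) x')
            + dist ((T.toEquiv ^ n) x') ((T.toEquiv ^ n) y') := dist_triangle _ _ _
        _ ≤ δ + 1 / (kk (sel x') + 1) := by
            have := le_of_lt hU1
            linarith [hd2]
    have hyV : y' ∈ V (sel x') := hkk (sel x') hyD
    simp only [hV, Set.mem_iUnion, Set.mem_iInter, Set.mem_setOf_eq] at hyV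
    obtain ⟨z, hz, hzd⟩ := hyV
    rw [hidxj]
    refine ⟨z, hz, fun m hm => ?_⟩
    have hmem : m ∈ Finset.range (M (sel x')) := Finset.mem_range.mpr hm
    have hd := hzd m hmem
    have hcast : ((t0 + m : ℕ) : ℤ) = (m : ℤ) + (t0 : ℤ) := by push_cast; ring
    rw [hcast, zpowAdd T (m : ℤ) (t0 : ℤ) y]
    exact hd
  have hzfun : ∀ (w y : X) (j : ℕ), ∃ z, z ∈ E (idx w j) ∧
      (dN T N y w ≤ δ → j < J w → ∀ m : ℕ, m < M (idx w j) →
        dist ((T.toEquiv ^ ((tms w j + m : ℕ) : ℤ)) y) ((T.toEquiv ^ (m : ℤ)) z) < ε / 2) := by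
    intro w y j
    by_cases hc : dN T N y w ≤ δ ∧ j < J w
    · obtain ⟨z, hz, hzd⟩ := hblock w y hc.1 j (hJmin w j hc.2)
      exact ⟨z, hz, fun _ _ => hzd⟩
    · obtain ⟨z, hz⟩ := hEne (idx w j)
      exact ⟨z, hz, fun h1 h2 => absurd ⟨h1, h2⟩ hc⟩
  choose zf hzfE hzfd using hzfun
  -- the coding map
  set code : X → (Σ w : {p // p ∈ F},
      ((∀ j : Fin (J w.1), {z // z ∈ E (idx w.1 j.1)}) × {g // g ∈ G} × {g // g ∈ G'})) :=
    fun y => ⟨⟨fw y, hfwF y⟩,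
      (fun j => ⟨zf (fw y) y j.1, hzfE (fw y) y j.1⟩,
       ⟨gfr y, hgfrG y⟩,
       ⟨gbk ((T.toEquiv ^ ((tms (fw y) (J (fw y)) : ℕ) : ℤ)) y), hgbkG _⟩)⟩ with hcode
  have hfib : ∀ y ∈ (univ : Set X), ∀ y' ∈ (univ : Set X), code y = code y' → dN T N y y' ≤ ε := by
    intro y _ y' _ he
    simp only [hcode] at he
    have h1 : (⟨fw y, hfwF y⟩ : {p // p ∈ F}) = ⟨fw y', hfwF y'⟩ := congrArg Sigma.fst he
    have hwval : fw y = fw y' := congrArg Subtype.val h1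
    have hz_eq : ∀ j : ℕ, j < J (fw y) → zf (fw y) y j = zf (fw y) y' j := by
      intro j hj
      have hcg := congrArg
        (fun s => if h : j < J s.1.1 then some ((s.2.1 ⟨j, h⟩).1) else none) he
      dsimp only at hcg
      have hj' : j < J (fw y') := hwval ▸ hj
      rw [dif_pos hj, dif_pos hj'] at hcg
      rw [Option.some_inj] at hcg
      rw [hcg, hwval]
    have hgf_eq : gfr y = gfr y' := by
      have hcg := congrArg (fun s => s.2.2.1.1) he
      dsimp only at hcg
      exact hcg
    have hgb_eq : gbk ((T.toEquiv ^ ((tms (fw y) (J (fw y)) : ℕ) : ℤ)) y)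
        = gbk ((T.toEquiv ^ ((tms (fw y) (J (fw y)) : ℕ) : ℤ)) y') := by
      have hcg := congrArg (fun s => s.2.2.2.1) he
      dsimp only at hcg
      rw [← hwval] at hcg
      exact hcg
    have hy'w : dN T N y' (fw y) ≤ δ := by rw [hwval]; exact hfwd y'
    refine (dN_le_iff T hε.le).mpr fun n hn hnN => ?_
    set nn : ℕ := n.toNat with hnn
    have hnncast : (nn : ℤ) = n := Int.toNat_of_nonneg hn
    have hnnN : nn < N := by omega
    rw [← hnncast]
    rcases lt_or_ge nn Kmax with hcase | hcase
    · -- front segment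
      have hy1 := (dN_le_iff T (by linarith)).mp (hgfrd y) (nn : ℤ)
        (Int.ofNat_nonneg nn) (by exact_mod_cast hcase)
      have hy2 := (dN_le_iff T (by linarith)).mp (hgfrd y') (nn : ℤ)
        (Int.ofNat_nonneg nn) (by exact_mod_cast hcase)
      rw [← hgf_eq] at hy2
      calc dist ((T.toEquiv ^ (nn : ℤ)) y) ((T.toEquiv ^ (nn : ℤ)) y')
          ≤ dist ((T.toEquiv ^ (nn : ℤ)) y) ((T.toEquiv ^ (nn : ℤ)) (gfr y))
            + dist ((T.toEquiv ^ (nn : ℤ)) (gfr y)) ((T.toEquiv ^ (nn : ℤ)) y') :=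
            dist_triangle _ _ _
        _ ≤ ε / 2 + ε / 2 := by
            rw [dist_comm ((T.toEquiv ^ (nn : ℤ)) (gfr y))]
            exact add_le_add hy1 hy2
        _ = ε := by ring
    · rcases lt_or_ge nn (tms (fw y) (J (fw y))) with hcase2 | hcase2
      · -- middle blocks
        set j : ℕ := Nat.findGreatest (fun j => tms (fw y) j ≤ nn) (J (fw y)) with hjdef
        have hj1 : tms (fw y) j ≤ nn :=
          Nat.findGreatest_spec (P := fun i => tms (fw y) i ≤ nn)
            (Nat.zero_le _) (by show tms (fw y) 0 ≤ nn; rw [htms0]; exact hcase)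
        have hjle : j ≤ J (fw y) := Nat.findGreatest_le _
        have hjJ : j < J (fw y) := by
          rcases lt_or_eq_of_le hjle with h | h
          · exact h
          · exfalso; rw [h] at hj1; omega
        have hj2 : nn < tms (fw y) (j + 1) := by
          by_cases hc2 : j + 1 ≤ J (fw y)
          · have hgt : ¬ tms (fw y) (j + 1) ≤ nn :=
              Nat.findGreatest_is_greatest (P := fun i => tms (fw y) i ≤ nn)
                (lt_add_one j) hc2
            omega
          · omega
        have hMj : nn - tms (fw y) j < M (idx (fw y) j) := by
          have hts := htmsS (fw y) j
          have hidxe : idx (fw y) j = sel ((T.toEquiv ^ (tms (fw y) j : ℤ)) (fw y)) := rfl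
          rw [hidxe]
          omega
        set m : ℕ := nn - tms (fw y) j with hmdef
        have hdy := hzfd (fw y) y j (hfwd y) hjJ m hMj
        have hdy' := hzfd (fw y) y' j hy'w hjJ m hMj
        rw [hz_eq j hjJ] at hdy
        have harith : tms (fw y) j + m = nn := by omega
        rw [harith] at hdy hdy'
        calc dist ((T.toEquiv ^ (nn : ℤ)) y) ((T.toEquiv ^ (nn : ℤ)) y')
            ≤ dist ((T.toEquiv ^ (nn : ℤ)) y) ((T.toEquiv ^ (m : ℤ)) (zf (fw y) y' j))
              + dist ((T.toEquiv ^ (m : ℤ)) (zf (fw y) y' j)) ((T.toEquiv ^ (nn : ℤ)) y') :=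
              dist_triangle _ _ _
          _ ≤ ε / 2 + ε / 2 := by
              rw [dist_comm ((T.toEquiv ^ (m : ℤ)) (zf (fw y) y' j))]
              exact add_le_add (le_of_lt hdy) (le_of_lt hdy')
          _ = ε := by ring
      · -- back segment
        set tJ : ℕ := tms (fw y) (J (fw y)) with htJ
        set m : ℕ := nn - tJ with hmdef
        have hmlt : m < Kmax + Mmax := by
          have := hJspec (fw y)
          omega
        have hq : (T.toEquiv ^ (m : ℤ)) ((T.toEquiv ^ (tJ : ℤ)) y)
            = (T.toEquiv ^ (nn : ℤ)) y := by
          rw [← zpowAdd T (m : ℤ) (tJ : ℤ) y,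
            show (m : ℤ) + (tJ : ℤ) = (nn : ℤ) by omega]
        have hq' : (T.toEquiv ^ (m : ℤ)) ((T.toEquiv ^ (tJ : ℤ)) y')
            = (T.toEquiv ^ (nn : ℤ)) y' := by
          rw [← zpowAdd T (m : ℤ) (tJ : ℤ) y',
            show (m : ℤ) + (tJ : ℤ) = (nn : ℤ) by omega]
        have hy1 := (dN_le_iff T (by linarith)).mp (hgbkd ((T.toEquiv ^ (tJ : ℤ)) y)) (m : ℤ)
          (Int.ofNat_nonneg m) (by exact_mod_cast hmlt)
        have hy2 := (dN_le_iff T (by linarith)).mp (hgbkd ((T.toEquiv ^ (tJ : ℤ)) y')) (m : ℤ)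
          (Int.ofNat_nonneg m) (by exact_mod_cast hmlt)
        rw [hq] at hy1
        rw [hq'] at hy2
        rw [← hgb_eq] at hy2
        calc dist ((T.toEquiv ^ (nn : ℤ)) y) ((T.toEquiv ^ (nn : ℤ)) y')
            ≤ dist ((T.toEquiv ^ (nn : ℤ)) y)
                ((T.toEquiv ^ (m : ℤ)) (gbk ((T.toEquiv ^ (tJ : ℤ)) y)))
              + dist ((T.toEquiv ^ (m : ℤ)) (gbk ((T.toEquiv ^ (tJ : ℤ)) y)))
                ((T.toEquiv ^ (nn : ℤ)) y') := dist_triangle _ _ _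
          _ ≤ ε / 2 + ε / 2 := by
              rw [dist_comm ((T.toEquiv ^ (m : ℤ)) (gbk ((T.toEquiv ^ (tJ : ℤ)) y)))]
              exact add_le_add hy1 hy2
          _ = ε := by ring
  have hspan_le := spanNum_le_fintype_card (ρ := dN T N) (K := (univ : Set X)) (ε := ε) code hfib
  -- cardinality computation
  have htm_sum : ∀ (w : X) (J0 : ℕ),
      tms w J0 = Kmax + ∑ j ∈ Finset.range J0, M (idx w j) := by
    intro w J0
    induction J0 with
    | zero => rw [htms0]; simp
    | succ j ih =>
        rw [Finset.sum_range_succ]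
        have hs := htmsS w j
        have hidxe : M (idx w j) = M (sel ((T.toEquiv ^ (tms w j : ℤ)) w)) := rfl
        omega
  have htmJ_le : ∀ w : X, tms w (J w) ≤ N + Kmax := by
    intro w
    rcases Nat.eq_zero_or_pos (J w) with h0 | hpos
    · rw [h0, htms0]; omega
    · obtain ⟨j, hj⟩ := Nat.exists_eq_succ_of_ne_zero hpos.ne'
      have h1 := hJmin w j (by omega)
      rw [hj, htmsS]
      have h2 := hMM ((T.toEquiv ^ (tms w j : ℤ)) w)
      omega
  have hsumM : ∀ w : X, ∑ j ∈ Finset.range (J w), M (idx w j) ≤ N := by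
    intro w
    have h1 := htm_sum w (J w)
    have h2 := htmJ_le w
    omega
  have hprod : ∀ w : {p // p ∈ F},
      (∏ j : Fin (J w.1), ((E (idx w.1 j.1)).card : ℝ)) ≤ Real.exp (N * aγ) := by
    intro w
    calc (∏ j : Fin (J w.1), ((E (idx w.1 j.1)).card : ℝ))
        ≤ ∏ j : Fin (J w.1), Real.exp ((M (idx w.1 j.1) : ℝ) * aγ) :=
          Finset.prod_le_prod (fun _ _ => Nat.cast_nonneg _) (fun j _ => hEcard _)
      _ = Real.exp (∑ j : Fin (J w.1), (M (idx w.1 j.1) : ℝ) * aγ) :=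
          (Real.exp_sum _ _).symm
      _ ≤ Real.exp ((N : ℝ) * aγ) := by
          apply Real.exp_le_exp.mpr
          have he1 : ∑ j : Fin (J w.1), (M (idx w.1 j.1) : ℝ) * aγ
              = ((∑ j ∈ Finset.range (J w.1), M (idx w.1 j) : ℕ) : ℝ) * aγ := by
            rw [← Finset.sum_mul]
            congr 1
            rw [← Fin.sum_univ_eq_sum_range (fun j => M (idx w.1 j)) (J w.1)]
            push_cast
            rfl
          rw [he1]
          apply mul_le_mul_of_nonneg_right _ haγ
          exact_mod_cast hsumM w.1
  have hGG : (0:ℝ) ≤ (G.card : ℝ) * (G'.card : ℝ) := mul_nonneg (Nat.cast_nonneg _) (Nat.cast_nonneg _)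
  calc (spanNum (dN T N) univ ε : ℝ)
      ≤ (Fintype.card (Σ w : {p // p ∈ F},
          ((∀ j : Fin (J w.1), {z // z ∈ E (idx w.1 j.1)}) × {g // g ∈ G} × {g // g ∈ G'})) : ℝ) := by
        exact_mod_cast hspan_le
    _ = ∑ w : {p // p ∈ F},
          ((∏ j : Fin (J w.1), ((E (idx w.1 j.1)).card : ℝ)) * ((G.card : ℝ) * (G'.card : ℝ))) := by
        rw [Fintype.card_sigma]
        push_cast
        refine Finset.sum_congr rfl fun w _ => ?_
        rw [Fintype.card_prod, Fintype.card_prod, Fintype.card_pi]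
        push_cast [Fintype.card_coe]
        ring
    _ ≤ ∑ w : {p // p ∈ F}, (Real.exp ((N:ℝ) * aγ) * ((G.card : ℝ) * (G'.card : ℝ))) := by
        refine Finset.sum_le_sum fun w _ => ?_
        exact mul_le_mul_of_nonneg_right (hprod w) hGG
    _ = (F.card : ℝ) * (Real.exp ((N:ℝ) * aγ) * ((G.card : ℝ) * (G'.card : ℝ))) := by
        rw [Finset.sum_const, Finset.card_univ, Fintype.card_coe, nsmul_eq_mul]
    _ = (G.card : ℝ) * (G'.card : ℝ) * (spanNum (dN T N) univ δ : ℝ) * Real.exp ((N:ℝ) * aγ) := by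
        rw [hFcard]
        ring

end StmtAux

theorem stmt2 {X : Type*} [MetricSpace X] [CompactSpace X] (T : X ≃ₜ X)
    (ε δ : ℝ) (hε : 0 < ε) (hδ : 0 < δ) :
    entS T univ ε ≤ entS T univ δ + ⨆ x : X, entS T (bowenBallZ T δ x) (ε / 4) := by
  classical
  open StmtAux in
  by_cases hempty : IsEmpty X
  · -- empty space : everything is zero
    have hzero : ∀ (K : Set X) (r : ℝ), entS T K r = 0 := by
      intro K r
      have hsp : ∀ N : ℕ, spanNum (dN T N) K r = 0 := by
        intro N
        have h0 : spanNum (dN T N) K r ≤ (∅ : Finset X).card :=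
          StmtAux.spanNum_le_card' (∅ : Finset X)
            (fun x _ => (hempty.false x).elim)
        simpa using h0
      have hfun : (fun N : ℕ => Real.log (spanNum (dN T N) K r) / N) = fun _ => (0:ℝ) := by
        funext N
        rw [hsp N]
        simp
      unfold entS
      rw [hfun]
      exact limsup_const 0
    rw [hzero univ ε, hzero univ δ]
    have : (⨆ x : X, entS T (bowenBallZ T δ x) (ε / 4)) = 0 := Real.iSup_of_isEmpty _
    rw [this]
    norm_num
  · haveI : Nonempty X := not_isEmpty_iff.mp hempty
    obtain ⟨c4, hc4, hb4⟩ := StmtAux.spanNum_exp_bound T (ε / 4) (by linarith)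
    obtain ⟨cδ, hcδ, hbδ⟩ := StmtAux.spanNum_exp_bound T δ hδ
    obtain ⟨cε, hcε, hbε⟩ := StmtAux.spanNum_exp_bound T ε hε
    set a := ⨆ x : X, entS T (bowenBallZ T δ x) (ε / 4) with ha
    have hBdd : BddAbove (range fun x : X => entS T (bowenBallZ T δ x) (ε / 4)) := by
      refine ⟨c4, ?_⟩
      rintro r ⟨x, rfl⟩
      exact StmtAux.entS_le_const T hc4 fun N => hb4 N _
    have ha_le : ∀ x : X, entS T (bowenBallZ T δ x) (ε / 4) ≤ a :=
      fun x => le_ciSup hBdd x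
    have ha0 : 0 ≤ a :=
      le_trans (StmtAux.entS_nonneg T (fun N => hb4 N _) hc4)
        (ha_le (Classical.arbitrary X))
    set b := entS T univ δ with hbdef
    refine le_of_forall_pos_le_add fun η hη => ?_
    set γ : ℝ := η / 3 with hγdef
    have hγ : 0 < γ := by positivity
    -- local spanning data
    have hloc : ∀ x : X, ∃ (M : ℕ) (E : Finset X), 1 ≤ M ∧
        ((E.card : ℝ) ≤ Real.exp (M * (a + γ))) ∧
        ∀ y ∈ bowenBallZ T δ x, ∃ z ∈ E, dN T M y z ≤ ε / 4 := by
      intro x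
      have hlt : limsup (fun N : ℕ =>
          Real.log (spanNum (dN T N) (bowenBallZ T δ x) (ε / 4)) / N) atTop < a + γ := by
        have := ha_le x
        have h2 : entS T (bowenBallZ T δ x) (ε / 4) < a + γ := by linarith
        exact h2
      have hbdd : IsBoundedUnder (· ≤ ·) atTop (fun N : ℕ =>
          Real.log (spanNum (dN T N) (bowenBallZ T δ x) (ε / 4)) / N) :=
        isBoundedUnder_of ⟨c4, fun N : ℕ => StmtAux.uFun_le T hc4 N (hb4 N _)⟩
      have hev := eventually_lt_of_limsup_lt hlt hbdd
      rw [eventually_atTop] at hev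
      obtain ⟨M0, hM0⟩ := hev
      set Mx : ℕ := max M0 1 with hMx
      have hMx1 : 1 ≤ Mx := le_max_right _ _
      have hMxpos : (0:ℝ) < (Mx : ℝ) := by exact_mod_cast hMx1
      have hu := hM0 Mx (le_max_left _ _)
      -- spanning sets exist
      obtain ⟨S1, hS1⟩ := StmtAux.exists_spanning_finset T Mx (ε / 4) (by linarith)
      have hSexists : ∃ S : Finset X, ∀ y ∈ bowenBallZ T δ x, ∃ z ∈ S, dN T Mx y z ≤ ε / 4 :=
        ⟨S1, fun y _ => hS1 y⟩
      have hn1 : 1 ≤ spanNum (dN T Mx) (bowenBallZ T δ x) (ε / 4) :=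
        StmtAux.one_le_spanNum ⟨x, StmtAux.self_mem_bowenBallZ T hδ.le x⟩ hSexists
      have hnpos : (0:ℝ) < (spanNum (dN T Mx) (bowenBallZ T δ x) (ε / 4) : ℝ) := by
        exact_mod_cast hn1
      have hlog : Real.log (spanNum (dN T Mx) (bowenBallZ T δ x) (ε / 4))
          ≤ (Mx : ℝ) * (a + γ) := by
        rw [div_lt_iff₀ hMxpos] at hu
        linarith
      have hcard : (spanNum (dN T Mx) (bowenBallZ T δ x) (ε / 4) : ℝ)
          ≤ Real.exp ((Mx : ℝ) * (a + γ)) := by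
        calc (spanNum (dN T Mx) (bowenBallZ T δ x) (ε / 4) : ℝ)
            = Real.exp (Real.log (spanNum (dN T Mx) (bowenBallZ T δ x) (ε / 4))) :=
              (Real.exp_log hnpos).symm
          _ ≤ Real.exp ((Mx : ℝ) * (a + γ)) := Real.exp_le_exp.mpr hlog
      obtain ⟨E, hEcard, hEspan⟩ := StmtAux.spanNum_spec hSexists
      refine ⟨Mx, E, hMx1, ?_, hEspan⟩
      rw [hEcard]
      exact_mod_cast hcard
    obtain ⟨C, hC1, hCb⟩ := StmtAux.key_count T hε hδ (by linarith) hloc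
    -- eventual bound
    have hδspan1 : ∀ N : ℕ, 1 ≤ spanNum (dN T N) univ δ := by
      intro N
      obtain ⟨S1, hS1⟩ := StmtAux.exists_spanning_finset T N δ hδ
      exact StmtAux.one_le_spanNum ⟨Classical.arbitrary X, Set.mem_univ _⟩ ⟨S1, fun y _ => hS1 y⟩
    have hev1 : ∀ᶠ N : ℕ in atTop,
        Real.log (spanNum (dN T N) univ δ) / N < b + γ := by
      apply eventually_lt_of_limsup_lt
      · show limsup _ atTop < b + γ
        have : b = limsup (fun N : ℕ => Real.log (spanNum (dN T N) univ δ) / N) atTop := rfl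
        rw [← this]
        linarith
      · exact isBoundedUnder_of ⟨cδ, fun N : ℕ => StmtAux.uFun_le T hcδ N (hbδ N _)⟩
    have hev2 : ∀ᶠ N : ℕ in atTop, Real.log C / N < γ :=
      (tendsto_const_div_atTop_nhds_zero_nat (Real.log C)).eventually_lt_const hγ
    have hev3 : ∀ᶠ N : ℕ in atTop, 1 ≤ N := eventually_ge_atTop 1
    have hfinal : ∀ᶠ N : ℕ in atTop,
        Real.log (spanNum (dN T N) univ ε) / N ≤ b + a + η := by
      filter_upwards [hev1, hev2, hev3] with N h1 h2 h3
      have hNpos : (0:ℝ) < (N : ℝ) := by exact_mod_cast h3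
      have hεspan1 : (1:ℝ) ≤ (spanNum (dN T N) univ ε : ℝ) := by
        obtain ⟨S1, hS1⟩ := StmtAux.exists_spanning_finset T N ε hε
        exact_mod_cast StmtAux.one_le_spanNum ⟨Classical.arbitrary X, Set.mem_univ _⟩
          ⟨S1, fun y _ => hS1 y⟩
      have hδpos : (0:ℝ) < (spanNum (dN T N) univ δ : ℝ) := by
        exact_mod_cast hδspan1 N
      have hCpos : (0:ℝ) < C := by linarith
      have hlogle : Real.log (spanNum (dN T N) univ ε)
          ≤ Real.log C + Real.log (spanNum (dN T N) univ δ) + (N : ℝ) * (a + γ) := by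
        have h4 := hCb N
        have h5 : Real.log (spanNum (dN T N) univ ε)
            ≤ Real.log (C * (spanNum (dN T N) univ δ : ℝ) * Real.exp ((N:ℝ) * (a + γ))) :=
          Real.log_le_log (by linarith) h4
        rw [Real.log_mul (by positivity) (Real.exp_ne_zero _),
          Real.log_mul (by positivity) (by positivity), Real.log_exp] at h5
        exact h5
      have hdd : Real.log (spanNum (dN T N) univ ε) / N
          ≤ Real.log C / N + Real.log (spanNum (dN T N) univ δ) / N + (a + γ) := by
        rw [div_le_iff₀ hNpos]
        have hexp : (Real.log C / N + Real.log (spanNum (dN T N) univ δ) / N + (a + γ)) * N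
            = Real.log C + Real.log (spanNum (dN T N) univ δ) + (N : ℝ) * (a + γ) := by
          field_simp
        rw [hexp]
        exact hlogle
      have : Real.log C / N + Real.log (spanNum (dN T N) univ δ) / N + (a + γ)
          ≤ γ + (b + γ) + (a + γ) := by
        have := le_of_lt h1
        have := le_of_lt h2
        linarith
      calc Real.log (spanNum (dN T N) univ ε) / N
          ≤ γ + (b + γ) + (a + γ) := le_trans hdd this
        _ = b + a + η := by rw [hγdef]; ring
    show limsup (fun N : ℕ => Real.log (spanNum (dN T N) univ ε) / N) atTop ≤ b + a + η
    apply limsup_le_of_le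
    · exact isCoboundedUnder_le_of_le atTop fun N : ℕ => StmtAux.uFun_nonneg T N
    · exact hfinal
end

section
/- Let (X,d) be a compact metric space and T: X → X a homeomorphism. For any δ > 0, the upper metric mean dimension satisfies mdim_M^upper(X, T, d) = limsup_{ε→0} [sup_{x∈X} S(B_δ(x, d_ℤ), ε)] / log(1/ε), and the analogous equality holds for the lower metric mean dimension with liminf in place of limsup. -/
open Filter Set MeasureTheory

section Aux
variable {X : Type*} [MetricSpace X] [CompactSpace X] (T : X ≃ₜ X)

lemma dist_bound : ∃ C : ℝ, 0 ≤ C ∧ ∀ p q : X, dist p q ≤ C := by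
  rcases Metric.isBounded_iff.1 ((isCompact_univ (X := X)).isBounded) with ⟨C, hC⟩
  exact ⟨max C 0, le_max_right _ _,
    fun p q => le_trans (hC (mem_univ p) (mem_univ q)) (le_max_left _ _)⟩

lemma cont_zpowT (n : ℤ) : Continuous fun x : X => (T.toEquiv ^ n) x := by
  induction n using Int.induction_on with
  | zero => simpa using continuous_id'
  | succ k ih =>
      have : ∀ x : X, (T.toEquiv ^ ((k : ℤ) + 1)) x = (T.toEquiv ^ (k : ℤ)) (T x) := by
        intro x
        rw [zpow_add_one]
        rfl
      simpa only [this] using ih.comp' T.continuous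
  | pred k ih =>
      have : ∀ x : X, (T.toEquiv ^ (-(k : ℤ) - 1)) x = (T.toEquiv ^ (-(k : ℤ))) (T.symm x) := by
        intro x
        rw [zpow_sub_one]
        have : (T.toEquiv)⁻¹ = T.symm.toEquiv := rfl
        rw [this]
        rfl
      simpa only [this] using ih.comp' T.symm.continuous

lemma zpowT_add (m n : ℤ) (x : X) :
    (T.toEquiv ^ (m + n)) x = (T.toEquiv ^ m) ((T.toEquiv ^ n) x) := by
  rw [zpow_add]; rfl

lemma bddAbove_distZ (Ω : Set ℤ) (x y : X) :
    BddAbove (Set.range fun n : Ω => dist ((T.toEquiv ^ (n : ℤ)) x) ((T.toEquiv ^ (n : ℤ)) y)) := by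
  obtain ⟨C, -, hC⟩ := dist_bound (X := X)
  exact ⟨C, by rintro - ⟨n, rfl⟩; exact hC _ _⟩

lemma dOmZ_le_iff {Ω : Set ℤ} {x y : X} {c : ℝ} (hc : 0 ≤ c) :
    dOmZ T Ω x y ≤ c ↔ ∀ n ∈ Ω, dist ((T.toEquiv ^ n) x) ((T.toEquiv ^ n) y) ≤ c := by
  constructor
  · intro h n hn
    exact le_trans (le_ciSup (bddAbove_distZ T Ω x y) ⟨n, hn⟩) h
  · intro h
    exact Real.iSup_le (fun i => h i i.2) hc

lemma dN_le_iff {N : ℕ} {x y : X} {c : ℝ} (hc : 0 ≤ c) :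
    dN T N x y ≤ c ↔
      ∀ k : ℕ, k < N → dist ((T.toEquiv ^ (k : ℤ)) x) ((T.toEquiv ^ (k : ℤ)) y) ≤ c := by
  rw [dN, dOmZ_le_iff T hc]
  constructor
  · intro h k hk
    exact h k ⟨Int.ofNat_nonneg k, by exact_mod_cast hk⟩
  · intro h n hn
    obtain ⟨hn1, hn2⟩ := hn
    have h1 : ((n.toNat : ℤ)) = n := Int.toNat_of_nonneg hn1
    have h2 : n.toNat < N := by omega
    simpa only [h1] using h n.toNat h2

lemma dN_comm (N : ℕ) (x y : X) : dN T N x y = dN T N y x := by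
  simp only [dN, dOmZ, dist_comm]

lemma dN_nonneg (N : ℕ) (x y : X) : 0 ≤ dN T N x y :=
  Real.iSup_nonneg fun _ => dist_nonneg

lemma mem_bowenBallZ_iff {δ : ℝ} (hδ : 0 ≤ δ) {x y : X} :
    y ∈ bowenBallZ T δ x ↔ ∀ n : ℤ, dist ((T.toEquiv ^ n) x) ((T.toEquiv ^ n) y) ≤ δ := by
  rw [bowenBallZ, mem_setOf_eq, dOmZ_le_iff T hδ]
  simp

lemma self_mem_bowenBallZ {δ : ℝ} (hδ : 0 ≤ δ) (x : X) : x ∈ bowenBallZ T δ x := by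
  rw [mem_bowenBallZ_iff T hδ]
  intro n; simpa using hδ

end Aux

section SpanNum
variable {X : Type*}

lemma spanNum_le_card {ρ : X → X → ℝ} {K : Set X} {ε : ℝ} (S : Finset X)
    (hS : ∀ x ∈ K, ∃ y ∈ S, ρ x y ≤ ε) : spanNum ρ K ε ≤ S.card :=
  Nat.sInf_le ⟨S, rfl, hS⟩

lemma spanNum_spec {ρ : X → X → ℝ} {K : Set X} {ε : ℝ} (S₀ : Finset X)
    (hS₀ : ∀ x ∈ K, ∃ y ∈ S₀, ρ x y ≤ ε) :
    ∃ S : Finset X, S.card = spanNum ρ K ε ∧ ∀ x ∈ K, ∃ y ∈ S, ρ x y ≤ ε := by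
  have h : {n : ℕ | ∃ S : Finset X, S.card = n ∧ ∀ x ∈ K, ∃ y ∈ S, ρ x y ≤ ε}.Nonempty :=
    ⟨S₀.card, S₀, rfl, hS₀⟩
  exact Nat.sInf_mem h

lemma one_le_spanNum {ρ : X → X → ℝ} {K : Set X} {ε : ℝ} (hK : K.Nonempty) (S₀ : Finset X)
    (hS₀ : ∀ x ∈ K, ∃ y ∈ S₀, ρ x y ≤ ε) : 1 ≤ spanNum ρ K ε := by
  obtain ⟨S, hcard, hS⟩ := spanNum_spec S₀ hS₀
  rcases Nat.eq_zero_or_pos (spanNum ρ K ε) with h0 | h1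
  · exfalso
    obtain ⟨x, hx⟩ := hK
    obtain ⟨y, hy, -⟩ := hS x hx
    rw [h0, Finset.card_eq_zero] at hcard
    simp [hcard] at hy
  · exact h1

lemma spanNum_mono_set {ρ : X → X → ℝ} {K K' : Set X} {ε : ℝ} (h : K ⊆ K') (S₀ : Finset X)
    (hS₀ : ∀ x ∈ K', ∃ y ∈ S₀, ρ x y ≤ ε) : spanNum ρ K ε ≤ spanNum ρ K' ε := by
  obtain ⟨S, hcard, hS⟩ := spanNum_spec S₀ hS₀
  exact hcard ▸ spanNum_le_card S (fun x hx => hS x (h hx))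

lemma exists_span_of_code {ρ : X → X → ℝ} {K : Set X} {ε : ℝ} {C : Type*} [Fintype C]
    (c : X → C) (hc : ∀ y ∈ K, ∀ y' ∈ K, c y = c y' → ρ y y' ≤ ε) :
    ∃ S : Finset X, S.card ≤ Fintype.card C ∧ ∀ x ∈ K, ∃ y ∈ S, ρ x y ≤ ε := by
  classical
  set f : C → Finset X := fun v => if h : ∃ y, y ∈ K ∧ c y = v then {h.choose} else ∅ with hf
  refine ⟨Finset.univ.biUnion f, ?_, ?_⟩
  · calc (Finset.univ.biUnion f).card ≤ ∑ v : C, (f v).card := Finset.card_biUnion_le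
      _ ≤ ∑ _v : C, 1 := by
          apply Finset.sum_le_sum
          intro v _
          by_cases h : ∃ y, y ∈ K ∧ c y = v
          · simp [hf, h]
          · simp [hf, h]
      _ = Fintype.card C := by simp
  · intro x hx
    have hex : ∃ y, y ∈ K ∧ c y = c x := ⟨x, hx, rfl⟩
    refine ⟨hex.choose, ?_, ?_⟩
    · apply Finset.mem_biUnion.2
      exact ⟨c x, Finset.mem_univ _, by simp [hf, dif_pos hex]⟩
    · exact hc x hx _ hex.choose_spec.1 hex.choose_spec.2.symm

end SpanNum

example : True := trivial

section Nets
variable {X : Type*} [MetricSpace X] [CompactSpace X] (T : X ≃ₜ X)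

lemma exists_net {r : ℝ} (hr : 0 < r) : ∃ A : Finset X, ∀ x : X, ∃ a ∈ A, dist x a ≤ r := by
  classical
  rcases Metric.totallyBounded_iff.1 ((isCompact_univ (X := X)).totallyBounded) r hr with
    ⟨t, htf, hcov⟩
  refine ⟨htf.toFinset, fun x => ?_⟩
  have := hcov (mem_univ x)
  rw [mem_iUnion₂] at this
  obtain ⟨a, hat, hball⟩ := this
  exact ⟨a, htf.mem_toFinset.2 hat, le_of_lt (Metric.mem_ball.1 hball)⟩

/-- Coding a set by a net at all times `k < N`. -/
lemma exists_span_dN {K : Set X} {r : ℝ} (A : Finset X)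
    (hA : ∀ x : X, ∃ a ∈ A, dist x a ≤ r / 2) (hr : 0 ≤ r) (N : ℕ) :
    ∃ S : Finset X, S.card ≤ A.card ^ N ∧ ∀ x ∈ K, ∃ y ∈ S, dN T N x y ≤ r := by
  classical
  rcases isEmpty_or_nonempty X with hX | hX
  · exact ⟨∅, by simp, fun x => (hX.false x).elim⟩
  have hAne : ∀ z : X, ∃ a : {a // a ∈ A}, dist z (a : X) ≤ r / 2 := by
    intro z; obtain ⟨a, ha, hd⟩ := hA z; exact ⟨⟨a, ha⟩, hd⟩
  set nc : X → {a // a ∈ A} := fun z => (hAne z).choose with hnc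
  have hncd : ∀ z : X, dist z ((nc z : X)) ≤ r / 2 := fun z => (hAne z).choose_spec
  set c : X → (Fin N → {a // a ∈ A}) := fun y k => nc ((T.toEquiv ^ ((k : ℕ) : ℤ)) y) with hc
  have hcode : ∀ y ∈ K, ∀ y' ∈ K, c y = c y' → dN T N y y' ≤ r := by
    intro y _ y' _ hcy
    rw [dN_le_iff T hr]
    intro k hk
    have h1 := hncd ((T.toEquiv ^ ((k : ℕ) : ℤ)) y)
    have h2 := hncd ((T.toEquiv ^ ((k : ℕ) : ℤ)) y')
    have heq : nc ((T.toEquiv ^ ((k : ℕ) : ℤ)) y) = nc ((T.toEquiv ^ ((k : ℕ) : ℤ)) y') :=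
      congrFun hcy ⟨k, hk⟩
    rw [heq] at h1
    calc dist ((T.toEquiv ^ ((k : ℕ) : ℤ)) y) ((T.toEquiv ^ ((k : ℕ) : ℤ)) y')
        ≤ dist ((T.toEquiv ^ ((k : ℕ) : ℤ)) y) ((nc ((T.toEquiv ^ ((k : ℕ) : ℤ)) y') : X))
          + dist ((nc ((T.toEquiv ^ ((k : ℕ) : ℤ)) y') : X)) ((T.toEquiv ^ ((k : ℕ) : ℤ)) y') :=
        dist_triangle _ _ _
      _ ≤ r / 2 + r / 2 := add_le_add h1 (by rw [dist_comm]; exact h2)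
      _ = r := by ring
  obtain ⟨S, hcard, hspan⟩ := exists_span_of_code (K := K) (ρ := dN T N) (ε := r) c hcode
  refine ⟨S, ?_, hspan⟩
  calc S.card ≤ Fintype.card (Fin N → {a // a ∈ A}) := hcard
    _ = A.card ^ N := by simp [Fintype.card_fun]

lemma exists_span_univ {r : ℝ} (hr : 0 < r) (N : ℕ) :
    ∃ S : Finset X, ∀ x : X, ∃ y ∈ S, dN T N x y ≤ r := by
  obtain ⟨A, hA⟩ := exists_net (X := X) (half_pos hr)
  obtain ⟨S, -, hS⟩ := exists_span_dN T (K := univ) A hA hr.le N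
  exact ⟨S, fun x => hS x (mem_univ x)⟩

end Nets

section EntS
variable {X : Type*} [MetricSpace X] [CompactSpace X] (T : X ≃ₜ X)

lemma log_nat_mono {m n : ℕ} (h : m ≤ n) : Real.log m ≤ Real.log n := by
  rcases Nat.eq_zero_or_pos m with h0 | h1
  · simp only [h0, Nat.cast_zero, Real.log_zero]
    rcases Nat.eq_zero_or_pos n with h0' | h1'
    · simp [h0']
    · exact Real.log_natCast_nonneg n
  · exact Real.log_le_log (by exact_mod_cast h1) (by exact_mod_cast h)

lemma seq_nonneg (K : Set X) (ε : ℝ) (N : ℕ) :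
    0 ≤ Real.log (spanNum (dN T N) K ε) / N :=
  div_nonneg (Real.log_natCast_nonneg _) (Nat.cast_nonneg N)

lemma seq_bound {K : Set X} {ε : ℝ} (A : Finset X) (hA : ∀ x : X, ∃ a ∈ A, dist x a ≤ ε / 2)
    (hε : 0 ≤ ε) (N : ℕ) :
    Real.log (spanNum (dN T N) K ε) / N ≤ Real.log A.card := by
  rcases Nat.eq_zero_or_pos N with h0 | h1
  · simp [h0, Real.log_natCast_nonneg]
  obtain ⟨S, hcard, hS⟩ := exists_span_dN T (K := K) A hA hε N
  have hsp : spanNum (dN T N) K ε ≤ A.card ^ N :=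
    le_trans (spanNum_le_card S hS) hcard
  have hlog : Real.log (spanNum (dN T N) K ε) ≤ N * Real.log A.card := by
    calc Real.log (spanNum (dN T N) K ε) ≤ Real.log ((A.card ^ N : ℕ) : ℝ) := log_nat_mono hsp
      _ = N * Real.log A.card := by
          rw [Nat.cast_pow, Real.log_pow]
  rw [div_le_iff₀ (by exact_mod_cast h1)]
  linarith [hlog]

lemma entS_nonneg (K : Set X) (ε : ℝ) : 0 ≤ entS T K ε := by
  rw [entS, limsup_eq]
  apply Real.sInf_nonneg
  intro a ha
  obtain ⟨N, hN⟩ := ha.exists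
  exact le_trans (seq_nonneg T K ε N) hN

lemma seq_isBounded {K : Set X} {ε : ℝ} (hε : 0 < ε) :
    IsBoundedUnder (· ≤ ·) atTop (fun N : ℕ => Real.log (spanNum (dN T N) K ε) / N) := by
  obtain ⟨A, hA⟩ := exists_net (X := X) (half_pos hε)
  exact isBoundedUnder_of ⟨Real.log A.card, seq_bound T A hA hε.le⟩

lemma seq_isCobounded (K : Set X) (ε : ℝ) :
    IsCoboundedUnder (· ≤ ·) atTop (fun N : ℕ => Real.log (spanNum (dN T N) K ε) / N) :=
  isCoboundedUnder_le_of_le atTop (fun N => seq_nonneg T K ε N)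

lemma entS_le_log (K : Set X) {ε : ℝ} (A : Finset X)
    (hA : ∀ x : X, ∃ a ∈ A, dist x a ≤ ε / 2) (hε : 0 ≤ ε) :
    entS T K ε ≤ Real.log A.card :=
  limsup_le_of_le (seq_isCobounded T K ε)
    (Filter.Eventually.of_forall (seq_bound T A hA hε))

lemma entS_mono {K K' : Set X} (h : K ⊆ K') {ε : ℝ} (hε : 0 < ε) :
    entS T K ε ≤ entS T K' ε := by
  apply limsup_le_limsup ?_ (seq_isCobounded T K ε) (seq_isBounded T hε)
  apply Filter.Eventually.of_forall
  intro N
  obtain ⟨S, hS⟩ := exists_span_univ T hε N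
  have hmono : spanNum (dN T N) K ε ≤ spanNum (dN T N) K' ε :=
    spanNum_mono_set h S (fun x _ => hS x)
  rcases Nat.eq_zero_or_pos N with h0 | h1
  · simp [h0]
  · exact (div_le_div_iff_of_pos_right (show (0:ℝ) < N by exact_mod_cast h1)).2 (log_nat_mono hmono)

end EntS

section PointData
variable {X : Type*} [MetricSpace X] [CompactSpace X] (T : X ≃ₜ X)

/-- Bowen's local lemma at one point. -/
lemma point_data {δ ε a H : ℝ} (hδ : 0 < δ) (hε : 0 < ε) (ha : 0 < a) (x : X)
    (hH : entS T (bowenBallZ T δ x) ε ≤ H) :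
    ∃ (Nx : ℕ) (Ex : Finset X) (mx : ℕ), 1 ≤ Nx ∧ Ex.Nonempty ∧
      ((Ex.card : ℝ) ≤ Real.exp ((H + a) * Nx)) ∧
      ∀ y : X, (∀ n : ℤ, n.natAbs ≤ mx → dist ((T.toEquiv ^ n) x) ((T.toEquiv ^ n) y) ≤ δ) →
        ∃ e ∈ Ex, ∀ k : ℕ, k < Nx →
          dist ((T.toEquiv ^ (k : ℤ)) y) ((T.toEquiv ^ (k : ℤ)) e) ≤ 2 * ε := by
  classical
  set Φ : Set X := bowenBallZ T δ x with hΦ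
  have hxΦ : x ∈ Φ := self_mem_bowenBallZ T hδ.le x
  have hlt : limsup (fun N : ℕ => Real.log (spanNum (dN T N) Φ ε) / N) atTop < H + a :=
    lt_of_le_of_lt hH (by linarith)
  have hev := eventually_lt_of_limsup_lt hlt (seq_isBounded T hε)
  obtain ⟨Nx, hNlt, hN1⟩ := (hev.and (eventually_ge_atTop 1)).exists
  obtain ⟨S₀, hS₀⟩ := exists_span_univ T hε Nx
  obtain ⟨E, hEcard, hE⟩ := spanNum_spec (ρ := dN T Nx) (K := Φ) (ε := ε) S₀ (fun z _ => hS₀ z)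
  have hr1 : 1 ≤ spanNum (dN T Nx) Φ ε := one_le_spanNum ⟨x, hxΦ⟩ S₀ (fun z _ => hS₀ z)
  have hEne : E.Nonempty := Finset.card_pos.1 (by omega)
  have hEbound : (E.card : ℝ) ≤ Real.exp ((H + a) * Nx) := by
    rw [hEcard]
    have hpos : (0 : ℝ) < (spanNum (dN T Nx) Φ ε : ℝ) := by exact_mod_cast hr1
    rw [← Real.log_le_iff_le_exp hpos]
    have hN0 : (0 : ℝ) < (Nx : ℝ) := by exact_mod_cast hN1
    have := (div_le_iff₀ hN0).1 hNlt.le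
    linarith [this]
  -- find the window size mx by contradiction
  by_cases hwin : ∃ mx : ℕ,
      ∀ y : X, (∀ n : ℤ, n.natAbs ≤ mx → dist ((T.toEquiv ^ n) x) ((T.toEquiv ^ n) y) ≤ δ) →
        ∃ e ∈ E, ∀ k : ℕ, k < Nx →
          dist ((T.toEquiv ^ (k : ℤ)) y) ((T.toEquiv ^ (k : ℤ)) e) ≤ 2 * ε
  · obtain ⟨mx, hmx⟩ := hwin
    exact ⟨Nx, E, mx, hN1, hEne, hEbound, hmx⟩
  exfalso
  push_neg at hwin
  choose ym hy using hwin
  obtain ⟨y, -, σ, hσ, hconv⟩ :=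
    (isCompact_univ (X := X)).tendsto_subseq (fun m => mem_univ (ym m))
  have hyΦ : y ∈ Φ := by
    rw [hΦ, mem_bowenBallZ_iff T hδ.le]
    intro n
    have htd : Tendsto (fun j => dist ((T.toEquiv ^ n) x) ((T.toEquiv ^ n) (ym (σ j)))) atTop
        (nhds (dist ((T.toEquiv ^ n) x) ((T.toEquiv ^ n) y))) :=
      tendsto_const_nhds.dist (((cont_zpowT T n).tendsto y).comp hconv)
    refine le_of_tendsto htd ?_
    filter_upwards [eventually_ge_atTop n.natAbs] with j hj
    exact (hy (σ j)).1 n (le_trans hj (hσ.le_apply))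
  obtain ⟨e, heE, hedN⟩ := hE y hyΦ
  have hedist : ∀ k : ℕ, k < Nx →
      dist ((T.toEquiv ^ (k : ℤ)) y) ((T.toEquiv ^ (k : ℤ)) e) ≤ ε :=
    (dN_le_iff T hε.le).1 hedN
  have hev2 : ∀ᶠ j in atTop, ∀ k ∈ Finset.range Nx,
      dist ((T.toEquiv ^ (k : ℤ)) (ym (σ j))) ((T.toEquiv ^ (k : ℤ)) y) ≤ ε := by
    rw [Filter.eventually_all_finset]
    intro k _
    have htd : Tendsto (fun j => dist ((T.toEquiv ^ (k : ℤ)) (ym (σ j)))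
        ((T.toEquiv ^ (k : ℤ)) y)) atTop (nhds 0) := by
      have h0 : dist ((T.toEquiv ^ (k : ℤ)) y) ((T.toEquiv ^ (k : ℤ)) y) = 0 := dist_self _
      have := (((cont_zpowT T (k : ℤ)).tendsto y).comp hconv).dist
        (tendsto_const_nhds (x := (T.toEquiv ^ (k : ℤ)) y))
      rwa [h0] at this
    exact htd.eventually_le_const hε
  obtain ⟨j, hj⟩ := hev2.exists
  obtain ⟨k, hkN, hkgt⟩ := (hy (σ j)).2 e heE
  have hle : dist ((T.toEquiv ^ (k : ℤ)) (ym (σ j))) ((T.toEquiv ^ (k : ℤ)) e) ≤ 2 * ε := by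
    have h1 := hj k (Finset.mem_range.2 hkN)
    have h2 := hedist k hkN
    have h3 := dist_triangle ((T.toEquiv ^ (k : ℤ)) (ym (σ j)))
      ((T.toEquiv ^ (k : ℤ)) y) ((T.toEquiv ^ (k : ℤ)) e)
    linarith
  exact absurd hle (not_le.2 hkgt)

end PointData

section Bowen
variable {X : Type*} [MetricSpace X] [CompactSpace X] (T : X ≃ₜ X)

lemma dN_le_iff_int {N : ℕ} {x y : X} {c : ℝ} (hc : 0 ≤ c) :
    dN T N x y ≤ c ↔
      ∀ n : ℤ, 0 ≤ n → n < (N : ℤ) →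
        dist ((T.toEquiv ^ n) x) ((T.toEquiv ^ n) y) ≤ c := by
  rw [dN, dOmZ_le_iff T hc]
  exact ⟨fun h n h1 h2 => h n ⟨h1, h2⟩, fun h n hn => h n hn.1 hn.2⟩

lemma bowen_key {δ ε : ℝ} (hδ : 0 < δ) (hε : 0 < ε) [Nonempty X] :
    entS T univ (4 * ε) ≤ entS T univ (δ / 2) + ⨆ x : X, entS T (bowenBallZ T δ x) ε := by
  classical
  set H : ℝ := ⨆ x : X, entS T (bowenBallZ T δ x) ε with hHdef
  set C : ℝ := entS T univ (δ / 2) with hCdef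
  obtain ⟨A₀, hA⟩ := exists_net (X := X) (half_pos hε)
  have hA₀pos : 0 < A₀.card := by
    obtain ⟨a₀, ha₀, -⟩ := hA (Classical.arbitrary X)
    exact Finset.card_pos.2 ⟨a₀, ha₀⟩
  have hA₀R : (0 : ℝ) < (A₀.card : ℝ) := by exact_mod_cast hA₀pos
  have hbddH : BddAbove (Set.range fun x : X => entS T (bowenBallZ T δ x) ε) := by
    refine ⟨Real.log A₀.card, ?_⟩
    rintro - ⟨z, rfl⟩
    exact entS_le_log T _ A₀ hA hε.le
  have key : ∀ a : ℝ, 0 < a → entS T univ (4 * ε) ≤ C + H + a := by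
    intro a ha
    have hHnn : 0 ≤ H := Real.iSup_nonneg fun x => entS_nonneg T _ ε
    have hHa : 0 ≤ H + a := by linarith
    choose Nx Ex mx hN1 hEne hEcard0 hP using fun x : X =>
      point_data T hδ hε ha x (le_ciSup hbddH x)
    have hEcard : ∀ x : X, ((Ex x).card : ℝ) ≤ Real.exp ((H + a) * (Nx x)) := by
      intro x
      rw [hHdef]
      exact hEcard0 x
    set V : X → Set X := fun x =>
      ⋂ n ∈ Finset.Icc (-(mx x : ℤ)) (mx x : ℤ),
        {y | dist ((T.toEquiv ^ n) x) ((T.toEquiv ^ n) y) < δ / 2} with hVdef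
    have hVopen : ∀ x, IsOpen (V x) := fun x =>
      isOpen_biInter_finset fun n _ =>
        isOpen_lt (continuous_const.dist (cont_zpowT T n)) continuous_const
    have hxV : ∀ x, x ∈ V x := by
      intro x
      rw [hVdef]
      refine mem_iInter₂.2 fun n _ => ?_
      simpa using half_pos hδ
    obtain ⟨s, hs⟩ := (isCompact_univ (X := X)).elim_finite_subcover V hVopen
      (fun z _ => mem_iUnion.2 ⟨z, hxV z⟩)
    have hidxex : ∀ z : X, ∃ x ∈ s, z ∈ V x := fun z => by
      simpa using hs (mem_univ z)
    choose idx hidx1 hidx2 using hidxex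
    set M : ℕ := s.sup mx with hMdef
    set L : ℕ := s.sup Nx with hLdef
    have hmM : ∀ z : X, mx (idx z) ≤ M := fun z => Finset.le_sup (hidx1 z)
    have hNL : ∀ z : X, Nx (idx z) ≤ L := fun z => Finset.le_sup (hidx1 z)
    -- the tube lemma
    have tube : ∀ (N : ℕ) (w : X), ∃ Sw : Finset X,
        ((Sw.card : ℝ) ≤ (A₀.card : ℝ) ^ (2 * M + L + 1) * Real.exp ((H + a) * N)) ∧
        ∀ y : X, dN T N w y ≤ δ / 2 → ∃ p ∈ Sw, dN T N y p ≤ 4 * ε := by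
      intro N w
      set K : Set X := {y | dN T N w y ≤ δ / 2} with hKdef
      set step : ℕ → ℕ := fun u => Nx (idx ((T.toEquiv ^ (u : ℤ)) w)) with hstepdef
      set EB : ℕ → Finset X := fun u => Ex (idx ((T.toEquiv ^ (u : ℤ)) w)) with hEBdef
      set t : ℕ → ℕ := fun j => Nat.rec M (fun _ tj => tj + step tj) j with htdef
      have ht0 : t 0 = M := rfl
      have htsucc : ∀ j, t (j + 1) = t j + step (t j) := fun _ => rfl
      have hstep1 : ∀ u, 1 ≤ step u := fun _ => hN1 _
      have hstepL : ∀ u, step u ≤ L := fun _ => hNL _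
      have htj : ∀ j, M + j ≤ t j := by
        intro j
        induction j with
        | zero => simp [ht0]
        | succ j ih => have h1 := hstep1 (t j); have h2 := htsucc j; omega
      have hex : ∃ j, N ≤ t j + M + L := ⟨N, by have := htj N; omega⟩
      set J : ℕ := Nat.find hex with hJdef
      have hJspec : N ≤ t J + M + L := Nat.find_spec hex
      have hJmin : ∀ j, j < J → t j + M + L < N := by
        intro j hj
        have := Nat.find_min hex hj
        omega
      -- block data for points of the tube
      have hblock : ∀ y ∈ K, ∀ j, j < J →
          ∃ e ∈ EB (t j), ∀ k : ℕ, k < step (t j) →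
            dist ((T.toEquiv ^ ((t j + k : ℕ) : ℤ)) y) ((T.toEquiv ^ (k : ℤ)) e) ≤ 2 * ε := by
        intro y hy j hj
        set z : X := (T.toEquiv ^ ((t j : ℕ) : ℤ)) w with hzdef
        have hpre : ∀ n : ℤ, n.natAbs ≤ mx (idx z) →
            dist ((T.toEquiv ^ n) (idx z)) ((T.toEquiv ^ n) ((T.toEquiv ^ ((t j : ℕ) : ℤ)) y))
              ≤ δ := by
          intro n hn
          have h1 : dist ((T.toEquiv ^ n) (idx z)) ((T.toEquiv ^ n) z) < δ / 2 := by
            have hmem := hidx2 z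
            rw [hVdef] at hmem
            have hnmem : n ∈ Finset.Icc (-(mx (idx z) : ℤ)) (mx (idx z) : ℤ) := by
              rw [Finset.mem_Icc]; omega
            exact mem_iInter₂.1 hmem n hnmem
          have h2 : dist ((T.toEquiv ^ n) z)
              ((T.toEquiv ^ n) ((T.toEquiv ^ ((t j : ℕ) : ℤ)) y)) ≤ δ / 2 := by
            rw [hzdef, ← zpowT_add, ← zpowT_add]
            have hmMz := hmM z
            have htjj := htj j
            have hJm := hJmin j hj
            have hq0 : 0 ≤ n + ((t j : ℕ) : ℤ) := by omega
            have hqN : n + ((t j : ℕ) : ℤ) < (N : ℤ) := by omega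
            exact (dN_le_iff_int T (by linarith : (0:ℝ) ≤ δ / 2)).1 hy _ hq0 hqN
          have htri := dist_triangle ((T.toEquiv ^ n) (idx z)) ((T.toEquiv ^ n) z)
            ((T.toEquiv ^ n) ((T.toEquiv ^ ((t j : ℕ) : ℤ)) y))
          linarith
        obtain ⟨e, heE, hek⟩ := hP (idx z) ((T.toEquiv ^ ((t j : ℕ) : ℤ)) y) hpre
        refine ⟨e, heE, fun k hk => ?_⟩
        have hcast : ((t j + k : ℕ) : ℤ) = (k : ℤ) + ((t j : ℕ) : ℤ) := by push_cast; ring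
        rw [hcast, zpowT_add]
        exact hek k hk
      -- the coding functions
      have hAne : ∀ z : X, ∃ a' : {a' // a' ∈ A₀}, dist z (a' : X) ≤ ε / 2 := by
        intro z; obtain ⟨a', ha', hd⟩ := hA z; exact ⟨⟨a', ha'⟩, hd⟩
      set nc : X → {a' // a' ∈ A₀} := fun z => (hAne z).choose with hncdef
      have hncd : ∀ z : X, dist z ((nc z : X)) ≤ ε / 2 := fun z => (hAne z).choose_spec
      set bt : ℕ → ℕ := fun r => if r < M then r else t J + (r - M) with hbtdef
      set blkf : X → ℕ → X := fun y u =>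
        if h : ∃ e ∈ EB u, ∀ k : ℕ, k < step u →
            dist ((T.toEquiv ^ ((u + k : ℕ) : ℤ)) y) ((T.toEquiv ^ (k : ℤ)) e) ≤ 2 * ε
        then h.choose else (hEne (idx ((T.toEquiv ^ (u : ℤ)) w))).choose with hblkfdef
      have hblkmem : ∀ y u, blkf y u ∈ EB u := by
        intro y u
        by_cases h : ∃ e ∈ EB u, ∀ k : ℕ, k < step u →
            dist ((T.toEquiv ^ ((u + k : ℕ) : ℤ)) y) ((T.toEquiv ^ (k : ℤ)) e) ≤ 2 * ε
        · simp only [hblkfdef, dif_pos h]; exact h.choose_spec.1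
        · simp only [hblkfdef, dif_neg h]; exact (hEne _).choose_spec
      have hblkprop : ∀ y u,
          (∃ e ∈ EB u, ∀ k : ℕ, k < step u →
            dist ((T.toEquiv ^ ((u + k : ℕ) : ℤ)) y) ((T.toEquiv ^ (k : ℤ)) e) ≤ 2 * ε) →
          ∀ k : ℕ, k < step u →
            dist ((T.toEquiv ^ ((u + k : ℕ) : ℤ)) y) ((T.toEquiv ^ (k : ℤ)) (blkf y u)) ≤ 2 * ε := by
        intro y u h
        simp only [hblkfdef, dif_pos h]
        exact h.choose_spec.2
      set c : X → (Fin (2 * M + L + 1) → {a' // a' ∈ A₀})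
          × (∀ j : Fin J, {e // e ∈ EB (t (j : ℕ))}) :=
        fun y => (fun r => nc ((T.toEquiv ^ ((bt (r : ℕ) : ℕ) : ℤ)) y),
                  fun j => ⟨blkf y (t (j : ℕ)), hblkmem y (t (j : ℕ))⟩) with hcdef
      have hcode : ∀ y ∈ K, ∀ y' ∈ K, c y = c y' → dN T N y y' ≤ 4 * ε := by
        intro y hy y' hy' hEq
        rw [dN_le_iff_int T (by linarith : (0:ℝ) ≤ 4 * ε)]
        intro n hn0 hnN
        set u : ℕ := n.toNat with hudef
        have hun : ((u : ℕ) : ℤ) = n := Int.toNat_of_nonneg hn0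
        have huN : u < N := by omega
        by_cases hcase : u < M ∨ t J ≤ u
        · -- boundary times
          have hrex : ∃ r : ℕ, r < 2 * M + L + 1 ∧ bt r = u := by
            rcases hcase with h | h
            · exact ⟨u, by omega, by simp [hbtdef, h]⟩
            · refine ⟨M + (u - t J), by omega, ?_⟩
              have hnot : ¬(M + (u - t J) < M) := by omega
              simp only [hbtdef, if_neg hnot]
              omega
          obtain ⟨r, hr, hbtr⟩ := hrex
          have h2 : (nc ((T.toEquiv ^ ((bt r : ℕ) : ℤ)) y) : X)
              = (nc ((T.toEquiv ^ ((bt r : ℕ) : ℤ)) y') : X) :=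
            congrArg Subtype.val (congrFun (congrArg Prod.fst hEq) ⟨r, hr⟩)
          have d1 := hncd ((T.toEquiv ^ ((bt r : ℕ) : ℤ)) y)
          have d2 := hncd ((T.toEquiv ^ ((bt r : ℕ) : ℤ)) y')
          rw [h2] at d1
          have htri := dist_triangle ((T.toEquiv ^ ((bt r : ℕ) : ℤ)) y)
            ((nc ((T.toEquiv ^ ((bt r : ℕ) : ℤ)) y') : X)) ((T.toEquiv ^ ((bt r : ℕ) : ℤ)) y')
          rw [dist_comm ((nc ((T.toEquiv ^ ((bt r : ℕ) : ℤ)) y') : X))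
            ((T.toEquiv ^ ((bt r : ℕ) : ℤ)) y')] at htri
          have hfin : dist ((T.toEquiv ^ ((bt r : ℕ) : ℤ)) y) ((T.toEquiv ^ ((bt r : ℕ) : ℤ)) y')
              ≤ 4 * ε := by linarith
          rwa [hbtr, hun] at hfin
        · -- interior times
          push_neg at hcase
          obtain ⟨huM, hutJ⟩ := hcase
          set j : ℕ := Nat.findGreatest (fun j => t j ≤ u) J with hjdef
          have hjP : t j ≤ u := by
            rw [hjdef]
            exact Nat.findGreatest_spec (P := fun j => t j ≤ u) (Nat.zero_le J) (show t 0 ≤ u by rw [ht0]; exact huM)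
          have hjle : j ≤ J := by rw [hjdef]; exact Nat.findGreatest_le J
          have hjJ : j < J := by
            rcases lt_or_eq_of_le hjle with h | h
            · exact h
            · exfalso; rw [h] at hjP; omega
          have hjlt : u < t (j + 1) := by
            by_contra hcon
            push_neg at hcon
            have hltg : Nat.findGreatest (fun j => t j ≤ u) J < j + 1 := by
              rw [hjdef]
              exact Nat.lt_succ_self _
            exact Nat.findGreatest_is_greatest (P := fun j => t j ≤ u) hltg hjJ hcon
          set k : ℕ := u - t j with hkdef
          have hk : k < step (t j) := by
            have := htsucc j
            omega
          have hPy := hblock y hy j hjJ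
          have hPy' := hblock y' hy' j hjJ
          have heq : blkf y (t j) = blkf y' (t j) :=
            congrArg Subtype.val (congrFun (congrArg Prod.snd hEq) ⟨j, hjJ⟩)
          have d1 := hblkprop y (t j) hPy k hk
          have d2 := hblkprop y' (t j) hPy' k hk
          rw [heq] at d1
          have htri := dist_triangle ((T.toEquiv ^ ((t j + k : ℕ) : ℤ)) y)
            ((T.toEquiv ^ (k : ℤ)) (blkf y' (t j)))
            ((T.toEquiv ^ ((t j + k : ℕ) : ℤ)) y')
          rw [dist_comm ((T.toEquiv ^ (k : ℤ)) (blkf y' (t j)))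
            ((T.toEquiv ^ ((t j + k : ℕ) : ℤ)) y')] at htri
          have hfin : dist ((T.toEquiv ^ ((t j + k : ℕ) : ℤ)) y)
              ((T.toEquiv ^ ((t j + k : ℕ) : ℤ)) y') ≤ 4 * ε := by linarith
          have hcast : ((t j + k : ℕ) : ℤ) = n := by omega
          rwa [hcast] at hfin
      obtain ⟨Sw, hSwcard, hSwspan⟩ := exists_span_of_code (K := K) (ρ := dN T N)
        (ε := 4 * ε) c hcode
      refine ⟨Sw, ?_, fun y hy => hSwspan y hy⟩
      have hsum : M + ∑ j ∈ Finset.range J, step (t j) = t J := by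
        induction J with
        | zero => simp [ht0]
        | succ j ih => rw [Finset.sum_range_succ, htsucc]; omega
      have hsumN : ∑ j ∈ Finset.range J, step (t j) ≤ N := by
        rcases Nat.eq_zero_or_pos J with h0 | h1
        · simp [h0]
        · have hJ1 : J - 1 < J := by omega
          have hmin := hJmin (J - 1) hJ1
          have hstepb := hstepL (t (J - 1))
          have hts : t J = t (J - 1) + step (t (J - 1)) := by
            have h2 := htsucc (J - 1)
            have h3 : J - 1 + 1 = J := by omega
            rw [h3] at h2
            exact h2
          omega
      have hfin_eq : ∑ j : Fin J, step (t (j : ℕ)) = ∑ j ∈ Finset.range J, step (t j) :=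
        Fin.sum_univ_eq_sum_range (fun u => step (t u)) J
      have hcardC : ((Fintype.card ((Fin (2 * M + L + 1) → {a' // a' ∈ A₀})
          × (∀ j : Fin J, {e // e ∈ EB (t (j : ℕ))}))) : ℝ)
          ≤ (A₀.card : ℝ) ^ (2 * M + L + 1) * Real.exp ((H + a) * N) := by
        have hc1 : Fintype.card ((Fin (2 * M + L + 1) → {a' // a' ∈ A₀})
            × (∀ j : Fin J, {e // e ∈ EB (t (j : ℕ))}))
            = A₀.card ^ (2 * M + L + 1) * ∏ j : Fin J, (EB (t (j : ℕ))).card := by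
          rw [Fintype.card_prod, Fintype.card_fun, Fintype.card_pi]
          simp [Fintype.card_coe]
        rw [hc1]
        push_cast
        have hEBcard : ∀ u : ℕ, ((EB u).card : ℝ) ≤ Real.exp ((H + a) * (step u)) := by
          intro u
          simp only [hEBdef, hstepdef]
          exact hEcard _
        have hprod : (∏ j : Fin J, ((EB (t (j : ℕ))).card : ℝ))
            ≤ Real.exp ((H + a) * N) := by
          calc (∏ j : Fin J, ((EB (t (j : ℕ))).card : ℝ))
              ≤ ∏ j : Fin J, Real.exp ((H + a) * (step (t (j : ℕ)) : ℝ)) := by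
                apply Finset.prod_le_prod
                · intro j _; exact Nat.cast_nonneg _
                · intro j _; exact hEBcard _
            _ = Real.exp (∑ j : Fin J, (H + a) * (step (t (j : ℕ)) : ℝ)) := by
                rw [Real.exp_sum]
            _ ≤ Real.exp ((H + a) * N) := by
                apply Real.exp_le_exp.2
                rw [← Finset.mul_sum]
                apply mul_le_mul_of_nonneg_left ?_ hHa
                have hcast2 : (∑ j : Fin J, ((step (t (j : ℕ))) : ℝ))
                    = ((∑ j : Fin J, step (t (j : ℕ)) : ℕ) : ℝ) := by push_cast; ring
                rw [hcast2, hfin_eq]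
                exact_mod_cast hsumN
        exact mul_le_mul_of_nonneg_left hprod (pow_nonneg (Nat.cast_nonneg _) _)
      exact le_trans (by exact_mod_cast hSwcard) hcardC
    -- assemble
    have main : ∀ N : ℕ, 1 ≤ N →
        Real.log (spanNum (dN T N) (univ : Set X) (4 * ε)) / N
          ≤ Real.log (spanNum (dN T N) (univ : Set X) (δ / 2)) / N
            + (((2 * M + L + 1) : ℕ) * Real.log A₀.card) / N + (H + a) := by
      intro N hN1'
      choose Sw hSwcard hSwspan using tube N
      obtain ⟨S₀, hS₀⟩ := exists_span_univ T (half_pos hδ) N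
      obtain ⟨W, hWcard, hWspan⟩ := spanNum_spec (ρ := dN T N) (K := (univ : Set X))
        (ε := δ / 2) S₀ (fun z _ => hS₀ z)
      set B : ℝ := (A₀.card : ℝ) ^ (2 * M + L + 1) * Real.exp ((H + a) * N) with hBdef
      have hBpos : 0 < B := mul_pos (pow_pos hA₀R _) (Real.exp_pos _)
      have hspan4 : ∀ y : X, ∃ p ∈ W.biUnion Sw, dN T N y p ≤ 4 * ε := by
        intro y
        obtain ⟨w, hwW, hwd⟩ := hWspan y (mem_univ y)
        obtain ⟨p, hp, hpd⟩ := hSwspan w y (by rw [dN_comm]; exact hwd)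
        exact ⟨p, Finset.mem_biUnion.2 ⟨w, hwW, hp⟩, hpd⟩
      have hr4 : (spanNum (dN T N) (univ : Set X) (4 * ε) : ℝ) ≤ (W.card : ℝ) * B := by
        have h1 : spanNum (dN T N) (univ : Set X) (4 * ε) ≤ (W.biUnion Sw).card :=
          spanNum_le_card _ (fun y _ => hspan4 y)
        have h2 : ((W.biUnion Sw).card : ℝ) ≤ ∑ w ∈ W, ((Sw w).card : ℝ) := by
          exact_mod_cast Nat.cast_le.2 (Finset.card_biUnion_le)
        have h3 : ∑ w ∈ W, ((Sw w).card : ℝ) ≤ ∑ _w ∈ W, B :=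
          Finset.sum_le_sum (fun w _ => hSwcard w)
        have h4 : ∑ _w ∈ W, B = (W.card : ℝ) * B := by
          rw [Finset.sum_const, nsmul_eq_mul]
        calc (spanNum (dN T N) (univ : Set X) (4 * ε) : ℝ)
            ≤ ((W.biUnion Sw).card : ℝ) := by exact_mod_cast Nat.cast_le.2 h1
          _ ≤ ∑ w ∈ W, ((Sw w).card : ℝ) := h2
          _ ≤ ∑ _w ∈ W, B := h3
          _ = (W.card : ℝ) * B := h4
      have hW1 : 1 ≤ W.card := by
        rw [hWcard]
        exact one_le_spanNum ⟨Classical.arbitrary X, mem_univ _⟩ S₀ (fun z _ => hS₀ z)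
      have hW0 : (W.card : ℝ) ≠ 0 := by
        have : (0 : ℝ) < (W.card : ℝ) := by exact_mod_cast hW1
        exact ne_of_gt this
      have hr41 : 1 ≤ spanNum (dN T N) (univ : Set X) (4 * ε) := by
        obtain ⟨S₄, hS₄⟩ := exists_span_univ T (by linarith : (0:ℝ) < 4 * ε) N
        exact one_le_spanNum ⟨Classical.arbitrary X, mem_univ _⟩ S₄ (fun z _ => hS₄ z)
      have hlog : Real.log (spanNum (dN T N) (univ : Set X) (4 * ε))
          ≤ Real.log (W.card : ℝ) + (((2 * M + L + 1) : ℕ) : ℝ) * Real.log A₀.card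
            + (H + a) * N := by
        have hstep2 : Real.log (spanNum (dN T N) (univ : Set X) (4 * ε))
            ≤ Real.log ((W.card : ℝ) * B) :=
          Real.log_le_log (by exact_mod_cast hr41) hr4
        rw [hBdef, Real.log_mul hW0 (ne_of_gt (mul_pos (pow_pos hA₀R _) (Real.exp_pos _))),
          Real.log_mul (ne_of_gt (pow_pos hA₀R _)) (Real.exp_ne_zero _),
          Real.log_pow, Real.log_exp] at hstep2
        linarith
      have hNpos : (0 : ℝ) < (N : ℝ) := by exact_mod_cast hN1'
      rw [hWcard] at hlog
      have h5 := (div_le_div_iff_of_pos_right hNpos).2 hlog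
      calc Real.log (spanNum (dN T N) (univ : Set X) (4 * ε)) / N
          ≤ (Real.log (spanNum (dN T N) (univ : Set X) (δ / 2))
              + (((2 * M + L + 1) : ℕ) : ℝ) * Real.log A₀.card + (H + a) * N) / N := h5
        _ = Real.log (spanNum (dN T N) (univ : Set X) (δ / 2)) / N
            + ((((2 * M + L + 1) : ℕ) : ℝ) * Real.log A₀.card) / N + (H + a) := by
            field_simp
    -- limsup step
    have hfin : ∀ c2 : ℝ, 0 < c2 → entS T univ (4 * ε) ≤ C + H + a + 2 * c2 := by
      intro c2 hc2
      have hev1 : ∀ᶠ N : ℕ in atTop,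
          Real.log (spanNum (dN T N) (univ : Set X) (δ / 2)) / N < C + c2 := by
        apply eventually_lt_of_limsup_lt ?_ (seq_isBounded T (half_pos hδ))
        change entS T univ (δ / 2) < C + c2
        rw [hCdef]
        linarith
      have hev2 : ∀ᶠ N : ℕ in atTop,
          ((((2 * M + L + 1) : ℕ) : ℝ) * Real.log A₀.card) / N < c2 :=
        (tendsto_const_div_atTop_nhds_zero_nat _).eventually_lt_const hc2
      have hev : ∀ᶠ N : ℕ in atTop,
          Real.log (spanNum (dN T N) (univ : Set X) (4 * ε)) / N ≤ C + H + a + 2 * c2 := by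
        filter_upwards [hev1, hev2, eventually_ge_atTop 1] with N h1 h2 h3
        have := main N h3
        linarith
      exact limsup_le_of_le (seq_isCobounded T _ _) hev
    apply le_of_forall_pos_le_add
    intro θ hθ
    have := hfin (θ / 2) (by linarith)
    linarith
  have : entS T univ (4 * ε) ≤ (C + H) := by
    apply le_of_forall_pos_le_add
    intro a ha
    have := key a ha
    linarith
  linarith

end Bowen

section FilterLemmas
open Filter

lemma ev_posIoi_iff {p : ℝ → Prop} :
    (∀ᶠ ε in nhdsWithin (0:ℝ) (Set.Ioi 0), p ε) ↔
      ∃ η : ℝ, 0 < η ∧ ∀ ε : ℝ, 0 < ε → ε < η → p ε := by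
  rw [eventually_nhdsWithin_iff, Metric.eventually_nhds_iff]
  constructor
  · rintro ⟨η, hη, h⟩
    refine ⟨η, hη, fun ε h1 h2 => ?_⟩
    exact h (by rw [Real.dist_eq, sub_zero, abs_of_pos h1]; exact h2) h1
  · rintro ⟨η, hη, h⟩
    refine ⟨η, hη, fun y hy hy0 => ?_⟩
    have hy0' : (0:ℝ) < y := hy0
    rw [Real.dist_eq, sub_zero, abs_of_pos hy0'] at hy
    exact h y hy0' hy

lemma limsup_eq_limsup_of_approx {F : Filter ℝ} [F.NeBot] {u v : ℝ → ℝ}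
    (h1 : ∀ᶠ ε in F, 0 ≤ u ε) (h2 : ∀ᶠ ε in F, u ε ≤ v ε)
    (h3 : ∀ b κ : ℝ, (∀ᶠ ε in F, u ε ≤ b) → 0 ≤ b → 0 < κ → (∀ᶠ ε in F, v ε ≤ b + κ)) :
    limsup v F = limsup u F := by
  rw [limsup_eq, limsup_eq]
  set Su : Set ℝ := {b | ∀ᶠ ε in F, u ε ≤ b} with hSu
  set Sv : Set ℝ := {b | ∀ᶠ ε in F, v ε ≤ b} with hSv
  have hSvSu : Sv ⊆ Su := by
    intro b hb
    exact (h2.and hb).mono fun ε h => le_trans h.1 h.2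
  have hSu0 : ∀ b ∈ Su, 0 ≤ b := by
    intro b hb
    obtain ⟨ε, hε1, hε2⟩ := (h1.and hb).exists
    linarith
  have hstep : ∀ b ∈ Su, ∀ κ : ℝ, 0 < κ → b + κ ∈ Sv := by
    intro b hb κ hκ
    exact h3 b κ hb (hSu0 b hb) hκ
  rcases Set.eq_empty_or_nonempty Su with hSuE | hSuN
  · have hSvE : Sv = ∅ := Set.eq_empty_of_subset_empty (hSuE ▸ hSvSu)
    rw [hSuE, hSvE]
  · obtain ⟨b0, hb0⟩ := id hSuN
    have hSvN : Sv.Nonempty := ⟨b0 + 1, hstep b0 hb0 1 one_pos⟩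
    have hbbSu : BddBelow Su := ⟨0, fun b hb => hSu0 b hb⟩
    have hbbSv : BddBelow Sv := ⟨0, fun b hb => hSu0 b (hSvSu hb)⟩
    apply le_antisymm
    · apply le_of_forall_pos_le_add
      intro κ hκ
      obtain ⟨b, hbSu, hblt⟩ := exists_lt_of_csInf_lt hSuN
        (lt_add_of_pos_right (sInf Su) (half_pos hκ))
      have : b + κ / 2 ∈ Sv := hstep b hbSu (κ / 2) (half_pos hκ)
      have h4 : sInf Sv ≤ b + κ / 2 := csInf_le hbbSv this
      linarith
    · exact csInf_le_csInf hbbSu hSvN hSvSu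

lemma liminf_eq_liminf_of_approx {F : Filter ℝ} [F.NeBot] {u v : ℝ → ℝ}
    (h1 : ∀ᶠ ε in F, 0 ≤ u ε) (h2 : ∀ᶠ ε in F, u ε ≤ v ε)
    (h3 : ∀ b κ : ℝ, (∀ᶠ ε in F, b ≤ v ε) → 0 < κ → (∀ᶠ ε in F, b - κ ≤ u ε)) :
    liminf v F = liminf u F := by
  rw [liminf_eq, liminf_eq]
  set Tu : Set ℝ := {b | ∀ᶠ ε in F, b ≤ u ε} with hTu
  set Tv : Set ℝ := {b | ∀ᶠ ε in F, b ≤ v ε} with hTv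
  have hTuTv : Tu ⊆ Tv := by
    intro b hb
    exact (h2.and hb).mono fun ε h => le_trans h.2 h.1
  have hTuN : Tu.Nonempty := ⟨-1, h1.mono fun ε h => by linarith⟩
  have hTvN : Tv.Nonempty := ⟨-1, hTuTv (h1.mono fun ε h => by linarith)⟩
  by_cases hbdd : BddAbove Tv
  · have hbddTu : BddAbove Tu := hbdd.mono hTuTv
    apply le_antisymm
    · apply le_of_forall_pos_le_add
      intro κ hκ
      obtain ⟨b, hbTv, hblt⟩ := exists_lt_of_lt_csSup hTvN
        (sub_lt_self (sSup Tv) (half_pos hκ))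
      have hmem : b - κ / 2 ∈ Tu := h3 b (κ / 2) hbTv (half_pos hκ)
      have h4 : b - κ / 2 ≤ sSup Tu := le_csSup hbddTu hmem
      linarith
    · exact csSup_le_csSup hbdd hTuN hTuTv
  · have hbddTu : ¬ BddAbove Tu := by
      intro hcon
      apply hbdd
      obtain ⟨bu, hbu⟩ := hcon
      refine ⟨bu + 1, fun b hb => ?_⟩
      have : b - 1 ∈ Tu := h3 b 1 hb one_pos
      have := hbu this
      linarith
    rw [Real.sSup_of_not_bddAbove hbdd, Real.sSup_of_not_bddAbove hbddTu]

end FilterLemmas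

section Master
variable {X : Type*} [MetricSpace X] [CompactSpace X] (T : X ≃ₜ X)

/-- Master pointwise inequality: `v ε ≤ u(ε/4) + (C + u(ε/4)·log 4)/L(ε)`. -/
lemma v_le_aux {δ : ℝ} (hδ : 0 < δ) [Nonempty X] (ε : ℝ) (hε : 0 < ε) (hε1 : ε < 1) :
    entS T univ ε / Real.log (1 / ε) ≤
      (⨆ x : X, entS T (bowenBallZ T δ x) (ε / 4)) / Real.log (1 / (ε / 4))
        + (entS T univ (δ / 2)
            + ((⨆ x : X, entS T (bowenBallZ T δ x) (ε / 4)) / Real.log (1 / (ε / 4)))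
              * Real.log 4) / Real.log (1 / ε) := by
  set C : ℝ := entS T univ (δ / 2) with hCdef
  set g4 : ℝ := ⨆ x : X, entS T (bowenBallZ T δ x) (ε / 4) with hg4def
  set Lε : ℝ := Real.log (1 / ε) with hLdef
  set L4 : ℝ := Real.log (1 / (ε / 4)) with hL4def
  set u4 : ℝ := g4 / L4 with hu4def
  have hLeq : Lε = -Real.log ε := by rw [hLdef, one_div, Real.log_inv]
  have hLpos : 0 < Lε := by
    rw [hLeq]
    have := Real.log_neg hε hε1
    linarith
  have hL4eq : L4 = Lε + Real.log 4 := by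
    rw [hL4def, one_div_div, Real.log_div (by norm_num : (4:ℝ) ≠ 0) (ne_of_gt hε), hLeq]
    ring
  have hlog4 : 0 < Real.log 4 := Real.log_pos (by norm_num)
  have hL4pos : 0 < L4 := by rw [hL4eq]; linarith
  have hfC : entS T univ ε ≤ C + g4 := by
    have h := bowen_key T hδ (by linarith : (0:ℝ) < ε / 4)
    have h4 : 4 * (ε / 4) = ε := by ring
    rw [h4] at h
    exact h
  have hg4eq : g4 = u4 * L4 := (div_mul_cancel₀ g4 (ne_of_gt hL4pos)).symm
  have hv1 : entS T univ ε / Lε ≤ (C + u4 * (Lε + Real.log 4)) / Lε := by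
    apply (div_le_div_iff_of_pos_right hLpos).2
    rw [← hL4eq, ← hg4eq]
    exact hfC
  have hv2 : (C + u4 * (Lε + Real.log 4)) / Lε = u4 + (C + u4 * Real.log 4) / Lε := by
    field_simp
    ring
  rw [hv2] at hv1
  exact hv1

end Master


/-- Main result: local nature of metric mean dimension. -/
theorem stmt3 {X : Type*} [MetricSpace X] [CompactSpace X] (T : X ≃ₜ X)
    (δ : ℝ) (hδ : 0 < δ) :
    mdimMUpper T =
      limsup (fun ε : ℝ => (⨆ x : X, entS T (bowenBallZ T δ x) ε) / Real.log (1 / ε))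
        (nhdsWithin 0 (Set.Ioi 0)) ∧
    mdimMLower T =
      liminf (fun ε : ℝ => (⨆ x : X, entS T (bowenBallZ T δ x) ε) / Real.log (1 / ε))
        (nhdsWithin 0 (Set.Ioi 0)) := by
  rcases isEmpty_or_nonempty X with hX | hX
  · -- empty space: everything vanishes
    have hent : ∀ ε : ℝ, entS T univ ε = 0 := by
      intro ε
      have hsp : ∀ N : ℕ, spanNum (dN T N) (univ : Set X) ε = 0 := fun N =>
        Nat.sInf_eq_zero.2 (Or.inl ⟨∅, Finset.card_empty, fun x _ => (hX.false x).elim⟩)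
      have hrw : entS T univ ε
          = limsup (fun N : ℕ => Real.log (spanNum (dN T N) (univ : Set X) ε) / N) atTop := rfl
      rw [hrw]
      simp only [hsp, Nat.cast_zero, Real.log_zero, zero_div]
      exact limsup_const 0
    have hfun : (fun ε : ℝ => entS T univ ε / Real.log (1 / ε))
        = fun ε : ℝ => (⨆ x : X, entS T (bowenBallZ T δ x) ε) / Real.log (1 / ε) := by
      funext ε
      rw [hent ε, iSup_of_empty', Real.sSup_empty]
    constructor
    · show limsup (fun ε : ℝ => entS T univ ε / Real.log (1 / ε)) (nhdsWithin 0 (Set.Ioi 0)) = _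
      rw [hfun]
    · show liminf (fun ε : ℝ => entS T univ ε / Real.log (1 / ε)) (nhdsWithin 0 (Set.Ioi 0)) = _
      rw [hfun]
  · -- nonempty space
    set g : ℝ → ℝ := fun ε => ⨆ x : X, entS T (bowenBallZ T δ x) ε with hgdef
    set f : ℝ → ℝ := fun ε => entS T univ ε with hfdef
    set Lg : ℝ → ℝ := fun ε => Real.log (1 / ε) with hLgdef
    set u : ℝ → ℝ := fun ε => g ε / Lg ε with hudef
    set v : ℝ → ℝ := fun ε => f ε / Lg ε with hvdef
    set C : ℝ := entS T univ (δ / 2) with hCdef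
    have hlog4 : 0 < Real.log 4 := Real.log_pos (by norm_num)
    have hLgeq : ∀ ε : ℝ, Lg ε = -Real.log ε := by
      intro ε
      show Real.log (1 / ε) = -Real.log ε
      rw [one_div, Real.log_inv]
    have hLpos : ∀ ε : ℝ, 0 < ε → ε < 1 → 0 < Lg ε := by
      intro ε h1 h2
      rw [hLgeq]
      have := Real.log_neg h1 h2
      linarith
    have hg0 : ∀ ε : ℝ, 0 ≤ g ε := fun ε => Real.iSup_nonneg fun x => entS_nonneg T _ ε
    have hf0 : ∀ ε : ℝ, 0 ≤ f ε := fun ε => entS_nonneg T _ ε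
    have hgf : ∀ ε : ℝ, 0 < ε → g ε ≤ f ε := fun ε hε =>
      Real.iSup_le (fun x => entS_mono T (subset_univ _) hε) (hf0 ε)
    have hu0 : ∀ ε : ℝ, 0 < ε → ε < 1 → 0 ≤ u ε := fun ε h1 h2 =>
      div_nonneg (hg0 ε) (hLpos ε h1 h2).le
    have hmaster : ∀ ε : ℝ, 0 < ε → ε < 1 →
        v ε ≤ u (ε / 4) + (C + u (ε / 4) * Real.log 4) / Lg ε := fun ε h1 h2 =>
      v_le_aux T hδ ε h1 h2
    have hLR : ∀ R ε : ℝ, 0 < ε → ε < Real.exp (-R) → R ≤ Lg ε := by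
      intro R ε h1 h2
      rw [hLgeq]
      have h3 : Real.log ε < Real.log (Real.exp (-R)) := Real.log_lt_log h1 h2
      rw [Real.log_exp] at h3
      linarith
    have h1ev : ∀ᶠ ε in nhdsWithin (0:ℝ) (Set.Ioi 0), 0 ≤ u ε :=
      ev_posIoi_iff.2 ⟨1, one_pos, fun ε ha hb => hu0 ε ha hb⟩
    have h2ev : ∀ᶠ ε in nhdsWithin (0:ℝ) (Set.Ioi 0), u ε ≤ v ε :=
      ev_posIoi_iff.2 ⟨1, one_pos, fun ε ha hb =>
        (div_le_div_iff_of_pos_right (hLpos ε ha hb)).2 (hgf ε ha)⟩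
    have h3ev : ∀ b κ : ℝ, (∀ᶠ ε in nhdsWithin (0:ℝ) (Set.Ioi 0), u ε ≤ b) → 0 ≤ b →
        0 < κ → (∀ᶠ ε in nhdsWithin (0:ℝ) (Set.Ioi 0), v ε ≤ b + κ) := by
      intro b κ hub hb0 hκ
      set R : ℝ := (C + b * Real.log 4 + 1) / κ with hRdef
      obtain ⟨η₀, hη₀, hu⟩ := ev_posIoi_iff.1 hub
      refine ev_posIoi_iff.2 ⟨min (4 * η₀) (min 1 (Real.exp (-R))), ?_, ?_⟩
      · have := Real.exp_pos (-R)
        simp only [lt_min_iff]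
        exact ⟨by linarith, by norm_num, this⟩
      intro ε hε hεlt
      simp only [lt_min_iff] at hεlt
      obtain ⟨hεη, hε1, hεR⟩ := hεlt
      have hε4 : 0 < ε / 4 := by linarith
      have hε41 : ε / 4 < 1 := by linarith
      have hu4b : u (ε / 4) ≤ b := hu (ε / 4) hε4 (by linarith)
      have hu40 : 0 ≤ u (ε / 4) := hu0 (ε / 4) hε4 hε41
      have hLp : 0 < Lg ε := hLpos ε hε hε1
      have hR : R ≤ Lg ε := hLR R ε hε hεR
      have hκR : κ * R = C + b * Real.log 4 + 1 := by
        rw [hRdef, mul_div_cancel₀ _ (ne_of_gt hκ)]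
      have hmul : κ * R ≤ κ * Lg ε := mul_le_mul_of_nonneg_left hR hκ.le
      have hnum : C + u (ε / 4) * Real.log 4 ≤ C + b * Real.log 4 := by nlinarith
      have hdiv : (C + u (ε / 4) * Real.log 4) / Lg ε ≤ κ := by
        rw [div_le_iff₀ hLp]
        nlinarith
      have := hmaster ε hε hε1
      linarith
    have h3'ev : ∀ b κ : ℝ, (∀ᶠ ε in nhdsWithin (0:ℝ) (Set.Ioi 0), b ≤ v ε) →
        0 < κ → (∀ᶠ ε in nhdsWithin (0:ℝ) (Set.Ioi 0), b - κ ≤ u ε) := by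
      intro b κ hbv hκ
      set R : ℝ := (C + b * Real.log 4 + 1) / κ with hRdef
      obtain ⟨η₀, hη₀, hv⟩ := ev_posIoi_iff.1 hbv
      refine ev_posIoi_iff.2 ⟨(min η₀ (min 1 (Real.exp (-R)))) / 4, ?_, ?_⟩
      · have := Real.exp_pos (-R)
        simp only [gt_iff_lt, lt_div_iff₀ (by norm_num : (0:ℝ) < 4), zero_mul, lt_min_iff]
        exact ⟨by linarith, by norm_num, this⟩
      intro ε' hε' hε'lt
      set ε : ℝ := 4 * ε' with hεdef
      have hε : 0 < ε := by rw [hεdef]; linarith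
      have hεlt : ε < min η₀ (min 1 (Real.exp (-R))) := by
        rw [hεdef]
        have := (lt_div_iff₀ (by norm_num : (0:ℝ) < 4)).1 hε'lt
        linarith
      simp only [lt_min_iff] at hεlt
      obtain ⟨hεη, hε1, hεR⟩ := hεlt
      have hbvε : b ≤ v ε := hv ε hε hεη
      have hε4eq : ε / 4 = ε' := by rw [hεdef]; ring
      have hε4 : 0 < ε / 4 := by linarith
      have hε41 : ε / 4 < 1 := by linarith
      have hu40 : 0 ≤ u (ε / 4) := hu0 (ε / 4) hε4 hε41
      rcases le_or_gt (b - κ) 0 with hbκ | hbκ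
      · rw [← hε4eq]; linarith
      · rw [← hε4eq]
        by_contra hcon
        push_neg at hcon
        have hLp : 0 < Lg ε := hLpos ε hε hε1
        have hR : R ≤ Lg ε := hLR R ε hε hεR
        have hκR : κ * R = C + b * Real.log 4 + 1 := by
          rw [hRdef, mul_div_cancel₀ _ (ne_of_gt hκ)]
        have hmul : κ * R ≤ κ * Lg ε := mul_le_mul_of_nonneg_left hR hκ.le
        have hnum : C + u (ε / 4) * Real.log 4 ≤ C + (b - κ) * Real.log 4 := by nlinarith
        have hdiv : (C + u (ε / 4) * Real.log 4) / Lg ε ≤ κ := by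
          rw [div_le_iff₀ hLp]
          nlinarith
        have := hmaster ε hε hε1
        linarith
    constructor
    · exact limsup_eq_limsup_of_approx h1ev h2ev h3ev
    · exact liminf_eq_liminf_of_approx h1ev h2ev h3'ev
end

section
/- For every η > 0 there exists a natural number K = K(η) with the following property. Let Ω ⊆ ℝ^D be a bounded Borel set and 𝒞₁, ..., 𝒞_K finite families of cubes in ℝ^D such that: (1) ℓ_max(𝒞₁) ≥ 1 and ℓ_min(𝒞_{k+1}) ≥ K · ℓ_max(𝒞_k) for all 1 ≤ k ≤ K−1; (2) vol(∂(Ω, ℓ_max(𝒞_K))) < (η/3)·vol(Ω); (3) Ω ⊆ ⋃_{Λ ∈ 𝒞_k} Λ for each k. Then there exists a pairwise disjoint subfamily 𝒜 ⊆ 𝒞₁ ∪ ... ∪ 𝒞_K with ⋃_{Λ ∈ 𝒜} Λ ⊆ Ω and vol(B₁(Ω \ ⋃_{Λ ∈ 𝒜} Λ)) < η · vol(Ω). -/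
open Set MeasureTheory

/-- The axis-parallel cube `u + [0,L]^D` in `ℝ^D` (with the `ℓ^∞` norm). -/
def cubeG {D : ℕ} (u : Fin D → ℝ) (L : ℝ) : Set (Fin D → ℝ) :=
  {x | ∀ i, x i ∈ Set.Icc (u i) (u i + L)}

/-- The concentric tripled cube `3Λ = u + [-L, 2L]^D`. -/
def cube3 {D : ℕ} (u : Fin D → ℝ) (L : ℝ) : Set (Fin D → ℝ) :=
  {x | ∀ i, x i ∈ Set.Icc (u i - L) (u i + 2 * L)}

/-- The `r`-boundary `∂(Ω, r)` of `Ω ⊆ ℝ^D` (ℓ^∞ norm). -/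
def bdryG {D : ℕ} (Ω : Set (Fin D → ℝ)) (r : ℝ) : Set (Fin D → ℝ) :=
  {x | ∃ y ∈ Ω, ∃ z ∉ Ω, ‖x - y‖ ≤ r ∧ ‖x - z‖ ≤ r}

/-- The closed `r`-neighborhood `B_r(Ω)` (ℓ^∞ norm). -/
def nbhdG {D : ℕ} (r : ℝ) (Ω : Set (Fin D → ℝ)) : Set (Fin D → ℝ) :=
  {x | ∃ y ∈ Ω, ‖x - y‖ ≤ r}

/-- The `r`-interior `int(Ω, r) = {x ∈ Ω : x + [-r,r]^D ⊆ Ω}`. -/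
def intG {D : ℕ} (Ω : Set (Fin D → ℝ)) (r : ℝ) : Set (Fin D → ℝ) :=
  {x | x ∈ Ω ∧ ∀ v : Fin D → ℝ, ‖v‖ ≤ r → x + v ∈ Ω}

/-- Maximal side length in a finite family of cubes (cubes encoded as pairs `(u, L)`). -/
noncomputable def lmax {D : ℕ} (C : Finset ((Fin D → ℝ) × ℝ)) : ℝ :=
  sSup (Prod.snd '' (C : Set ((Fin D → ℝ) × ℝ)))

/-- Minimal side length in a finite family of cubes. -/
noncomputable def lmin {D : ℕ} (C : Finset ((Fin D → ℝ) × ℝ)) : ℝ :=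
  sInf (Prod.snd '' (C : Set ((Fin D → ℝ) × ℝ)))


namespace OW

variable {D : ℕ}

lemma cubeG_eq_pi (u : Fin D → ℝ) (L : ℝ) :
    cubeG u L = Set.pi univ fun i => Icc (u i) (u i + L) := by
  ext x; simp [cubeG, Set.mem_pi, Pi.le_def, forall_and]

lemma measurableSet_cubeG (u : Fin D → ℝ) (L : ℝ) : MeasurableSet (cubeG u L) := by
  rw [cubeG_eq_pi]; exact MeasurableSet.univ_pi fun i => measurableSet_Icc

lemma volume_cubeG (u : Fin D → ℝ) {L : ℝ} (hL : 0 ≤ L) :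
    volume (cubeG u L) = ENNReal.ofReal (L ^ D) := by
  rw [cubeG_eq_pi, volume_pi_pi]
  simp [Real.volume_Icc, ← ENNReal.ofReal_pow hL]

lemma mem_cubeG_self (u : Fin D → ℝ) {L : ℝ} (hL : 0 ≤ L) : u ∈ cubeG u L :=
  fun i => ⟨le_refl _, by linarith⟩

lemma cubeG_dist {u x y : Fin D → ℝ} {L : ℝ} (hL : 0 ≤ L)
    (hx : x ∈ cubeG u L) (hy : y ∈ cubeG u L) : ‖x - y‖ ≤ L := by
  refine (pi_norm_le_iff_of_nonneg hL).2 fun i => ?_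
  have h1 := hx i; have h2 := hy i
  simp only [Set.mem_Icc] at h1 h2
  rw [Pi.sub_apply, Real.norm_eq_abs, abs_le]; constructor <;> linarith

lemma cube3_eq (u : Fin D → ℝ) (L : ℝ) : cube3 u L = cubeG (fun i => u i - L) (3 * L) := by
  ext x; unfold cube3 cubeG; simp only [Set.mem_setOf_eq]
  refine forall_congr' fun i => ?_
  constructor <;> (intro h; simp only [Set.mem_Icc] at *; constructor <;> linarith [h.1, h.2])

lemma cubeG_subset_cube3 {c a : (Fin D → ℝ) × ℝ} (hc : 0 ≤ c.2) (hle : c.2 ≤ a.2)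
    (hmeet : (cubeG c.1 c.2 ∩ cubeG a.1 a.2).Nonempty) :
    cubeG c.1 c.2 ⊆ cube3 a.1 a.2 := by
  obtain ⟨w, hwc, hwa⟩ := hmeet
  intro x hx i
  have h1 := hx i; have h2 := hwc i; have h3 := hwa i
  simp only [Set.mem_Icc] at *
  constructor <;> linarith [h1.1, h1.2, h2.1, h2.2, h3.1, h3.2]

/-- inner cube: shrink by 1 on each side -/
def innerC (c : (Fin D → ℝ) × ℝ) : Set (Fin D → ℝ) := cubeG (fun i => c.1 i + 1) (c.2 - 2)

/-- big cube: grow by r on each side -/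
def bigC (r : ℝ) (c : (Fin D → ℝ) × ℝ) : Set (Fin D → ℝ) := cubeG (fun i => c.1 i - r) (c.2 + 2 * r)

lemma innerC_subset (c : (Fin D → ℝ) × ℝ) : innerC c ⊆ cubeG c.1 c.2 := by
  intro x hx i; have := hx i; simp only [Set.mem_Icc] at *; constructor <;> linarith [this.1, this.2]

lemma near_innerC {c : (Fin D → ℝ) × ℝ} {x y : Fin D → ℝ} (hx : x ∈ innerC c)
    (h : ‖y - x‖ ≤ 1) : y ∈ cubeG c.1 c.2 := by
  intro i
  have h1 := hx i
  have h2 : |y i - x i| ≤ 1 := le_trans (by simpa [Real.norm_eq_abs] using norm_le_pi_norm (y - x) i) h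
  rw [abs_le] at h2
  simp only [Set.mem_Icc] at *
  constructor <;> linarith [h1.1, h1.2, h2.1, h2.2]

lemma subset_bigC {r : ℝ} (hr : 0 ≤ r) (c : (Fin D → ℝ) × ℝ) : cubeG c.1 c.2 ⊆ bigC r c := by
  intro x hx i; have := hx i; simp only [Set.mem_Icc] at *; constructor <;> linarith [this.1, this.2]

lemma near_bigC {c : (Fin D → ℝ) × ℝ} {x z : Fin D → ℝ} {r : ℝ} (hz : z ∈ cubeG c.1 c.2)
    (h : ‖x - z‖ ≤ r) : x ∈ bigC r c := by
  intro i
  have h1 := hz i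
  have h2 : |x i - z i| ≤ r := le_trans (by simpa [Real.norm_eq_abs] using norm_le_pi_norm (x - z) i) h
  rw [abs_le] at h2
  simp only [Set.mem_Icc] at *
  constructor <;> linarith [h1.1, h1.2, h2.1, h2.2]

lemma le_lmax {C : Finset ((Fin D → ℝ) × ℝ)} {c : (Fin D → ℝ) × ℝ} (hc : c ∈ C) :
    c.2 ≤ lmax C :=
  le_csSup ((C.finite_toSet.image _).bddAbove) ⟨c, hc, rfl⟩

lemma lmin_le {C : Finset ((Fin D → ℝ) × ℝ)} {c : (Fin D → ℝ) × ℝ} (hc : c ∈ C) :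
    lmin C ≤ c.2 :=
  csInf_le ((C.finite_toSet.image _).bddBelow) ⟨c, hc, rfl⟩

lemma lmax_mem {C : Finset ((Fin D → ℝ) × ℝ)} (hC : C.Nonempty) :
    ∃ c ∈ C, lmax C = c.2 := by
  have : (Prod.snd '' (C : Set ((Fin D → ℝ) × ℝ))).Nonempty := ⟨hC.choose.2, hC.choose, hC.choose_spec, rfl⟩
  obtain ⟨c, hc, hcc⟩ := this.csSup_mem (C.finite_toSet.image Prod.snd)
  exact ⟨c, hc, hcc.symm⟩

lemma lmin_le_lmax {C : Finset ((Fin D → ℝ) × ℝ)} (hC : C.Nonempty) : lmin C ≤ lmax C :=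
  le_trans (lmin_le hC.choose_spec) (le_lmax hC.choose_spec)

lemma lmax_pos {C : Finset ((Fin D → ℝ) × ℝ)} (hC : C.Nonempty)
    (h : ∀ c ∈ C, 0 < c.2) : 0 < lmax C :=
  lt_of_lt_of_le (h _ hC.choose_spec) (le_lmax hC.choose_spec)

/-- Greedy Vitali selection. -/
lemma vitali (F : Finset ((Fin D → ℝ) × ℝ)) (hF : ∀ c ∈ F, 0 < c.2) :
    ∃ A ⊆ F, (∀ c ∈ A, ∀ c' ∈ A, c ≠ c' → Disjoint (cubeG c.1 c.2) (cubeG c'.1 c'.2)) ∧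
      ∀ c ∈ F, ∃ a ∈ A, c.2 ≤ a.2 ∧ (cubeG c.1 c.2 ∩ cubeG a.1 a.2).Nonempty := by
  classical
  induction F using Finset.strongInduction with
  | _ F ih =>
    rcases F.eq_empty_or_nonempty with rfl | hne
    · exact ⟨∅, Finset.Subset.refl _, by simp, by simp⟩
    · obtain ⟨a, ha, hamax⟩ := F.exists_max_image Prod.snd hne
      set F' := F.filter (fun c => Disjoint (cubeG c.1 c.2) (cubeG a.1 a.2)) with hF'
      have haF' : a ∉ F' := by
        simp only [hF', Finset.mem_filter]
        rintro ⟨-, hd⟩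
        exact absurd (hd (le_refl _) (le_refl _) (mem_cubeG_self a.1 (le_of_lt (hF a ha))))
          (by simp)
      have hlt : F' ⊂ F := ⟨Finset.filter_subset _ _, fun hsub => haF' (hsub ha)⟩
      obtain ⟨A', hA'sub, hA'disj, hA'cov⟩ := ih F' hlt (fun c hc => hF c (Finset.filter_subset _ _ hc))
      refine ⟨insert a A', ?_, ?_, ?_⟩
      · intro c hc
        rcases Finset.mem_insert.1 hc with rfl | hc
        · exact ha
        · exact Finset.filter_subset _ _ (hA'sub hc)
      · intro c hc c' hc' hne'
        have key : ∀ b ∈ A', Disjoint (cubeG b.1 b.2) (cubeG a.1 a.2) :=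
          fun b hb => (Finset.mem_filter.1 (hA'sub hb)).2
        rcases Finset.mem_insert.1 hc with hca | hcm
        · rcases Finset.mem_insert.1 hc' with hca' | hcm'
          · exact absurd (hca.trans hca'.symm) hne'
          · rw [hca]; exact (key c' hcm').symm
        · rcases Finset.mem_insert.1 hc' with hca' | hcm'
          · rw [hca']; exact key c hcm
          · exact hA'disj c hcm c' hcm' hne'
      · intro c hc
        by_cases hd : Disjoint (cubeG c.1 c.2) (cubeG a.1 a.2)
        · obtain ⟨b, hb, h1, h2⟩ := hA'cov c (Finset.mem_filter.2 ⟨hc, hd⟩)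
          exact ⟨b, Finset.mem_insert_of_mem hb, h1, h2⟩
        · refine ⟨a, Finset.mem_insert_self _ _, hamax c hc, ?_⟩
          rwa [Set.not_disjoint_iff_nonempty_inter] at hd


variable {D : ℕ}

lemma nbhdG_mono {r : ℝ} {s t : Set (Fin D → ℝ)} (h : s ⊆ t) : nbhdG r s ⊆ nbhdG r t :=
  fun x ⟨y, hy, hxy⟩ => ⟨y, h hy, hxy⟩

lemma subset_nbhdG {r : ℝ} (hr : 0 ≤ r) (s : Set (Fin D → ℝ)) : s ⊆ nbhdG r s :=
  fun x hx => ⟨x, hx, by simpa using hr⟩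

lemma bdryG_subset_nbhdG {r : ℝ} (Ω : Set (Fin D → ℝ)) : bdryG Ω r ⊆ nbhdG r Ω :=
  fun x ⟨y, hy, _, _, h1, _⟩ => ⟨y, hy, h1⟩

lemma bdryG_mono_r {r r' : ℝ} (h : r ≤ r') (Ω : Set (Fin D → ℝ)) : bdryG Ω r ⊆ bdryG Ω r' :=
  fun x ⟨y, hy, z, hz, h1, h2⟩ => ⟨y, hy, z, hz, h1.trans h, h2.trans h⟩

lemma isBounded_nbhdG {r : ℝ} {Ω : Set (Fin D → ℝ)} (h : Bornology.IsBounded Ω) :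
    Bornology.IsBounded (nbhdG r Ω) := by
  obtain ⟨R, hR⟩ := isBounded_iff_forall_norm_le.1 h
  refine isBounded_iff_forall_norm_le.2 ⟨R + r, ?_⟩
  rintro x ⟨y, hy, hxy⟩
  calc ‖x‖ = ‖y + (x - y)‖ := by ring_nf
    _ ≤ ‖y‖ + ‖x - y‖ := norm_add_le _ _
    _ ≤ R + r := add_le_add (hR y hy) hxy

lemma volume_nbhdG_lt_top {r : ℝ} {Ω : Set (Fin D → ℝ)} (h : Bornology.IsBounded Ω) :
    volume (nbhdG r Ω) < ⊤ :=
  (isBounded_nbhdG h).measure_lt_top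

end OW
namespace OW
variable {D : ℕ}

lemma layer_bound {L l Kr : ℝ} (D : ℕ) (hK : 4 ≤ Kr) (hl : 1 ≤ l) (hL : Kr * l ≤ L) :
    (L + 2 * l) ^ D - (L - 2) ^ D ≤ ((1 + 2 / Kr) ^ D - (1 - 2 / Kr) ^ D) * L ^ D := by
  have hKr : 0 < Kr := by linarith
  have hLK : Kr ≤ L := by nlinarith
  have hL4 : 4 ≤ L := le_trans hK hLK
  have h1 : L + 2 * l ≤ (1 + 2 / Kr) * L := by
    rw [add_mul, one_mul]
    have : 2 * l ≤ 2 / Kr * L := by rw [div_mul_eq_mul_div, le_div_iff₀ hKr]; nlinarith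
    linarith
  have h2 : (1 - 2 / Kr) * L ≤ L - 2 := by
    rw [sub_mul, one_mul]
    have : 2 ≤ 2 / Kr * L := by rw [div_mul_eq_mul_div, le_div_iff₀ hKr]; nlinarith
    linarith
  have hpos1 : (0:ℝ) ≤ L + 2 * l := by linarith
  have hpos2 : (0:ℝ) ≤ (1 - 2 / Kr) * L := by
    apply mul_nonneg _ (by linarith)
    have : 2 / Kr ≤ 2 / 4 := by apply div_le_div_of_nonneg_left (by norm_num) (by norm_num) hK
    linarith
  have hb1 : (L + 2 * l) ^ D ≤ ((1 + 2 / Kr) * L) ^ D := pow_le_pow_left₀ hpos1 h1 D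
  have hb2 : ((1 - 2 / Kr) * L) ^ D ≤ (L - 2) ^ D := pow_le_pow_left₀ hpos2 h2 D
  calc (L + 2 * l) ^ D - (L - 2) ^ D ≤ ((1 + 2 / Kr) * L) ^ D - ((1 - 2 / Kr) * L) ^ D := by linarith
    _ = ((1 + 2 / Kr) ^ D - (1 - 2 / Kr) ^ D) * L ^ D := by rw [mul_pow, mul_pow]; ring

/-- One refinement step of the Ornstein–Weiss argument. -/
lemma step {K : ℕ} (hK : 4 ≤ K) {Ω : Set (Fin D → ℝ)}
    (hbdd : Bornology.IsBounded Ω) (hmeas : MeasurableSet Ω)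
    {Ck B : Finset ((Fin D → ℝ) × ℝ)} {l L1 : ℝ}
    (hl1 : 1 ≤ l) (hlL1 : l ≤ L1)
    (hside : ∀ c ∈ Ck, c.2 ≤ l)
    (hside4 : ∀ c ∈ Ck, (K : ℝ) ≤ c.2)
    (hcover : Ω ⊆ ⋃ c ∈ Ck, cubeG c.1 c.2)
    (hBside : ∀ c ∈ B, (K : ℝ) * l ≤ c.2)
    (hBdisj : ∀ c ∈ B, ∀ c' ∈ B, c ≠ c' → Disjoint (cubeG c.1 c.2) (cubeG c'.1 c'.2))
    (hBsub : (⋃ c ∈ B, cubeG c.1 c.2) ⊆ Ω) :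
    ∃ A : Finset ((Fin D → ℝ) × ℝ), A ⊆ Ck ∧
      (∀ a ∈ A, cubeG a.1 a.2 ⊆ Ω \ ⋃ c ∈ B, cubeG c.1 c.2) ∧
      (∀ a ∈ A, ∀ a' ∈ A, a ≠ a' → Disjoint (cubeG a.1 a.2) (cubeG a'.1 a'.2)) ∧
      (volume (nbhdG 1 ((Ω \ ⋃ c ∈ B, cubeG c.1 c.2) \ ⋃ a ∈ A, cubeG a.1 a.2))).toReal ≤
        (1 - (1/6 : ℝ) ^ D) * (volume (nbhdG 1 (Ω \ ⋃ c ∈ B, cubeG c.1 c.2))).toReal +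
        (1/6 : ℝ) ^ D * ((volume (bdryG Ω L1)).toReal +
          ((1 + 2/(K:ℝ)) ^ D - (1 - 2/(K:ℝ)) ^ D) * (volume Ω).toReal) := by
  classical
  have hKr : (4:ℝ) ≤ (K:ℝ) := by exact_mod_cast hK
  have hKrpos : (0:ℝ) < K := by linarith
  have hpos : ∀ c ∈ Ck, 0 < c.2 := fun c hc => lt_of_lt_of_le (by linarith) (hside4 c hc)
  set Ω' := Ω \ ⋃ c ∈ B, cubeG c.1 c.2 with hΩ'def
  have hΩ'sub : Ω' ⊆ Ω := diff_subset
  have hΩ'bdd : Bornology.IsBounded Ω' := hbdd.subset hΩ'sub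
  set F := Ck.filter (fun c => cubeG c.1 c.2 ⊆ Ω') with hFdef
  obtain ⟨A, hAF, hAdisj, hAcov⟩ := vitali F (fun c hc => hpos c (Finset.mem_filter.1 hc).1)
  have hAsub : A ⊆ Ck := hAF.trans (Finset.filter_subset _ _)
  have hAin : ∀ a ∈ A, cubeG a.1 a.2 ⊆ Ω' := fun a ha => (Finset.mem_filter.1 (hAF ha)).2
  refine ⟨A, hAsub, hAin, hAdisj, ?_⟩
  -- notation
  set c0 : ℝ := (1/6 : ℝ) ^ D with hc0def
  have hc0pos : 0 < c0 := by positivity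
  have hc0le : c0 ≤ 1 := pow_le_one₀ (by norm_num) (by norm_num)
  set dK : ℝ := (1 + 2/(K:ℝ)) ^ D - (1 - 2/(K:ℝ)) ^ D with hdKdef
  have hdKnonneg : 0 ≤ dK := by
    have h0 : (0:ℝ) ≤ 1 - 2/(K:ℝ) := by
      have : 2/(K:ℝ) ≤ 2/4 := div_le_div_of_nonneg_left (by norm_num) (by norm_num) hKr
      linarith
    have := pow_le_pow_left₀ h0 (show 1 - 2/(K:ℝ) ≤ 1 + 2/(K:ℝ) by
      have : 0 < 2/(K:ℝ) := by positivity
      linarith) D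
    simp only [hdKdef]; linarith
  set N : Set (Fin D → ℝ) := nbhdG 1 Ω' with hNdef
  set N' : Set (Fin D → ℝ) := nbhdG 1 (Ω' \ ⋃ a ∈ A, cubeG a.1 a.2) with hN'def
  set U3 : Set (Fin D → ℝ) := ⋃ a ∈ A, cube3 a.1 a.2 with hU3def
  set UI : Set (Fin D → ℝ) := ⋃ a ∈ A, innerC a with hUIdef
  have hAside4 : ∀ a ∈ A, (4:ℝ) ≤ a.2 := fun a ha => le_trans hKr (hside4 a (hAsub ha))
  -- measurability
  have hUImeas : MeasurableSet UI :=
    Finset.measurableSet_biUnion _ (fun a _ => measurableSet_cubeG _ _)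
  -- Estimate 1 : volume N' + ofReal c0 * volume U3 ≤ volume N
  have hN'N : N' ⊆ N := nbhdG_mono diff_subset
  have hUIN : UI ⊆ N := by
    refine Set.iUnion₂_subset fun a ha => ?_
    exact ((innerC_subset a).trans (hAin a ha)).trans (subset_nbhdG (by norm_num) _)
  have hdisjNU : Disjoint N' UI := by
    rw [Set.disjoint_left]
    rintro x ⟨y, hy, hxy⟩ hxUI
    simp only [hUIdef, Set.mem_iUnion] at hxUI
    obtain ⟨a, ha, hxa⟩ := hxUI
    have : y ∈ cubeG a.1 a.2 := near_innerC hxa (by rwa [← norm_sub_rev] at hxy)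
    exact hy.2 (Set.mem_biUnion ha this)
  have hUIvol : volume UI = ∑ a ∈ A, volume (innerC a) := by
    refine measure_biUnion_finset ?_ (fun a _ => measurableSet_cubeG _ _)
    intro a ha b hb hab
    exact Set.disjoint_of_subset (innerC_subset a) (innerC_subset b) (hAdisj a ha b hb hab)
  have hinner_ge : ∀ a ∈ A, ENNReal.ofReal c0 * volume (cube3 a.1 a.2) ≤ volume (innerC a) := by
    intro a ha
    have h4 : (4:ℝ) ≤ a.2 := hAside4 a ha
    have hv1 : volume (innerC a) = ENNReal.ofReal ((a.2 - 2) ^ D) :=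
      volume_cubeG _ (by linarith)
    have hv2 : volume (cube3 a.1 a.2) = ENNReal.ofReal ((3 * a.2) ^ D) := by
      rw [cube3_eq]; exact volume_cubeG _ (by linarith)
    rw [hv1, hv2, ← ENNReal.ofReal_mul (le_of_lt hc0pos)]
    apply ENNReal.ofReal_le_ofReal
    have : c0 * (3 * a.2) ^ D = (a.2 / 2) ^ D := by
      rw [hc0def, ← mul_pow]; ring_nf
    rw [this]
    exact pow_le_pow_left₀ (by linarith) (by linarith) D
  have hU3le : volume U3 ≤ ∑ a ∈ A, volume (cube3 a.1 a.2) := measure_biUnion_finset_le _ _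
  have est1 : volume N' + ENNReal.ofReal c0 * volume U3 ≤ volume N := by
    have h1 : ENNReal.ofReal c0 * volume U3 ≤ volume UI := by
      rw [hUIvol]
      calc ENNReal.ofReal c0 * volume U3 ≤ ENNReal.ofReal c0 * ∑ a ∈ A, volume (cube3 a.1 a.2) :=
            mul_le_mul_right hU3le _
        _ = ∑ a ∈ A, ENNReal.ofReal c0 * volume (cube3 a.1 a.2) := Finset.mul_sum _ _ _
        _ ≤ ∑ a ∈ A, volume (innerC a) := Finset.sum_le_sum hinner_ge
    calc volume N' + ENNReal.ofReal c0 * volume U3 ≤ volume N' + volume UI := by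
          exact add_le_add_right h1 _
      _ = volume (N' ∪ UI) := (measure_union hdisjNU hUImeas).symm
      _ ≤ volume N := measure_mono (Set.union_subset hN'N hUIN)
  -- Estimate 2 : volume N ≤ volume U3 + volume (bdryG Ω L1) + ofReal dK * volume Ω
  have hincl : N ⊆ U3 ∪ bdryG Ω L1 ∪ ⋃ Q ∈ B, (bigC l Q \ innerC Q) := by
    rintro x ⟨y, hy, hxy⟩
    by_cases hxΩ : x ∈ Ω
    · by_cases hxΩ' : x ∈ Ω'
      · by_cases hint : ∀ v : Fin D → ℝ, ‖v‖ ≤ l → x + v ∈ Ω'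
        · -- x is deep inside Ω' : lies in some cube of F, hence in U3
          obtain ⟨c, hcCk, hxc⟩ := by
            have := hcover hxΩ
            simpa only [Set.mem_iUnion, exists_prop] using this
          have hcF : c ∈ F := by
            refine Finset.mem_filter.2 ⟨hcCk, fun z hz => ?_⟩
            have hdist : ‖z - x‖ ≤ l :=
              le_trans (cubeG_dist (le_of_lt (hpos c hcCk)) hz hxc) (hside c hcCk)
            have := hint (z - x) hdist
            simpa using this
          obtain ⟨a, haA, hca, hmeet⟩ := hAcov c hcF
          left; left
          refine Set.mem_biUnion haA ?_
          exact cubeG_subset_cube3 (le_of_lt (hpos c hcCk)) hca hmeet hxc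
        · push_neg at hint
          obtain ⟨v, hv, hxv⟩ := hint
          by_cases hvΩ : x + v ∈ Ω
          · -- x + v ∈ Ω \ Ω' : inside a removed cube Q ∈ B
            have : x + v ∈ ⋃ c ∈ B, cubeG c.1 c.2 := by
              by_contra h; exact hxv ⟨hvΩ, h⟩
            simp only [Set.mem_iUnion, exists_prop] at this
            obtain ⟨Q, hQB, hQ⟩ := this
            right
            refine Set.mem_biUnion hQB ⟨near_bigC hQ (by simpa using hv), fun hxin => ?_⟩
            exact (hxΩ'.2 (Set.mem_biUnion hQB (innerC_subset Q hxin)))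
          · -- x + v ∉ Ω : x is near the boundary of Ω
            left; right
            exact ⟨x, hxΩ, x + v, hvΩ, by simp; linarith,
              by simpa using le_trans hv hlL1⟩
      · -- x ∈ Ω \ Ω' : x inside a removed cube
        have : x ∈ ⋃ c ∈ B, cubeG c.1 c.2 := by
          by_contra h; exact hxΩ' ⟨hxΩ, h⟩
        simp only [Set.mem_iUnion, exists_prop] at this
        obtain ⟨Q, hQB, hQ⟩ := this
        right
        refine Set.mem_biUnion hQB ⟨subset_bigC (by linarith) Q hQ, fun hxin => ?_⟩
        have : y ∈ cubeG Q.1 Q.2 := near_innerC hxin (by rwa [← norm_sub_rev] at hxy)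
        exact hy.2 (Set.mem_biUnion hQB this)
    · -- x ∉ Ω : x near boundary
      left; right
      exact ⟨y, hΩ'sub hy, x, hxΩ, le_trans hxy (le_trans hl1 hlL1), by simp; linarith⟩
  have hlayer : ∀ Q ∈ B, volume (bigC l Q \ innerC Q) ≤ ENNReal.ofReal dK * volume (cubeG Q.1 Q.2) := by
    intro Q hQ
    have hQside : (K:ℝ) * l ≤ Q.2 := hBside Q hQ
    have hQ4 : (4:ℝ) ≤ Q.2 := le_trans (by nlinarith) hQside
    have hvol_big : volume (bigC l Q) = ENNReal.ofReal ((Q.2 + 2 * l) ^ D) :=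
      volume_cubeG _ (by linarith)
    have hvol_in : volume (innerC Q) = ENNReal.ofReal ((Q.2 - 2) ^ D) :=
      volume_cubeG _ (by linarith)
    have hsub : innerC Q ⊆ bigC l Q := (innerC_subset Q).trans (subset_bigC (by linarith) Q)
    have hdiff := measure_diff hsub (measurableSet_cubeG _ _).nullMeasurableSet
      (by rw [hvol_in]; exact ENNReal.ofReal_ne_top)
    rw [hdiff, hvol_big, hvol_in, ← ENNReal.ofReal_sub _ (pow_nonneg (by linarith) D),
      volume_cubeG _ (by linarith), ← ENNReal.ofReal_mul hdKnonneg]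
    exact ENNReal.ofReal_le_ofReal (layer_bound D hKr hl1 hQside)
  have hBvol : ∑ Q ∈ B, volume (cubeG Q.1 Q.2) ≤ volume Ω := by
    rw [← measure_biUnion_finset (fun a ha b hb hab => hBdisj a ha b hb hab)
      (fun a _ => measurableSet_cubeG _ _)]
    exact measure_mono hBsub
  have est2 : volume N ≤ volume U3 + volume (bdryG Ω L1) + ENNReal.ofReal dK * volume Ω := by
    calc volume N ≤ volume (U3 ∪ bdryG Ω L1 ∪ ⋃ Q ∈ B, (bigC l Q \ innerC Q)) := measure_mono hincl
      _ ≤ volume (U3 ∪ bdryG Ω L1) + volume (⋃ Q ∈ B, (bigC l Q \ innerC Q)) := measure_union_le _ _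
      _ ≤ volume U3 + volume (bdryG Ω L1) + volume (⋃ Q ∈ B, (bigC l Q \ innerC Q)) := by
          exact add_le_add_left (measure_union_le _ _) _
      _ ≤ volume U3 + volume (bdryG Ω L1) + ENNReal.ofReal dK * volume Ω := by
          refine add_le_add_right ?_ _
          calc volume (⋃ Q ∈ B, (bigC l Q \ innerC Q)) ≤ ∑ Q ∈ B, volume (bigC l Q \ innerC Q) :=
                measure_biUnion_finset_le _ _
            _ ≤ ∑ Q ∈ B, ENNReal.ofReal dK * volume (cubeG Q.1 Q.2) := Finset.sum_le_sum hlayer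
            _ = ENNReal.ofReal dK * ∑ Q ∈ B, volume (cubeG Q.1 Q.2) := (Finset.mul_sum _ _ _).symm
            _ ≤ ENNReal.ofReal dK * volume Ω := mul_le_mul_right hBvol _
  -- finiteness
  have hNfin : volume N ≠ ⊤ := (volume_nbhdG_lt_top hΩ'bdd).ne
  have hN'fin : volume N' ≠ ⊤ :=
    ((measure_mono hN'N).trans_lt (volume_nbhdG_lt_top hΩ'bdd)).ne
  have hU3fin : volume U3 ≠ ⊤ := by
    refine (hU3le.trans_lt ?_).ne
    refine ENNReal.sum_lt_top.2 fun a ha => ?_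
    rw [cube3_eq, volume_cubeG _ (by linarith [hAside4 a ha])]
    exact ENNReal.ofReal_lt_top
  have hbfin : volume (bdryG Ω L1) ≠ ⊤ :=
    ((measure_mono (bdryG_subset_nbhdG Ω)).trans_lt (volume_nbhdG_lt_top hbdd)).ne
  have hvfin : volume Ω ≠ ⊤ := hbdd.measure_lt_top.ne
  -- pass to reals
  set rn := (volume N).toReal
  set rn' := (volume N').toReal
  set ri := (volume U3).toReal
  set rb := (volume (bdryG Ω L1)).toReal
  set rv := (volume Ω).toReal
  have hri : (ENNReal.ofReal c0 * volume U3).toReal = c0 * ri := by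
    rw [ENNReal.toReal_mul, ENNReal.toReal_ofReal (le_of_lt hc0pos)]
  have r1 : rn' + c0 * ri ≤ rn := by
    have := ENNReal.toReal_mono hNfin est1
    rwa [ENNReal.toReal_add hN'fin (by
      exact ENNReal.mul_ne_top ENNReal.ofReal_ne_top hU3fin), hri] at this
  have r2 : rn ≤ ri + rb + dK * rv := by
    have := ENNReal.toReal_mono (by
      exact ENNReal.add_ne_top.2 ⟨ENNReal.add_ne_top.2 ⟨hU3fin, hbfin⟩,
        ENNReal.mul_ne_top ENNReal.ofReal_ne_top hvfin⟩) est2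
    rwa [ENNReal.toReal_add (ENNReal.add_ne_top.2 ⟨hU3fin, hbfin⟩)
      (ENNReal.mul_ne_top ENNReal.ofReal_ne_top hvfin),
      ENNReal.toReal_add hU3fin hbfin, ENNReal.toReal_mul,
      ENNReal.toReal_ofReal hdKnonneg] at this
  have key : rn - (rb + dK * rv) ≤ ri := by linarith
  have := mul_le_mul_of_nonneg_left key (le_of_lt hc0pos)
  have goal : rn' ≤ (1 - c0) * rn + c0 * (rb + dK * rv) := by nlinarith
  exact goal

end OW
open OW Filter in
set_option maxHeartbeats 2000000 in
/-- Ornstein–Weiss-type tiling lemma (Proposition 2.7 of the paper). -/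
theorem stmt8 (D : ℕ) :
    ∀ η : ℝ, 0 < η → ∃ K : ℕ, ∃ hK : 0 < K,
      ∀ (Ω : Set (Fin D → ℝ)), Bornology.IsBounded Ω → MeasurableSet Ω →
      ∀ C : Fin K → Finset ((Fin D → ℝ) × ℝ),
        (∀ k, (C k).Nonempty) →
        (∀ k, ∀ c ∈ C k, 0 < c.2) →
        (1 ≤ lmax (C ⟨0, hK⟩)) →
        (∀ k : Fin K, ∀ h : (k : ℕ) + 1 < K, (K : ℝ) * lmax (C k) ≤ lmin (C ⟨(k : ℕ) + 1, h⟩)) →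
        (volume (bdryG Ω (lmax (C ⟨K - 1, Nat.sub_lt hK Nat.one_pos⟩))) <
          ENNReal.ofReal (η / 3) * volume Ω) →
        (∀ k, Ω ⊆ ⋃ c ∈ C k, cubeG c.1 c.2) →
        ∃ A : Finset ((Fin D → ℝ) × ℝ),
          (∀ c ∈ A, ∃ k, c ∈ C k) ∧
          (∀ c ∈ A, ∀ c' ∈ A, c ≠ c' → Disjoint (cubeG c.1 c.2) (cubeG c'.1 c'.2)) ∧
          (⋃ c ∈ A, cubeG c.1 c.2) ⊆ Ω ∧
          volume (nbhdG 1 (Ω \ ⋃ c ∈ A, cubeG c.1 c.2)) < ENNReal.ofReal η * volume Ω := by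
  intro η hη
  classical
  set c0 : ℝ := (1/6 : ℝ) ^ D with hc0def
  have hc0pos : 0 < c0 := by positivity
  have hc0le : c0 ≤ 1 := pow_le_one₀ (by norm_num) (by norm_num)
  -- choose K
  obtain ⟨N1, hN1⟩ : ∃ N1 : ℕ, ∀ n ≥ N1, (1 - c0) ^ n * (1 + η/3) < η/3 := by
    have t : Tendsto (fun n : ℕ => (1 - c0) ^ n * (1 + η/3)) atTop (nhds 0) := by
      have := tendsto_pow_atTop_nhds_zero_of_lt_one (by linarith : (0:ℝ) ≤ 1 - c0)
        (by linarith : 1 - c0 < 1)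
      simpa using this.mul_const (1 + η/3)
    exact eventually_atTop.1 (t.eventually_lt_const (by positivity))
  obtain ⟨N2, hN2⟩ : ∃ N2 : ℕ, ∀ n ≥ N2,
      (1 + 2/(n:ℝ)) ^ D - (1 - 2/(n:ℝ)) ^ D < η/3 := by
    have hx : Tendsto (fun n : ℕ => 2/(n:ℝ)) atTop (nhds 0) :=
      tendsto_const_div_atTop_nhds_zero_nat 2
    have hcont : Continuous (fun x : ℝ => (1 + x) ^ D - (1 - x) ^ D) := by continuity
    have t : Tendsto (fun n : ℕ => (1 + 2/(n:ℝ)) ^ D - (1 - 2/(n:ℝ)) ^ D) atTop (nhds 0) := by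
      have := (hcont.tendsto 0).comp hx
      simpa [Function.comp_def] using this
    exact eventually_atTop.1 (t.eventually_lt_const (by positivity))
  refine ⟨max (N1 + 1) (max N2 4), by omega, ?_⟩
  set K := max (N1 + 1) (max N2 4) with hKdef
  have hK4 : 4 ≤ K := le_trans (le_max_right N2 4) (le_max_right _ _)
  have hKpos : 0 < K := by omega
  have hKr : (4:ℝ) ≤ (K:ℝ) := by exact_mod_cast hK4
  intro Ω hbdd hmeas C hCne hCpos hl0 hmin hbdry hcov
  set dK : ℝ := (1 + 2/(K:ℝ)) ^ D - (1 - 2/(K:ℝ)) ^ D with hdKdef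
  have hdK0 : 0 ≤ dK := by
    have h0 : (0:ℝ) ≤ 1 - 2/(K:ℝ) := by
      have : 2/(K:ℝ) ≤ 2/4 := div_le_div_of_nonneg_left (by norm_num) (by norm_num) hKr
      linarith
    have := pow_le_pow_left₀ h0 (show 1 - 2/(K:ℝ) ≤ 1 + 2/(K:ℝ) by
      have : 0 < 2/(K:ℝ) := by positivity
      linarith) D
    simp only [hdKdef]; linarith
  have hdKsmall : dK < η/3 := hN2 K (le_trans (le_max_left N2 4) (le_max_right _ _))
  -- basic facts about levels
  have lemma1 : ∀ n : ℕ, ∀ h : n < K, 1 ≤ lmax (C ⟨n, h⟩) := by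
    intro n
    induction n with
    | zero => intro h; exact hl0
    | succ n ih =>
      intro h
      have hn : n < K := Nat.lt_of_succ_lt h
      have h1 := hmin ⟨n, hn⟩ h
      have h2 := lmin_le_lmax (hCne ⟨n + 1, h⟩)
      have h3 := ih hn
      nlinarith
  have lemma2 : ∀ n m : ℕ, ∀ hn : n < K, ∀ hm : m < K, n ≤ m →
      lmax (C ⟨n, hn⟩) ≤ lmax (C ⟨m, hm⟩) := by
    intro n m
    induction m with
    | zero => intro hn hm hnm; interval_cases n; exact le_refl _
    | succ m ih =>
      intro hn hm hnm
      rcases Nat.lt_succ_iff_lt_or_eq.1 (Nat.lt_succ_of_le hnm) with hlt | rfl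
      · have hm' : m < K := Nat.lt_of_succ_lt hm
        have h0 := ih hn hm' (Nat.lt_succ_iff.1 hlt)
        have h1 := hmin ⟨m, hm'⟩ hm
        have h2 := lmin_le_lmax (hCne ⟨m + 1, hm⟩)
        have h3 : 1 ≤ lmax (C ⟨m, hm'⟩) := lemma1 m hm'
        nlinarith
      · exact le_refl _
  have hK1K : K - 1 < K := by omega
  set L1 : ℝ := lmax (C ⟨K - 1, hK1K⟩) with hL1def
  have hL1all : ∀ n : ℕ, ∀ h : n < K, lmax (C ⟨n, h⟩) ≤ L1 :=
    fun n h => lemma2 n (K - 1) h hK1K (by omega)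
  have hL1ge1 : (1:ℝ) ≤ L1 := lemma1 (K - 1) hK1K
  -- finiteness facts
  have hvfin : volume Ω ≠ ⊤ := hbdd.measure_lt_top.ne
  have hbfin : volume (bdryG Ω L1) ≠ ⊤ :=
    ((measure_mono (bdryG_subset_nbhdG Ω)).trans_lt (volume_nbhdG_lt_top hbdd)).ne
  set rb : ℝ := (volume (bdryG Ω L1)).toReal with hrbdef
  set rv : ℝ := (volume Ω).toReal with hrvdef
  have hrb0 : 0 ≤ rb := ENNReal.toReal_nonneg
  have hrv0 : 0 ≤ rv := ENNReal.toReal_nonneg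
  -- the main recursion
  have main : ∀ n : ℕ, n ≤ K - 1 → ∃ B : Finset ((Fin D → ℝ) × ℝ),
      (∀ c ∈ B, ∃ k : Fin K, c ∈ C k ∧ K - n ≤ (k : ℕ)) ∧
      (∀ c ∈ B, ∀ c' ∈ B, c ≠ c' → Disjoint (cubeG c.1 c.2) (cubeG c'.1 c'.2)) ∧
      ((⋃ c ∈ B, cubeG c.1 c.2) ⊆ Ω) ∧
      (volume (nbhdG 1 (Ω \ ⋃ c ∈ B, cubeG c.1 c.2))).toReal ≤
        (1 - c0) ^ n * (volume (nbhdG 1 Ω)).toReal + (rb + dK * rv) := by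
    intro n
    induction n with
    | zero =>
      intro _
      refine ⟨∅, by simp, by simp, by simp, ?_⟩
      simp only [Finset.notMem_empty, Set.iUnion_of_empty, Set.iUnion_empty, Set.diff_empty,
        pow_zero, one_mul]
      nlinarith [mul_nonneg hdK0 hrv0]
    | succ n ih =>
      intro hn1
      obtain ⟨B, hB1, hB2, hB3, hB4⟩ := ih (by omega)
      have hkK : K - 1 - n < K := by omega
      set k : Fin K := ⟨K - 1 - n, hkK⟩ with hkdef
      set l : ℝ := lmax (C k) with hldef
      have hl1 : 1 ≤ l := lemma1 _ _
      have hlL1 : l ≤ L1 := hL1all _ _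
      have hside : ∀ c ∈ C k, c.2 ≤ l := fun c hc => le_lmax hc
      have hside4 : ∀ c ∈ C k, (K:ℝ) ≤ c.2 := by
        intro c hc
        have hj : K - 2 - n < K := by omega
        have h2 : (K - 2 - n) + 1 < K := by omega
        have h1 := hmin ⟨K - 2 - n, hj⟩ h2
        have he : (⟨(K - 2 - n) + 1, h2⟩ : Fin K) = k := by
          apply Fin.ext; simp only [hkdef]; omega
        rw [he] at h1
        have h3 := lmin_le hc
        have h4 : 1 ≤ lmax (C ⟨K - 2 - n, hj⟩) := lemma1 _ _
        nlinarith
      have hBside : ∀ c ∈ B, (K:ℝ) * l ≤ c.2 := by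
        intro c hc
        obtain ⟨k', hck', hk'⟩ := hB1 c hc
        have hk'lt := k'.isLt
        have hj : (k' : ℕ) - 1 < K := by omega
        have h2 : ((k' : ℕ) - 1) + 1 < K := by omega
        have h1 := hmin ⟨(k' : ℕ) - 1, hj⟩ h2
        have he : (⟨((k' : ℕ) - 1) + 1, h2⟩ : Fin K) = k' := by
          apply Fin.ext; simp only []; omega
        rw [he] at h1
        have h3 := lmin_le hck'
        have h4 : l ≤ lmax (C ⟨(k' : ℕ) - 1, hj⟩) := lemma2 _ _ hkK hj (by omega)
        have h5 : (0:ℝ) ≤ K := by linarith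
        nlinarith
      obtain ⟨A, hAsub, hAin, hAdisj, hAvol⟩ :=
        step hK4 hbdd hmeas hl1 hlL1 hside hside4 (hcov k) hBside hB2 hB3
      refine ⟨B ∪ A, ?_, ?_, ?_, ?_⟩
      · intro c hc
        rcases Finset.mem_union.1 hc with hc | hc
        · obtain ⟨k', h1, h2⟩ := hB1 c hc
          exact ⟨k', h1, by omega⟩
        · exact ⟨k, hAsub hc, by simp only [hkdef]; omega⟩
      · intro c hc c' hc' hne
        rcases Finset.mem_union.1 hc with hc | hc <;> rcases Finset.mem_union.1 hc' with hc' | hc'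
        · exact hB2 c hc c' hc' hne
        · exact Set.disjoint_left.2 fun x hx hx' =>
            (hAin c' hc' hx').2 (Set.mem_biUnion hc hx)
        · exact Set.disjoint_right.2 fun x hx' hx =>
            (hAin c hc hx).2 (Set.mem_biUnion hc' hx')
        · exact hAdisj c hc c' hc' hne
      · rw [Finset.set_biUnion_union]
        exact Set.union_subset hB3 (Set.iUnion₂_subset fun a ha =>
          (hAin a ha).trans diff_subset)
      · have hrw : Ω \ ⋃ c ∈ B ∪ A, cubeG c.1 c.2 =
            (Ω \ ⋃ c ∈ B, cubeG c.1 c.2) \ ⋃ a ∈ A, cubeG a.1 a.2 := by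
          rw [Finset.set_biUnion_union, Set.diff_diff]
        rw [hrw]
        have h6 : (0:ℝ) ≤ 1 - c0 := by linarith
        have h7 := mul_le_mul_of_nonneg_left hB4 h6
        calc (volume (nbhdG 1 ((Ω \ ⋃ c ∈ B, cubeG c.1 c.2) \ ⋃ a ∈ A, cubeG a.1 a.2))).toReal
            ≤ (1 - c0) * (volume (nbhdG 1 (Ω \ ⋃ c ∈ B, cubeG c.1 c.2))).toReal
              + c0 * (rb + dK * rv) := hAvol
          _ ≤ (1 - c0) * ((1 - c0) ^ n * (volume (nbhdG 1 Ω)).toReal + (rb + dK * rv))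
              + c0 * (rb + dK * rv) := by linarith
          _ = (1 - c0) ^ (n + 1) * (volume (nbhdG 1 Ω)).toReal + (rb + dK * rv) := by ring
  -- conclude
  obtain ⟨B, hB1, hB2, hB3, hB4⟩ := main (K - 1) (le_refl _)
  refine ⟨B, fun c hc => ⟨(hB1 c hc).choose, (hB1 c hc).choose_spec.1⟩, hB2, hB3, ?_⟩
  -- numeric wrap-up
  have hW0 : (volume (nbhdG 1 Ω)).toReal ≤ rv + rb := by
    have hsub : nbhdG 1 Ω ⊆ Ω ∪ bdryG Ω L1 := by
      rintro x ⟨y, hy, hxy⟩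
      by_cases hx : x ∈ Ω
      · exact Or.inl hx
      · exact Or.inr ⟨y, hy, x, hx, le_trans hxy hL1ge1, by simp; linarith⟩
    have := (measure_mono hsub).trans (measure_union_le (μ := volume) Ω (bdryG Ω L1))
    have hfin : volume Ω + volume (bdryG Ω L1) ≠ ⊤ := ENNReal.add_ne_top.2 ⟨hvfin, hbfin⟩
    have := ENNReal.toReal_mono hfin this
    rwa [ENNReal.toReal_add hvfin hbfin] at this
  have hrbv : rb < (η/3) * rv := by
    have h1 : ENNReal.ofReal (η/3) * volume Ω ≠ ⊤ :=
      ENNReal.mul_ne_top ENNReal.ofReal_ne_top hvfin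
    have h2 := (ENNReal.toReal_lt_toReal hbfin h1).2 hbdry
    rwa [ENNReal.toReal_mul, ENNReal.toReal_ofReal (by linarith)] at h2
  have hrvpos : 0 < rv := by
    by_contra h
    push_neg at h
    have : rv = 0 := le_antisymm h hrv0
    rw [this, mul_zero] at hrbv
    linarith
  have hNfin : volume (nbhdG 1 (Ω \ ⋃ c ∈ B, cubeG c.1 c.2)) ≠ ⊤ :=
    ((measure_mono (nbhdG_mono diff_subset)).trans_lt (volume_nbhdG_lt_top hbdd)).ne
  have hRfin : ENNReal.ofReal η * volume Ω ≠ ⊤ :=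
    ENNReal.mul_ne_top ENNReal.ofReal_ne_top hvfin
  rw [← ENNReal.toReal_lt_toReal hNfin hRfin, ENNReal.toReal_mul,
    ENNReal.toReal_ofReal (le_of_lt hη)]
  have hp0 : (0:ℝ) ≤ (1 - c0) ^ (K - 1) := pow_nonneg (by linarith) _
  have hpK : (1 - c0) ^ (K - 1) * (1 + η/3) < η/3 := hN1 (K - 1) (by omega)
  have h8 : (1 - c0) ^ (K - 1) * rb ≤ (1 - c0) ^ (K - 1) * ((η/3) * rv) :=
    mul_le_mul_of_nonneg_left (le_of_lt hrbv) hp0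
  have h9 : (1 - c0) ^ (K - 1) * (rv + rb) ≤ (η/3) * rv := by nlinarith
  have h10 : dK * rv ≤ (η/3) * rv := mul_le_mul_of_nonneg_right (le_of_lt hdKsmall) hrv0
  calc (volume (nbhdG 1 (Ω \ ⋃ c ∈ B, cubeG c.1 c.2))).toReal
      ≤ (1 - c0) ^ (K - 1) * (volume (nbhdG 1 Ω)).toReal + (rb + dK * rv) := hB4
    _ ≤ (1 - c0) ^ (K - 1) * (rv + rb) + (rb + dK * rv) := by nlinarith
    _ < (η/3) * rv + ((η/3) * rv + (η/3) * rv) := by linarith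
    _ = η * rv := by ring
end

section
/- Let (X,d) be a compact metric space with a continuous ℝ^D-action T. For every ε > 0 and every bounded Borel set Ω ⊆ ℝ^D, #(X, d_Ω, ε) ≤ (#(X, d_{[0,1]^D}, ε/2))^{vol(B₁(Ω))}. -/
open Filter Set MeasureTheory

/-- `d_Ω(x,y) = sup_{a ∈ Ω} d(Tᵃx, Tᵃy)` for an `ℝ^D`-action `T` and `Ω ⊆ ℝ^D`. -/
noncomputable def dOmR {X : Type*} [MetricSpace X] {D : ℕ} (T : (Fin D → ℝ) → X → X)
    (Ω : Set (Fin D → ℝ)) (x y : X) : ℝ :=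
  ⨆ a : Ω, dist (T a x) (T a y)

/-- The cube `[s,t]^D ⊆ ℝ^D`. -/
def cubeR (D : ℕ) (s t : ℝ) : Set (Fin D → ℝ) := {a | ∀ i, a i ∈ Set.Icc s t}

/-- Entropy of `K` at scale `ε`: `limsup_{L→∞} (1/L^D) log #(K, d_{[0,L]^D}, ε)`. -/
noncomputable def entSR {X : Type*} [MetricSpace X] {D : ℕ} (T : (Fin D → ℝ) → X → X)
    (K : Set X) (ε : ℝ) : ℝ :=
  limsup (fun L : ℝ => Real.log (spanNum (dOmR T (cubeR D 0 L)) K ε) / L ^ D) atTop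

/-- The Bowen ball `B_δ(x, d_{ℝ^D})`. -/
def bowenBallR {X : Type*} [MetricSpace X] {D : ℕ} (T : (Fin D → ℝ) → X → X)
    (δ : ℝ) (x : X) : Set X :=
  {y | dOmR T univ x y ≤ δ}

/-- Upper metric mean dimension. -/
noncomputable def mdimMUpperR {X : Type*} [MetricSpace X] {D : ℕ}
    (T : (Fin D → ℝ) → X → X) : ℝ :=
  limsup (fun ε : ℝ => entSR T univ ε / Real.log (1 / ε)) (nhdsWithin 0 (Set.Ioi 0))

/-- Lower metric mean dimension. -/
noncomputable def mdimMLowerR {X : Type*} [MetricSpace X] {D : ℕ}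
    (T : (Fin D → ℝ) → X → X) : ℝ :=
  liminf (fun ε : ℝ => entSR T univ ε / Real.log (1 / ε)) (nhdsWithin 0 (Set.Ioi 0))

/-- The closed `r`-neighborhood of `Ω ⊆ ℝ^D` in the `ℓ^∞` norm. -/
def nbhdR {D : ℕ} (r : ℝ) (Ω : Set (Fin D → ℝ)) : Set (Fin D → ℝ) :=
  {x | ∃ y ∈ Ω, ‖x - y‖ ≤ r}

lemma dist_le_dOmR {X : Type*} [MetricSpace X] [CompactSpace X] {D : ℕ}
    (T : (Fin D → ℝ) → X → X) {Ω : Set (Fin D → ℝ)} {b : Fin D → ℝ}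
    (hb : b ∈ Ω) (x y : X) : dist (T b x) (T b y) ≤ dOmR T Ω x y := by
  have hbdd : BddAbove (Set.range fun a : Ω => dist (T ↑a x) (T ↑a y)) := by
    refine ⟨Metric.diam (Set.univ : Set X), ?_⟩
    rintro r ⟨a, rfl⟩
    exact Metric.dist_le_diam_of_mem isCompact_univ.isBounded trivial trivial
  exact le_ciSup hbdd ⟨b, hb⟩

theorem stmt10 {X : Type*} [MetricSpace X] [CompactSpace X] {D : ℕ}
    (T : (Fin D → ℝ) → X → X)
    (hTc : Continuous fun p : (Fin D → ℝ) × X => T p.1 p.2)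
    (hT0 : ∀ x : X, T 0 x = x)
    (hTadd : ∀ (a b : Fin D → ℝ) (x : X), T (a + b) x = T a (T b x))
    (ε : ℝ) (hε : 0 < ε) (Ω : Set (Fin D → ℝ))
    (hΩ : Bornology.IsBounded Ω) (hΩm : MeasurableSet Ω) :
    (spanNum (dOmR T Ω) (univ : Set X) ε : ℝ) ≤
      (spanNum (dOmR T (cubeR D 0 1)) (univ : Set X) (ε / 2) : ℝ) ^
        (volume (nbhdR 1 Ω)).toReal := by
  classical
  rcases isEmpty_or_nonempty X with hX | hX
  · have h0 : spanNum (dOmR T Ω) (univ : Set X) ε = 0 := by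
      have : (0:ℕ) ∈ {n : ℕ | ∃ S : Finset X, S.card = n ∧
          ∀ x ∈ (univ : Set X), ∃ y ∈ S, dOmR T Ω x y ≤ ε} :=
        ⟨∅, rfl, fun x _ => (IsEmpty.false x).elim⟩
      exact Nat.eq_zero_of_le_zero (Nat.sInf_le this)
    rw [h0]
    push_cast
    exact Real.rpow_nonneg (Nat.cast_nonneg _) _
  -- X nonempty
  -- Step 1: compactness of the cube and uniform continuity give a finite spanning set
  have hKcpt : IsCompact (cubeR D 0 1) := by
    have hK : cubeR D 0 1 = Set.pi Set.univ (fun _ : Fin D => Set.Icc (0:ℝ) 1) := by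
      ext a; simp [cubeR, Set.mem_univ_pi, Pi.le_def, forall_and]
    rw [hK]; exact isCompact_univ_pi fun _ => isCompact_Icc
  haveI : CompactSpace (cubeR D 0 1) := isCompact_iff_compactSpace.mp hKcpt
  set G : (cubeR D 0 1) × X → X := fun p => T ↑p.1 p.2 with hG
  have hGc : Continuous G :=
    hTc.comp ((continuous_subtype_val.comp continuous_fst).prodMk continuous_snd)
  have hGu : UniformContinuous G := CompactSpace.uniformContinuous_of_continuous hGc
  obtain ⟨δ, hδ, hδp⟩ := Metric.uniformContinuous_iff.mp hGu (ε/2) (by positivity)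
  have key : ∀ x y : X, dist x y < δ → ∀ b : (cubeR D 0 1),
      dist (T ↑b x) (T ↑b y) < ε/2 := by
    intro x y h b
    have := hδp (a := (b, x)) (b := (b, y)) ?_
    · exact this
    · rw [Prod.dist_eq]
      simp only [dist_self]
      exact max_lt hδ h
  obtain ⟨t, ht⟩ := isCompact_univ.elim_finite_subcover (fun c : X => Metric.ball c δ)
    (fun c => Metric.isOpen_ball) (fun x _ => Set.mem_iUnion.mpr ⟨x, Metric.mem_ball_self hδ⟩)
  have hne : {n : ℕ | ∃ S : Finset X, S.card = n ∧
      ∀ x ∈ (univ : Set X), ∃ y ∈ S, dOmR T (cubeR D 0 1) x y ≤ ε/2}.Nonempty := by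
    refine ⟨t.card, t, rfl, fun x _ => ?_⟩
    obtain ⟨c, hc, hxc⟩ := Set.mem_iUnion₂.mp (ht (Set.mem_univ x))
    exact ⟨c, hc, Real.iSup_le (fun b => (key x c (Metric.mem_ball.mp hxc) b).le) (by positivity)⟩
  set N := spanNum (dOmR T (cubeR D 0 1)) (univ : Set X) (ε / 2) with hNdef
  obtain ⟨S, hScard, hSspan⟩ : ∃ S : Finset X, S.card = N ∧
      ∀ x ∈ (univ : Set X), ∃ y ∈ S, dOmR T (cubeR D 0 1) x y ≤ ε/2 := Nat.sInf_mem hne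
  have hN1 : 1 ≤ N := by
    rcases Nat.eq_zero_or_pos N with h0 | h
    · exfalso
      have hSe : S = ∅ := Finset.card_eq_zero.mp (hScard.trans h0)
      obtain ⟨y, hy, -⟩ := hSspan hX.some trivial
      simp [hSe] at hy
    · exact h
  -- Step 2: the lattice set A
  obtain ⟨R, hR⟩ := hΩ.exists_norm_le
  set f : (Fin D → ℝ) → (Fin D → ℤ) := fun ω i => ⌊ω i⌋ with hf
  have hAfin : (f '' Ω).Finite := by
    apply Set.Finite.subset (Set.Finite.pi (fun _ : Fin D => Set.finite_Icc (⌊-R⌋) ⌊R⌋))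
    rintro a ⟨ω, hω, rfl⟩
    intro i _
    have h2 : |ω i| ≤ R := by
      calc |ω i| = ‖ω i‖ := (Real.norm_eq_abs _).symm
        _ ≤ ‖ω‖ := norm_le_pi_norm ω i
        _ ≤ R := hR ω hω
    rw [abs_le] at h2
    exact Set.mem_Icc.mpr ⟨Int.floor_mono h2.1, Int.floor_mono h2.2⟩
  set A : Finset (Fin D → ℤ) := hAfin.toFinset with hA
  set c : (Fin D → ℤ) → Set (Fin D → ℝ) :=
    fun a => Set.pi Set.univ (fun i => Set.Ico (a i : ℝ) ((a i : ℝ) + 1)) with hc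
  have hcmeas : ∀ a, MeasurableSet (c a) :=
    fun a => MeasurableSet.univ_pi fun i => measurableSet_Ico
  have hcvol : ∀ a, volume (c a) = 1 := by
    intro a
    rw [volume_pi_pi]
    simp [Real.volume_Ico]
  have hdisj : (↑A : Set (Fin D → ℤ)).PairwiseDisjoint c := by
    intro a _ b _ hab
    refine Set.disjoint_left.mpr fun x hxa hxb => hab ?_
    funext i
    have h1 := hxa i (Set.mem_univ i)
    have h2 := hxb i (Set.mem_univ i)
    have e1 : ⌊x i⌋ = a i := Int.floor_eq_iff.mpr ⟨h1.1, by exact_mod_cast h1.2⟩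
    have e2 : ⌊x i⌋ = b i := Int.floor_eq_iff.mpr ⟨h2.1, by exact_mod_cast h2.2⟩
    rw [← e1, ← e2]
  have hsub : ∀ a ∈ A, c a ⊆ nbhdR 1 Ω := by
    intro a ha x hx
    obtain ⟨ω, hω, rfl⟩ := hAfin.mem_toFinset.mp ha
    refine ⟨ω, hω, ?_⟩
    rw [pi_norm_le_iff_of_nonneg zero_le_one]
    intro i
    have h1 := hx i (Set.mem_univ i)
    have h2 := Int.floor_le (ω i)
    have h3 := Int.lt_floor_add_one (ω i)
    have h1a : ((⌊ω i⌋ : ℝ)) ≤ x i := h1.1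
    have h1b : x i < (⌊ω i⌋ : ℝ) + 1 := by exact_mod_cast h1.2
    rw [Pi.sub_apply, Real.norm_eq_abs, abs_le]
    constructor <;> linarith
  have hvfin : volume (nbhdR 1 Ω) ≠ ⊤ := by
    have hsub2 : nbhdR 1 Ω ⊆ Metric.closedBall 0 (R + 1) := by
      rintro x ⟨y, hy, hxy⟩
      rw [Metric.mem_closedBall, dist_zero_right]
      calc ‖x‖ = ‖(x - y) + y‖ := by rw [sub_add_cancel]
        _ ≤ ‖x - y‖ + ‖y‖ := norm_add_le _ _
        _ ≤ 1 + R := add_le_add hxy (hR y hy)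
        _ = R + 1 := by ring
    exact ((measure_mono hsub2).trans_lt (isCompact_closedBall 0 (R+1)).measure_lt_top).ne
  have hvolA : volume (⋃ a ∈ A, c a) = (A.card : ENNReal) := by
    rw [measure_biUnion_finset hdisj (fun a _ => hcmeas a)]
    simp [hcvol]
  have hcard : (A.card : ℝ) ≤ (volume (nbhdR 1 Ω)).toReal := by
    have h1 : (A.card : ENNReal) ≤ volume (nbhdR 1 Ω) := by
      rw [← hvolA]; exact measure_mono (Set.iUnion₂_subset hsub)
    have := ENNReal.toReal_mono hvfin h1
    simpa using this
  -- Step 3: spanning set for d_Ω of cardinality ≤ N ^ A.card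
  set castZ : (Fin D → ℤ) → (Fin D → ℝ) := fun a i => (a i : ℝ) with hcastZ
  have hS' : ∀ (x : X) (a : ↥A), ∃ s ∈ S,
      dOmR T (cubeR D 0 1) (T (castZ ↑a) x) s ≤ ε/2 := fun x a => hSspan _ trivial
  set φ : X → (↥A → ↥S) := fun x a => ⟨(hS' x a).choose, (hS' x a).choose_spec.1⟩ with hφdef
  have hφ : ∀ (x : X) (a : ↥A), dOmR T (cubeR D 0 1) (T (castZ ↑a) x) ↑(φ x a) ≤ ε/2 :=
    fun x a => (hS' x a).choose_spec.2
  set F : (↥A → ↥S) → X := fun u => if h : ∃ x, φ x = u then h.choose else hX.some with hFdef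
  have hF : ∀ x : X, φ (F (φ x)) = φ x := by
    intro x
    have h : ∃ y, φ y = φ x := ⟨x, rfl⟩
    simp only [hFdef, dif_pos h]
    exact h.choose_spec
  set R' : Finset X := Finset.image F Finset.univ with hR'
  have hRspan : ∀ x ∈ (univ : Set X), ∃ y ∈ R', dOmR T Ω x y ≤ ε := by
    intro x _
    refine ⟨F (φ x), Finset.mem_image_of_mem F (Finset.mem_univ _), ?_⟩
    apply Real.iSup_le _ hε.le
    rintro ⟨ω, hω⟩
    set x' := F (φ x) with hx'
    have haA : f ω ∈ A := hAfin.mem_toFinset.mpr ⟨ω, hω, rfl⟩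
    set a : ↥A := ⟨f ω, haA⟩ with haa
    set b : Fin D → ℝ := ω - castZ ↑a with hbdef
    have hb : b ∈ cubeR D 0 1 := by
      intro i
      have h2 := Int.floor_le (ω i)
      have h3 := Int.lt_floor_add_one (ω i)
      constructor
      · simp only [hbdef, Pi.sub_apply, hcastZ]
        simpa [hf] using h2
      · simp only [hbdef, Pi.sub_apply, hcastZ, hf]
        linarith
    have hsplit : ∀ p : X, T ω p = T b (T (castZ ↑a) p) := by
      intro p
      rw [← hTadd]
      congr 1
      simp [hbdef]
    set s : X := ↑(φ x a) with hs
    have h1 : dist (T b (T (castZ ↑a) x)) (T b s) ≤ ε/2 :=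
      le_trans (dist_le_dOmR T hb _ _) (hφ x a)
    have h2 : dist (T b (T (castZ ↑a) x')) (T b s) ≤ ε/2 := by
      have h2' := hφ x' a
      rw [show φ x' a = φ x a from congrFun (hF x) a] at h2'
      exact le_trans (dist_le_dOmR T hb _ _) h2'
    calc dist (T ω x) (T ω x')
        = dist (T b (T (castZ ↑a) x)) (T b (T (castZ ↑a) x')) := by rw [hsplit, hsplit]
      _ ≤ dist (T b (T (castZ ↑a) x)) (T b s) + dist (T b s) (T b (T (castZ ↑a) x')) :=
          dist_triangle _ _ _
      _ ≤ ε/2 + ε/2 := add_le_add h1 (by rw [dist_comm]; exact h2)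
      _ = ε := by ring
  have hcount : spanNum (dOmR T Ω) (univ : Set X) ε ≤ N ^ A.card := by
    have h1 : spanNum (dOmR T Ω) (univ : Set X) ε ≤ R'.card :=
      Nat.sInf_le ⟨R', rfl, hRspan⟩
    have h2 : R'.card ≤ N ^ A.card := by
      calc R'.card ≤ Fintype.card (↥A → ↥S) := by
            simpa using Finset.card_image_le (s := (Finset.univ : Finset (↥A → ↥S))) (f := F)
        _ = N ^ A.card := by
            rw [Fintype.card_fun, Fintype.card_coe, Fintype.card_coe, hScard]
    exact h1.trans h2
  calc (spanNum (dOmR T Ω) (univ : Set X) ε : ℝ)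
      ≤ (N:ℝ) ^ (A.card : ℕ) := by exact_mod_cast hcount
    _ = (N:ℝ) ^ (A.card : ℝ) := (Real.rpow_natCast _ _).symm
    _ ≤ (N:ℝ) ^ (volume (nbhdR 1 Ω)).toReal :=
        Real.rpow_le_rpow_of_exponent_le (by exact_mod_cast hN1) hcard
end
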